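/- arXiv:1702.03187 — 9 statements merged into one kernel-verified Lean document; each statement's English description precedes it below -/
import Mathlib

section
/- Let G be a finite simple graph on n vertices, let 𝒞 be the family of non-empty cliques of G and 𝒮 the family of non-empty stable (independent) sets of G. Then |𝒞| · |𝒮| ≤ n·(2^n − 1). -/
open Finset

/-- Pure set lemma: a family of nonempty proper subsets of `A` with pairwise
`(C₁ \ C₂).card ≤ 1` has at most `A.card` members. -/
lemma PL {α : Type*} [DecidableEq α] (A : Finset α) (D : Finset (Finset α))
    (hsub : ∀ C ∈ D, C ⊆ A) (hne : ∀ C ∈ D, C.Nonempty)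
    (hprop : ∀ C ∈ D, C ≠ A)
    (hpair : ∀ C₁ ∈ D, ∀ C₂ ∈ D, (C₁ \ C₂).card ≤ 1) :
    D.card ≤ A.card := by
  rcases D.eq_empty_or_nonempty with hD | hD
  · simp [hD]
  obtain ⟨Cm, hCm, hmax⟩ := D.exists_max_image Finset.card hD
  obtain ⟨a0, ha0⟩ := hne Cm hCm
  have hAne : A.Nonempty := ⟨a0, hsub Cm hCm ha0⟩
  -- basic: Cm is a proper subset of A
  have hCmA : Cm.card < A.card :=
    Finset.card_lt_card (ssubset_of_subset_of_ne (hsub Cm hCm) (hprop Cm hCm))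
  by_cases hsmall : Cm.card ≤ 1
  · -- every member is a singleton
    have hsing : ∀ C ∈ D, ∀ v ∈ C, C = {v} := by
      intro C hC v hv
      have h1 : C.card ≤ 1 := le_trans (hmax C hC) hsmall
      exact Finset.eq_singleton_iff_unique_mem.2
        ⟨hv, fun w hw => Finset.card_le_one.1 h1 w hw v hv⟩
    apply Finset.card_le_card_of_injOn (fun C => if h : C.Nonempty then h.choose else a0)
    · intro C hC
      simp only [dif_pos (hne C hC)]
      exact hsub C hC (hne C hC).choose_spec
    · intro C1 h1 C2 h2 heq
      simp only [dif_pos (hne C1 h1), dif_pos (hne C2 h2)] at heq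
      rw [hsing C1 h1 _ (hne C1 h1).choose_spec, hsing C2 h2 _ (hne C2 h2).choose_spec, heq]
  · push_neg at hsmall
    -- for every other member C, Cm \ C is a singleton
    have hxx : ∀ C ∈ D, C ≠ Cm → ∃ x, Cm \ C = {x} := by
      intro C hC hne'
      have h1 : (Cm \ C).card ≤ 1 := hpair Cm hCm C hC
      rcases (Cm \ C).eq_empty_or_nonempty with he | hne''
      · -- then Cm ⊆ C, contradicting maximality and C ≠ Cm
        exfalso
        have hsub' : Cm ⊆ C := by
          intro y hy
          by_contra hyc
          exact (Finset.notMem_empty y) (he ▸ Finset.mem_sdiff.2 ⟨hy, hyc⟩)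
        exact hne' (Finset.eq_of_subset_of_card_le hsub' (hmax C hC)).symm
      · obtain ⟨x, hx⟩ := hne''
        refine ⟨x, Finset.eq_singleton_iff_nonempty_unique_mem.2 ⟨⟨x, hx⟩, ?_⟩⟩
        intro y hy
        by_contra hxy
        have h2 : ({x, y} : Finset α) ⊆ Cm \ C := by
          intro z hz
          rcases Finset.mem_insert.1 hz with rfl | hz
          · exact hx
          · rw [Finset.mem_singleton.1 hz]; exact hy
        have := Finset.card_le_card h2
        rw [Finset.card_insert_of_notMem (by simpa using (Ne.symm hxy)), Finset.card_singleton] at this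
        omega
    by_cases hinj : ∀ C₁ ∈ D.erase Cm, ∀ C₂ ∈ D.erase Cm, Cm \ C₁ = Cm \ C₂ → C₁ = C₂
    · -- injective case: erase Cm injects into Cm
      have h1 : (D.erase Cm).card ≤ Cm.card := by
        apply Finset.card_le_card_of_injOn
          (fun C => if h : (Cm \ C).Nonempty then h.choose else a0)
        · intro C hC
          obtain ⟨x, hx⟩ := hxx C (Finset.mem_of_mem_erase hC) (Finset.ne_of_mem_erase hC)
          have hne'' : (Cm \ C).Nonempty := by rw [hx]; exact ⟨x, Finset.mem_singleton_self x⟩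
          simp only [dif_pos hne'']
          exact (Finset.mem_sdiff.1 hne''.choose_spec).1
        · intro C1 h1 C2 h2 heq
          obtain ⟨x1, hx1⟩ := hxx C1 (Finset.mem_of_mem_erase h1) (Finset.ne_of_mem_erase h1)
          obtain ⟨x2, hx2⟩ := hxx C2 (Finset.mem_of_mem_erase h2) (Finset.ne_of_mem_erase h2)
          have hne1 : (Cm \ C1).Nonempty := by rw [hx1]; exact ⟨x1, Finset.mem_singleton_self x1⟩
          have hne2 : (Cm \ C2).Nonempty := by rw [hx2]; exact ⟨x2, Finset.mem_singleton_self x2⟩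
          simp only [dif_pos hne1, dif_pos hne2] at heq
          have e1 : hne1.choose = x1 := by
            have h' : hne1.choose ∈ ({x1} : Finset α) := by rw [← hx1]; exact hne1.choose_spec
            simpa using h'
          have e2 : hne2.choose = x2 := by
            have h' : hne2.choose ∈ ({x2} : Finset α) := by rw [← hx2]; exact hne2.choose_spec
            simpa using h'
          apply hinj C1 h1 C2 h2
          rw [hx1, hx2, ← e1, ← e2, heq]
      have := Finset.card_erase_of_mem hCm
      omega
    · push_neg at hinj
      obtain ⟨C₁, hC₁, C₂, hC₂, heq12, hne12⟩ := hinj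
      obtain ⟨x0, hx0⟩ := hxx C₁ (Finset.mem_of_mem_erase hC₁) (Finset.ne_of_mem_erase hC₁)
      have hx0' : Cm \ C₂ = {x0} := by rw [← heq12, hx0]
      have hx0Cm : x0 ∈ Cm := (Finset.mem_sdiff.1 (hx0 ▸ Finset.mem_singleton_self x0)).1
      have hx0C₁ : x0 ∉ C₁ := (Finset.mem_sdiff.1 (hx0 ▸ Finset.mem_singleton_self x0)).2
      have hx0C₂ : x0 ∉ C₂ := (Finset.mem_sdiff.1 (hx0' ▸ Finset.mem_singleton_self x0)).2
      -- a witness y distinguishing C₁ and C₂, necessarily outside Cm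
      have hy : ∃ y, y ∉ Cm ∧ ((y ∈ C₁ ∧ y ∉ C₂) ∨ (y ∈ C₂ ∧ y ∉ C₁)) := by
        have : ∃ y, (y ∈ C₁ ∧ y ∉ C₂) ∨ (y ∈ C₂ ∧ y ∉ C₁) := by
          by_contra h
          push_neg at h
          apply hne12
          apply Finset.Subset.antisymm
          · intro z hz; exact (h z).1 hz
          · intro z hz; exact (h z).2 hz
        obtain ⟨y, hy⟩ := this
        refine ⟨y, ?_, hy⟩
        rcases hy with ⟨h1, h2⟩ | ⟨h1, h2⟩
        · intro hyCm
          have : y ∈ Cm \ C₂ := Finset.mem_sdiff.2 ⟨hyCm, h2⟩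
          rw [hx0'] at this
          exact hx0C₁ (Finset.mem_singleton.1 this ▸ h1)
        · intro hyCm
          have : y ∈ Cm \ C₁ := Finset.mem_sdiff.2 ⟨hyCm, h2⟩
          rw [hx0] at this
          exact hx0C₂ (Finset.mem_singleton.1 this ▸ h1)
      obtain ⟨y, hyCm, hycase⟩ := hy
      -- main claim: every member of `D.erase Cm` removes exactly `x0` from `Cm`
      have claim : ∀ C ∈ D.erase Cm, Cm \ C = {x0} := by
        intro C hC
        obtain ⟨x', hx'⟩ := hxx C (Finset.mem_of_mem_erase hC) (Finset.ne_of_mem_erase hC)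
        rw [hx']
        by_contra hxx0
        have hx'ne : x' ≠ x0 := by
          intro h; exact hxx0 (by rw [h])
        have hx'Cm : x' ∈ Cm := (Finset.mem_sdiff.1 (hx' ▸ Finset.mem_singleton_self x')).1
        have hx'C : x' ∉ C := (Finset.mem_sdiff.1 (hx' ▸ Finset.mem_singleton_self x')).2
        have hx0C : x0 ∈ C := by
          by_contra h
          have h' : x0 ∈ Cm \ C := Finset.mem_sdiff.2 ⟨hx0Cm, h⟩
          rw [hx'] at h'
          exact hx'ne (Finset.mem_singleton.1 h').symm
        -- generic argument for (P, Q) with y ∈ P \ Q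
        have key : ∀ P ∈ D, ∀ Q ∈ D, Cm \ P = {x0} → Cm \ Q = {x0} →
            y ∈ P → y ∉ Q → False := by
          intro P hP Q hQ hP0 hQ0 hyP hyQ
          have hx'P : x' ∈ P := by
            by_contra h
            have : x' ∈ Cm \ P := Finset.mem_sdiff.2 ⟨hx'Cm, h⟩
            rw [hP0] at this
            exact hx'ne (Finset.mem_singleton.1 this)
          have hx'Q : x' ∈ Q := by
            by_contra h
            have : x' ∈ Cm \ Q := Finset.mem_sdiff.2 ⟨hx'Cm, h⟩
            rw [hQ0] at this
            exact hx'ne (Finset.mem_singleton.1 this)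
          have hyC : y ∈ C := by
            by_contra h
            have hss : ({x', y} : Finset α) ⊆ P \ C := by
              intro z hz
              rcases Finset.mem_insert.1 hz with rfl | hz
              · exact Finset.mem_sdiff.2 ⟨hx'P, hx'C⟩
              · rw [Finset.mem_singleton.1 hz]; exact Finset.mem_sdiff.2 ⟨hyP, h⟩
            have := Finset.card_le_card hss
            rw [Finset.card_insert_of_notMem (by
              simp only [Finset.mem_singleton]
              intro h'; exact hyCm (h' ▸ hx'Cm)), Finset.card_singleton] at this
            have := hpair P hP C (Finset.mem_of_mem_erase hC)
            omega
          have hx0Q : x0 ∉ Q := (Finset.mem_sdiff.1 (hQ0 ▸ Finset.mem_singleton_self x0)).2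
          have hss : ({x0, y} : Finset α) ⊆ C \ Q := by
            intro z hz
            rcases Finset.mem_insert.1 hz with rfl | hz
            · exact Finset.mem_sdiff.2 ⟨hx0C, hx0Q⟩
            · rw [Finset.mem_singleton.1 hz]; exact Finset.mem_sdiff.2 ⟨hyC, hyQ⟩
          have := Finset.card_le_card hss
          rw [Finset.card_insert_of_notMem (by
            simp only [Finset.mem_singleton]
            intro h'; exact hyCm (h' ▸ hx0Cm)), Finset.card_singleton] at this
          have := hpair C (Finset.mem_of_mem_erase hC) Q hQ
          omega
        rcases hycase with ⟨h1, h2⟩ | ⟨h1, h2⟩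
        · exact key C₁ (Finset.mem_of_mem_erase hC₁) C₂ (Finset.mem_of_mem_erase hC₂) hx0 hx0' h1 h2
        · exact key C₂ (Finset.mem_of_mem_erase hC₂) C₁ (Finset.mem_of_mem_erase hC₁) hx0' hx0 h1 h2
      -- every member of the erase equals (Cm \ {x0}) ∪ (C \ Cm)
      have struct : ∀ C ∈ D.erase Cm, C = (Cm \ {x0}) ∪ (C \ Cm) := by
        intro C hC
        have h0 := claim C hC
        apply Finset.Subset.antisymm
        · intro z hz
          by_cases hzCm : z ∈ Cm
          · apply Finset.mem_union_left
            apply Finset.mem_sdiff.2 ⟨hzCm, ?_⟩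
            simp only [Finset.mem_singleton]
            intro h
            have : x0 ∉ C := (Finset.mem_sdiff.1 (h0 ▸ Finset.mem_singleton_self x0)).2
            exact this (h ▸ hz)
          · exact Finset.mem_union_right _ (Finset.mem_sdiff.2 ⟨hz, hzCm⟩)
        · intro z hz
          rcases Finset.mem_union.1 hz with hz | hz
          · obtain ⟨hz1, hz2⟩ := Finset.mem_sdiff.1 hz
            by_contra h
            have : z ∈ Cm \ C := Finset.mem_sdiff.2 ⟨hz1, h⟩
            rw [h0] at this
            exact hz2 this
          · exact (Finset.mem_sdiff.1 hz).1
      -- inject erase into insert x0 (A \ Cm)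
      have h1 : (D.erase Cm).card ≤ (insert x0 (A \ Cm)).card := by
        apply Finset.card_le_card_of_injOn
          (fun C => if h : (C \ Cm).Nonempty then h.choose else x0)
        · intro C hC
          by_cases h : (C \ Cm).Nonempty
          · simp only [dif_pos h]
            apply Finset.mem_insert_of_mem
            obtain ⟨h1, h2⟩ := Finset.mem_sdiff.1 h.choose_spec
            exact Finset.mem_sdiff.2 ⟨hsub C (Finset.mem_of_mem_erase hC) h1, h2⟩
          · simp only [dif_neg h]
            exact Finset.mem_insert_self _ _
        · intro P hP Q hQ heq
          have cardP := hpair P (Finset.mem_of_mem_erase hP) Cm hCm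
          have cardQ := hpair Q (Finset.mem_of_mem_erase hQ) Cm hCm
          by_cases h1 : (P \ Cm).Nonempty
          · have h2 : (Q \ Cm).Nonempty := by
              by_contra h2
              simp only [dif_pos h1, dif_neg h2] at heq
              exact (Finset.mem_sdiff.1 (heq ▸ h1.choose_spec)).2 hx0Cm
            simp only [dif_pos h1, dif_pos h2] at heq
            have eP : P \ Cm = {h1.choose} := by
              apply Finset.eq_singleton_iff_nonempty_unique_mem.2 ⟨h1, ?_⟩
              intro z hz
              by_contra hzz
              have hss : ({z, h1.choose} : Finset α) ⊆ P \ Cm := by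
                intro w hw
                rcases Finset.mem_insert.1 hw with rfl | hw
                · exact hz
                · rw [Finset.mem_singleton.1 hw]; exact h1.choose_spec
              have := Finset.card_le_card hss
              rw [Finset.card_insert_of_notMem (by simpa using hzz), Finset.card_singleton] at this
              omega
            have eQ : Q \ Cm = {h2.choose} := by
              apply Finset.eq_singleton_iff_nonempty_unique_mem.2 ⟨h2, ?_⟩
              intro z hz
              by_contra hzz
              have hss : ({z, h2.choose} : Finset α) ⊆ Q \ Cm := by
                intro w hw
                rcases Finset.mem_insert.1 hw with rfl | hw
                · exact hz
                · rw [Finset.mem_singleton.1 hw]; exact h2.choose_spec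
              have := Finset.card_le_card hss
              rw [Finset.card_insert_of_notMem (by simpa using hzz), Finset.card_singleton] at this
              omega
            rw [struct P hP, struct Q hQ, eP, eQ, heq]
          · have h2 : ¬ (Q \ Cm).Nonempty := by
              by_contra h2
              simp only [dif_neg h1, dif_pos h2] at heq
              exact (Finset.mem_sdiff.1 (heq ▸ h2.choose_spec)).2 hx0Cm
            have e1 : P \ Cm = ∅ := Finset.not_nonempty_iff_eq_empty.1 h1
            have e2 : Q \ Cm = ∅ := Finset.not_nonempty_iff_eq_empty.1 h2
            rw [struct P hP, struct Q hQ, e1, e2]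
      have h2 : (insert x0 (A \ Cm)).card ≤ 1 + (A.card - Cm.card) := by
        calc (insert x0 (A \ Cm)).card ≤ (A \ Cm).card + 1 := Finset.card_insert_le _ _
        _ = 1 + (A.card - Cm.card) := by
            rw [Finset.card_sdiff_of_subset (hsub Cm hCm)]; omega
      have h3 := Finset.card_erase_of_mem hCm
      omega

lemma cs_card {V : Type*} [DecidableEq V] (G : SimpleGraph V) {C S : Finset V}
    (hC : G.IsClique (C : Set V))
    (hS : (S : Set V).Pairwise fun x y => ¬ G.Adj x y) :
    (C ∩ S).card ≤ 1 := by
  rw [Finset.card_le_one]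
  intro a ha b hb
  by_contra hab
  obtain ⟨haC, haS⟩ := Finset.mem_inter.1 ha
  obtain ⟨hbC, hbS⟩ := Finset.mem_inter.1 hb
  exact hS (Finset.mem_coe.2 haS) (Finset.mem_coe.2 hbS) hab
    (hC (Finset.mem_coe.2 haC) (Finset.mem_coe.2 hbC) hab)

lemma fiber_bound {V : Type*} [Fintype V] [DecidableEq V] (G : SimpleGraph V)
    [DecidableRel G.Adj] (A : Finset V) (hA : A.Nonempty)
    (CF SF : Finset (Finset V))
    (hCF : ∀ C ∈ CF, C.Nonempty ∧ G.IsClique (C : Set V))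
    (hSF : ∀ S ∈ SF, S.Nonempty ∧ (S : Set V).Pairwise fun x y => ¬ G.Adj x y) :
    ((CF ×ˢ SF).filter fun p =>
      (if p.1 = p.2 then p.1 else (p.1 \ p.2) ∪ (p.2 \ p.1)) = A).card ≤ Fintype.card V := by
  set F := ((CF ×ˢ SF).filter fun p =>
      (if p.1 = p.2 then p.1 else (p.1 \ p.2) ∪ (p.2 \ p.1)) = A) with hF
  -- membership facts
  have hmem : ∀ p ∈ F, p.1 ∈ CF ∧ p.2 ∈ SF ∧
      (if p.1 = p.2 then p.1 else (p.1 \ p.2) ∪ (p.2 \ p.1)) = A := by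
    intro p hp
    obtain ⟨hp1, hp2⟩ := Finset.mem_filter.1 hp
    obtain ⟨h1, h2⟩ := Finset.mem_product.1 hp1
    exact ⟨h1, h2, hp2⟩
  have hsplit1 : (F.filter fun p => p.1 = p.2).card
      + (F.filter fun p => ¬ p.1 = p.2).card = F.card :=
    Finset.card_filter_add_card_filter_not _
  set ND := F.filter fun p => ¬ p.1 = p.2 with hND
  have hsplit2 : (ND.filter fun p => (p.1 ∩ p.2).Nonempty).card
      + (ND.filter fun p => ¬ (p.1 ∩ p.2).Nonempty).card = ND.card :=
    Finset.card_filter_add_card_filter_not _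
  set InterF := ND.filter fun p => (p.1 ∩ p.2).Nonempty with hInterF
  set DisjF := ND.filter fun p => ¬ (p.1 ∩ p.2).Nonempty with hDisjF
  -- facts on ND members
  have hndA : ∀ p ∈ ND, (p.1 \ p.2) ∪ (p.2 \ p.1) = A := by
    intro p hp
    obtain ⟨hpF, hpne⟩ := Finset.mem_filter.1 hp
    have := (hmem p hpF).2.2
    rwa [if_neg hpne] at this
  -- Intersecting part: injects into Aᶜ
  have hInter : InterF.card ≤ Aᶜ.card := by
    apply Finset.card_le_card_of_injOn
      (fun p => if h : (p.1 ∩ p.2).Nonempty then h.choose else hA.choose)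
    · intro p hp
      obtain ⟨hpND, hpi⟩ := Finset.mem_filter.1 hp
      simp only [dif_pos hpi]
      obtain ⟨h1, h2⟩ := Finset.mem_inter.1 hpi.choose_spec
      rw [Finset.mem_coe, Finset.mem_compl, ← hndA p hpND]
      simp only [Finset.mem_union, Finset.mem_sdiff]
      rintro (⟨_, h⟩ | ⟨_, h⟩)
      · exact h h2
      · exact h h1
    · intro p hp q hq heq
      obtain ⟨hpND, hpi⟩ := Finset.mem_filter.1 hp
      obtain ⟨hqND, hqi⟩ := Finset.mem_filter.1 hq
      simp only [dif_pos hpi, dif_pos hqi] at heq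
      set v := hpi.choose with hv
      have hvq : hqi.choose = v := heq.symm
      -- reconstruction
      have recon : ∀ r ∈ ND, ∀ hri : (r.1 ∩ r.2).Nonempty, hri.choose = v →
          r.1 = insert v (A.filter fun a => G.Adj v a) ∧
          r.2 = insert v (A.filter fun a => ¬ G.Adj v a) := by
        intro r hr hri hrv
        have hrF := (Finset.mem_filter.1 hr).1
        have hC := (hCF r.1 (hmem r hrF).1).2
        have hS := (hSF r.2 (hmem r hrF).2.1).2
        have hAr := hndA r hr
        have hvr : v ∈ r.1 ∩ r.2 := hrv ▸ hri.choose_spec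
        obtain ⟨hv1, hv2⟩ := Finset.mem_inter.1 hvr
        have huniq : ∀ w ∈ r.1 ∩ r.2, w = v :=
          fun w hw => Finset.card_le_one.1 (cs_card G hC hS) w hw v hvr
        have hvA : v ∉ A := by
          rw [← hAr]
          simp only [Finset.mem_union, Finset.mem_sdiff]
          rintro (⟨_, h⟩ | ⟨_, h⟩)
          · exact h hv2
          · exact h hv1
        constructor
        · ext x
          simp only [Finset.mem_insert, Finset.mem_filter]
          constructor
          · intro hx
            by_cases hxv : x = v
            · exact Or.inl hxv
            · refine Or.inr ⟨?_, ?_⟩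
              · rw [← hAr]
                apply Finset.mem_union_left
                apply Finset.mem_sdiff.2 ⟨hx, ?_⟩
                intro hxS
                exact hxv (huniq x (Finset.mem_inter.2 ⟨hx, hxS⟩))
              · exact hC (Finset.mem_coe.2 hv1) (Finset.mem_coe.2 hx) (fun h => hxv h.symm)
          · rintro (rfl | ⟨hxA, hxadj⟩)
            · exact hv1
            · have : x ∈ (r.1 \ r.2) ∪ (r.2 \ r.1) := hAr.symm ▸ hxA
              rcases Finset.mem_union.1 this with h | h
              · exact (Finset.mem_sdiff.1 h).1
              · exfalso
                have hxS := (Finset.mem_sdiff.1 h).1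
                have hxv : v ≠ x := fun h' => hvA (h' ▸ hxA)
                exact hS (Finset.mem_coe.2 hv2) (Finset.mem_coe.2 hxS) hxv hxadj
        · ext x
          simp only [Finset.mem_insert, Finset.mem_filter]
          constructor
          · intro hx
            by_cases hxv : x = v
            · exact Or.inl hxv
            · refine Or.inr ⟨?_, ?_⟩
              · rw [← hAr]
                apply Finset.mem_union_right
                apply Finset.mem_sdiff.2 ⟨hx, ?_⟩
                intro hxC
                exact hxv (huniq x (Finset.mem_inter.2 ⟨hxC, hx⟩))
              · exact hS (Finset.mem_coe.2 hv2) (Finset.mem_coe.2 hx) (fun h => hxv h.symm)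
          · rintro (rfl | ⟨hxA, hxnadj⟩)
            · exact hv2
            · have : x ∈ (r.1 \ r.2) ∪ (r.2 \ r.1) := hAr.symm ▸ hxA
              rcases Finset.mem_union.1 this with h | h
              · exfalso
                have hxC := (Finset.mem_sdiff.1 h).1
                have hxv : v ≠ x := fun h' => hvA (h' ▸ hxA)
                exact hxnadj (hC (Finset.mem_coe.2 hv1) (Finset.mem_coe.2 hxC) hxv)
              · exact (Finset.mem_sdiff.1 h).1
      obtain ⟨hp1, hp2⟩ := recon p hpND hpi rfl
      obtain ⟨hq1, hq2⟩ := recon q hqND hqi hvq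
      exact Prod.ext (hp1.trans hq1.symm) (hp2.trans hq2.symm)
  -- Disjoint part: injects (via PL) into A
  have hDisjfacts : ∀ p ∈ DisjF, p.1 ⊆ A ∧ p.1.Nonempty ∧ p.1 ≠ A ∧ p.2 = A \ p.1 := by
    intro p hp
    obtain ⟨hpND, hpd⟩ := Finset.mem_filter.1 hp
    have hAr := hndA p hpND
    have hpF := (Finset.mem_filter.1 hpND).1
    have h1ne := (hCF p.1 (hmem p hpF).1).1
    have h2ne := (hSF p.2 (hmem p hpF).2.1).1
    rw [Finset.not_nonempty_iff_eq_empty] at hpd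
    have hdis : ∀ x, x ∈ p.1 → x ∉ p.2 := by
      intro x h1 h2
      exact Finset.notMem_empty x (hpd ▸ Finset.mem_inter.2 ⟨h1, h2⟩)
    have hsub1 : p.1 ⊆ A := by
      intro x hx
      rw [← hAr]
      exact Finset.mem_union_left _ (Finset.mem_sdiff.2 ⟨hx, hdis x hx⟩)
    have h22 : p.2 = A \ p.1 := by
      ext x
      rw [← hAr]
      simp only [Finset.mem_sdiff, Finset.mem_union, Finset.mem_sdiff]
      constructor
      · intro hx
        have hx1 : x ∉ p.1 := fun h => hdis x h hx
        exact ⟨Or.inr ⟨hx, hx1⟩, hx1⟩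
      · rintro ⟨h | h, hx1⟩
        · exact absurd h.1 hx1
        · exact h.1
    refine ⟨hsub1, h1ne, ?_, h22⟩
    intro h
    obtain ⟨s, hs⟩ := h2ne
    rw [h22, h] at hs
    simp at hs
  have hDisj : DisjF.card ≤ A.card := by
    have hinj : Set.InjOn (Prod.fst : Finset V × Finset V → Finset V) ↑DisjF := by
      intro p hp q hq heq
      have hp2 := (hDisjfacts p hp).2.2.2
      have hq2 := (hDisjfacts q hq).2.2.2
      apply Prod.ext heq
      rw [hp2, hq2, heq]
    have hcard : (DisjF.image Prod.fst).card = DisjF.card :=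
      Finset.card_image_of_injOn hinj
    rw [← hcard]
    apply PL A
    · intro C hC
      obtain ⟨p, hp, rfl⟩ := Finset.mem_image.1 hC
      exact (hDisjfacts p hp).1
    · intro C hC
      obtain ⟨p, hp, rfl⟩ := Finset.mem_image.1 hC
      exact (hDisjfacts p hp).2.1
    · intro C hC
      obtain ⟨p, hp, rfl⟩ := Finset.mem_image.1 hC
      exact (hDisjfacts p hp).2.2.1
    · intro C1 hC1 C2 hC2
      obtain ⟨p, hp, rfl⟩ := Finset.mem_image.1 hC1
      obtain ⟨q, hq, rfl⟩ := Finset.mem_image.1 hC2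
      have hpF := (Finset.mem_filter.1 (Finset.mem_filter.1 hp).1).1
      have hq2 := (hDisjfacts q hq).2.2.2
      have hsubCS : p.1 \ q.1 ⊆ p.1 ∩ q.2 := by
        intro x hx
        obtain ⟨hx1, hx2⟩ := Finset.mem_sdiff.1 hx
        refine Finset.mem_inter.2 ⟨hx1, ?_⟩
        rw [hq2]
        exact Finset.mem_sdiff.2 ⟨(hDisjfacts p hp).1 hx1, hx2⟩
      calc (p.1 \ q.1).card ≤ (p.1 ∩ q.2).card := Finset.card_le_card hsubCS
        _ ≤ 1 := cs_card G (hCF p.1 (hmem p hpF).1).2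
              (hSF q.2 (hmem q ((Finset.mem_filter.1 (Finset.mem_filter.1 hq).1).1)).2.1).2
  -- Diagonal part
  have hDiagsub : (F.filter fun p => p.1 = p.2) ⊆ {(A, A)} := by
    intro p hp
    obtain ⟨hpF, hpe⟩ := Finset.mem_filter.1 hp
    have := (hmem p hpF).2.2
    rw [if_pos hpe] at this
    simp only [Finset.mem_singleton]
    rw [Prod.ext_iff]
    exact ⟨this, hpe ▸ this⟩
  have hcompl : Aᶜ.card = Fintype.card V - A.card := by
    rw [Finset.card_compl]
  have hAcard : A.card ≤ Fintype.card V := Finset.card_le_card (Finset.subset_univ A)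
  by_cases hA2 : 2 ≤ A.card
  · -- diagonal empty
    have hDiag : (F.filter fun p => p.1 = p.2) = ∅ := by
      rw [Finset.eq_empty_iff_forall_notMem]
      intro p hp
      obtain ⟨hpF, hpe⟩ := Finset.mem_filter.1 hp
      have hkey := (hmem p hpF).2.2
      rw [if_pos hpe] at hkey
      have hC := (hCF p.1 (hmem p hpF).1).2
      have hS := (hSF p.2 (hmem p hpF).2.1).2
      have : (p.1 ∩ p.1).card ≤ 1 := cs_card G hC (hpe ▸ hS)
      rw [Finset.inter_self, hkey] at this
      omega
    rw [← hsplit1, hDiag, ← hsplit2]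
    simp only [Finset.card_empty]
    omega
  · -- A is a singleton; disjoint part empty
    have hDisjE : DisjF = ∅ := by
      rw [Finset.eq_empty_iff_forall_notMem]
      intro p hp
      have h := hDisjfacts p hp
      have h1 : p.1 ⊆ A := h.1
      have h2 : p.1.Nonempty := h.2.1
      have h3 : p.1 ≠ A := h.2.2.1
      have : p.1 = A := by
        apply Finset.eq_of_subset_of_card_le h1
        have := Finset.card_le_card h1
        have h2' : 1 ≤ p.1.card := Finset.card_pos.2 h2
        omega
      exact h3 this
    have hDiagcard : (F.filter fun p => p.1 = p.2).card ≤ 1 := by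
      calc _ ≤ ({(A,A)} : Finset (Finset V × Finset V)).card := Finset.card_le_card hDiagsub
        _ = 1 := Finset.card_singleton _
    have hAone : A.card = 1 := by
      have := Finset.card_pos.2 hA
      omega
    rw [← hsplit1, ← hsplit2, hDisjE]
    simp only [Finset.card_empty]
    omega

/-- **Stable set/clique trade-off.** For a finite simple graph `G` on `n` vertices,
the number of non-empty cliques times the number of non-empty stable sets is at most
`n * (2 ^ n - 1)`. -/
theorem stable_clique_tradeoff {V : Type*} [Fintype V] (G : SimpleGraph V) :
    {C : Finset V | C.Nonempty ∧ G.IsClique (C : Set V)}.ncard *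
      {S : Finset V | S.Nonempty ∧ (S : Set V).Pairwise fun x y => ¬ G.Adj x y}.ncard ≤
      Fintype.card V * (2 ^ Fintype.card V - 1) := by
  classical
  set CF := (Finset.univ : Finset (Finset V)).filter
    (fun C : Finset V => C.Nonempty ∧ G.IsClique (C : Set V)) with hCFdef
  set SF := (Finset.univ : Finset (Finset V)).filter
    (fun S : Finset V => S.Nonempty ∧ (S : Set V).Pairwise fun x y => ¬ G.Adj x y) with hSFdef
  have hC : {C : Finset V | C.Nonempty ∧ G.IsClique (C : Set V)}.ncard = CF.card := by
    rw [Set.ncard_eq_toFinset_card', Set.toFinset_setOf]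
  have hS : {S : Finset V | S.Nonempty ∧ (S : Set V).Pairwise fun x y => ¬ G.Adj x y}.ncard
      = SF.card := by
    rw [Set.ncard_eq_toFinset_card', Set.toFinset_setOf]
  rw [hC, hS, ← Finset.card_product]
  set T := (Finset.univ : Finset (Finset V)).filter (fun A : Finset V => A.Nonempty) with hT
  have hmap : ∀ p ∈ CF ×ˢ SF,
      (if p.1 = p.2 then p.1 else (p.1 \ p.2) ∪ (p.2 \ p.1)) ∈ T := by
    intro p hp
    obtain ⟨h1, h2⟩ := Finset.mem_product.1 hp
    have h1' := (Finset.mem_filter.1 h1).2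
    rw [hT, Finset.mem_filter]
    refine ⟨Finset.mem_univ _, ?_⟩
    by_cases h : p.1 = p.2
    · rw [if_pos h]; exact h1'.1
    · rw [if_neg h]
      rw [Finset.nonempty_iff_ne_empty]
      intro he
      rw [Finset.union_eq_empty] at he
      exact h (Finset.Subset.antisymm
        (Finset.sdiff_eq_empty_iff_subset.1 he.1)
        (Finset.sdiff_eq_empty_iff_subset.1 he.2))
  rw [Finset.card_eq_sum_card_fiberwise hmap]
  have hfib : ∀ A ∈ T, ((CF ×ˢ SF).filter fun p =>
      (if p.1 = p.2 then p.1 else (p.1 \ p.2) ∪ (p.2 \ p.1)) = A).card ≤ Fintype.card V := by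
    intro A hA
    apply fiber_bound G A (Finset.mem_filter.1 hA).2
    · intro C hC
      exact (Finset.mem_filter.1 hC).2
    · intro S hS
      exact (Finset.mem_filter.1 hS).2
  calc ∑ A ∈ T, ((CF ×ˢ SF).filter fun p =>
        (if p.1 = p.2 then p.1 else (p.1 \ p.2) ∪ (p.2 \ p.1)) = A).card
      ≤ ∑ _A ∈ T, Fintype.card V := Finset.sum_le_sum hfib
    _ = T.card * Fintype.card V := by rw [Finset.sum_const, smul_eq_mul]
    _ = (2 ^ Fintype.card V - 1) * Fintype.card V := by
        have : T = Finset.univ.erase (∅ : Finset V) := by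
          ext A
          simp [hT, Finset.nonempty_iff_ne_empty]
        rw [this, Finset.card_erase_of_mem (Finset.mem_univ _), Finset.card_univ,
          Fintype.card_finset]
    _ = Fintype.card V * (2 ^ Fintype.card V - 1) := mul_comm _ _
end

section
/- Let G be a finite simple graph on n ≥ 1 vertices, let 𝒞 be the family of non-empty cliques of G and 𝒮 the family of non-empty stable sets of G. Then |𝒞| · |𝒮| = n·(2^n − 1) holds if and only if G is a complete graph or G has no edges (i.e., the complement of G is complete). -/
open Finset

lemma sub_erase_rep {α : Type*} [DecidableEq α] {E A : Finset α} (h : A ⊆ E)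
    (hc : A.card + 1 = E.card) : ∃ u ∈ E, A = E.erase u := by
  have h1 : (E \ A).card = 1 := by rw [Finset.card_sdiff_of_subset h]; omega
  obtain ⟨u, hu⟩ := Finset.card_eq_one.mp h1
  have huE : u ∈ E ∧ u ∉ A := by
    have : u ∈ E \ A := hu ▸ Finset.mem_singleton_self u
    simpa using this
  refine ⟨u, huE.1, Finset.eq_of_subset_of_card_le ?_ ?_⟩
  · intro x hx
    exact Finset.mem_erase.mpr ⟨fun hxu => huE.2 (hxu ▸ hx), h hx⟩
  · rw [Finset.card_erase_of_mem huE.1]; omega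

lemma key_abstract {α : Type*} [DecidableEq α] :
    ∀ (n : ℕ) (T : Finset α), T.card ≤ n → ∀ (𝒜 : Finset (Finset α)),
    (∀ A ∈ 𝒜, A.Nonempty) → (∀ A ∈ 𝒜, A ⊂ T) →
    (∀ A ∈ 𝒜, ∀ B ∈ 𝒜, (A \ B).card ≤ 1) → 𝒜.card ≤ T.card := by
  intro n
  induction n with
  | zero =>
    intro T hT 𝒜 h1 h2 _
    have hTe : T = ∅ := card_eq_zero.mp (Nat.le_zero.mp hT)
    have : 𝒜 = ∅ := by
      apply eq_empty_of_forall_notMem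
      intro A hA
      obtain ⟨x, hx⟩ := h1 A hA
      exact absurd ((h2 A hA).1 hx) (by simp [hTe])
    simp [this]
  | succ n ih =>
    intro T hT 𝒜 h1 h2 h3
    rcases 𝒜.eq_empty_or_nonempty with rfl | ⟨A0', hA0'⟩
    · simp
    by_cases hcom : ∃ v, ∀ A ∈ 𝒜, v ∈ A
    · obtain ⟨v, hv⟩ := hcom
      have hvT : v ∈ T := (h2 A0' hA0').1 (hv A0' hA0')
      have h1T : 1 ≤ T.card := card_pos.mpr ⟨v, hvT⟩
      by_cases hsing : {v} ∈ 𝒜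
      · have hsub : 𝒜 ⊆ insert {v} ((T.erase v).image fun u => ({v, u} : Finset α)) := by
          intro A hA
          by_cases hAv : A = {v}
          · simp [hAv]
          · have h1' : (A \ {v}).card ≤ 1 := h3 A hA {v} hsing
            have hne : (A \ {v}).Nonempty := by
              rw [sdiff_nonempty]
              intro hsub
              exact hAv (Finset.Subset.antisymm hsub (singleton_subset_iff.mpr (hv A hA)))
            obtain ⟨u, hu⟩ := Finset.card_eq_one.mp (le_antisymm h1' hne.card_pos)
            have huA : u ∈ A ∧ u ≠ v := by
              have : u ∈ A \ {v} := hu ▸ mem_singleton_self u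
              simpa using this
            have hAeq : A = {v, u} := by
              apply Finset.Subset.antisymm
              · intro x hx
                by_cases hxv : x = v
                · simp [hxv]
                · have : x ∈ A \ {v} := by simp [hx, hxv]
                  rw [hu] at this
                  simp at this; simp [this]
              · intro x hx
                simp at hx
                rcases hx with rfl | rfl
                · exact hv A hA
                · exact huA.1
            rw [hAeq]
            exact mem_insert_of_mem
              (mem_image_of_mem _ (mem_erase.mpr ⟨huA.2, (h2 A hA).1 huA.1⟩))
        calc 𝒜.card ≤ _ := card_le_card hsub
          _ ≤ T.card := by
            have h1 := card_insert_le ({v} : Finset α)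
              ((T.erase v).image fun u => ({v, u} : Finset α))
            have h2 := card_image_le (f := fun u => ({v, u} : Finset α)) (s := T.erase v)
            have h3 := card_erase_of_mem hvT
            omega
      · -- no singleton {v}; erase v everywhere and induct
        have hANontriv : ∀ A ∈ 𝒜, (A.erase v).Nonempty := by
          intro A hA
          have : ∃ y ∈ A, y ≠ v := by
            by_contra h
            push_neg at h
            have hAv : A = {v} := Finset.Subset.antisymm
              (fun y hy => mem_singleton.mpr (h y hy))
              (singleton_subset_iff.mpr (hv A hA))
            exact hsing (hAv ▸ hA)
          obtain ⟨y, hy, hyv⟩ := this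
          exact ⟨y, mem_erase.mpr ⟨hyv, hy⟩⟩
        have hinj : Set.InjOn (fun A : Finset α => A.erase v) 𝒜 := by
          intro A hA B hB h
          have : insert v (A.erase v) = insert v (B.erase v) := by
            simp only at h; rw [h]
          rwa [insert_erase (hv A hA), insert_erase (hv B hB)] at this
        have hcard : (𝒜.image (fun A : Finset α => A.erase v)).card = 𝒜.card :=
          card_image_of_injOn hinj
        have key := ih (T.erase v) (by rw [card_erase_of_mem hvT]; omega)
          (𝒜.image (fun A : Finset α => A.erase v))
          (by
            intro A' hA'
            obtain ⟨A, hA, rfl⟩ := mem_image.mp hA'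
            exact hANontriv A hA)
          (by
            intro A' hA'
            obtain ⟨A, hA, rfl⟩ := mem_image.mp hA'
            constructor
            · exact erase_subset_erase v (h2 A hA).1
            · intro hsub
              apply (h2 A hA).2
              intro x hx
              rcases eq_or_ne x v with rfl | hxv
              · exact hv A hA
              · exact (erase_subset v A) (hsub (mem_erase.mpr ⟨hxv, hx⟩)))
          (by
            intro A' hA' B' hB'
            obtain ⟨A, hA, rfl⟩ := mem_image.mp hA'
            obtain ⟨B, hB, rfl⟩ := mem_image.mp hB'
            have : A.erase v \ B.erase v = A \ B := by
              ext x
              simp only [mem_sdiff, mem_erase]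
              constructor
              · rintro ⟨⟨hxv, hxA⟩, hxB⟩
                exact ⟨hxA, fun h => hxB ⟨hxv, h⟩⟩
              · rintro ⟨hxA, hxB⟩
                have hxv : x ≠ v := fun h => hxB (h ▸ hv B hB)
                exact ⟨⟨hxv, hxA⟩, fun h => hxB h.2⟩
            rw [this]
            exact h3 A hA B hB)
        rw [hcard, card_erase_of_mem hvT] at key
        omega
    · -- no common vertex
      push_neg at hcom
      obtain ⟨A0, hA0, hmax⟩ := 𝒜.exists_max_image Finset.card ⟨A0', hA0'⟩
      set k := A0.card with hk
      have hk1 : 1 ≤ k := (h1 A0 hA0).card_pos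
      have hlow : ∀ A ∈ 𝒜, k ≤ A.card + 1 := by
        intro A hA
        have e1 := card_sdiff_add_card_inter A0 A
        have e2 : (A0 ∩ A).card ≤ A.card := card_le_card (inter_subset_right)
        have e3 := h3 A0 hA0 A hA
        omega
      have hsub_succ : ∀ A ∈ 𝒜, ∀ B ∈ 𝒜, B.card + 1 = A.card → B ⊆ A := by
        intro A hA B hB hcard
        have e1 := card_sdiff_add_card_inter A B
        have e3 := h3 A hA B hB
        have e4 : B.card ≤ (A ∩ B).card := by omega
        have : A ∩ B = B := eq_of_subset_of_card_le (inter_subset_right) e4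
        rw [← this]
        exact inter_subset_left
      by_cases hone : k = 1
      · -- all singletons
        have hsub : 𝒜 ⊆ T.image (fun u => ({u} : Finset α)) := by
          intro A hA
          have : A.card = 1 := le_antisymm (hone ▸ hmax A hA) (h1 A hA).card_pos
          obtain ⟨u, rfl⟩ := card_eq_one.mp this
          exact mem_image_of_mem _ ((h2 _ hA).1 (mem_singleton_self u))
        exact (card_le_card hsub).trans card_image_le
      -- k ≥ 2
      have hk2 : 2 ≤ k := by omega
      by_cases hmix : ∃ B ∈ 𝒜, B.card < k
      · -- mixed sizes
        obtain ⟨B1, hB1, hB1c⟩ := hmix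
        have hB1card : B1.card = k - 1 := by have := hlow B1 hB1; omega
        have hBsubA : ∀ B ∈ 𝒜, B.card = k - 1 → ∀ A ∈ 𝒜, A.card = k → B ⊆ A := by
          intro B hB hBc A hA hAc
          exact hsub_succ A hA B hB (by omega)
        have hB2 : ∃ B2 ∈ 𝒜, B2.card = k - 1 ∧ B2 ≠ B1 := by
          by_contra hcon
          push_neg at hcon
          have hall : ∀ A ∈ 𝒜, B1 ⊆ A := by
            intro A hA
            rcases eq_or_lt_of_le (hmax A hA) with heq | hlt
            · exact hBsubA B1 hB1 hB1card A hA heq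
            · have : A.card = k - 1 := by have := hlow A hA; omega
              rw [hcon A hA this]
          obtain ⟨u, hu⟩ := (h1 B1 hB1)
          obtain ⟨A, hA, huA⟩ := hcom u
          exact huA (hall A hA hu)
        obtain ⟨B2, hB2m, hB2c, hB2ne⟩ := hB2
        -- every k-set equals B1 ∪ B2
        have hkset : ∀ A ∈ 𝒜, A.card = k → A = B1 ∪ B2 := by
          intro A hA hAc
          have hs1 : B1 ⊆ A := hBsubA B1 hB1 hB1card A hA hAc
          have hs2 : B2 ⊆ A := hBsubA B2 hB2m hB2c A hA hAc
          have hd : 1 ≤ (B2 \ B1).card := by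
            rw [Nat.one_le_iff_ne_zero]
            intro h0
            exact hB2ne (eq_of_subset_of_card_le
              (sdiff_eq_empty_iff_subset.mp (card_eq_zero.mp h0)) (by omega))
          have hcu : k ≤ (B2 ∪ B1).card := by
            have := card_sdiff_add_card B2 B1
            omega
          have : B2 ∪ B1 = A := eq_of_subset_of_card_le
            (union_subset hs2 hs1) (by omega)
          rw [← this, union_comm]
        have hA0eq : A0 = B1 ∪ B2 := hkset A0 hA0 rfl
        have hsub : 𝒜 ⊆ insert A0 (A0.image fun u => A0.erase u) := by
          intro A hA
          rcases eq_or_lt_of_le (hmax A hA) with heq | hlt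
          · rw [hkset A hA heq, ← hA0eq]; exact mem_insert_self _ _
          · have hAc : A.card = k - 1 := by have := hlow A hA; omega
            have hAs : A ⊆ A0 := hBsubA A hA hAc A0 hA0 rfl
            obtain ⟨u, huA0, hueq⟩ := sub_erase_rep hAs (by omega)
            rw [hueq]
            exact mem_insert_of_mem (mem_image_of_mem _ huA0)
        have hklt : k < T.card := card_lt_card (h2 A0 hA0)
        calc 𝒜.card ≤ _ := card_le_card hsub
          _ ≤ T.card := by
            have i1 := card_insert_le A0 (A0.image fun u => A0.erase u)
            have i2 := card_image_le (f := fun u => A0.erase u) (s := A0)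
            omega
      · -- pure: all of size k
        push_neg at hmix
        have hallk : ∀ A ∈ 𝒜, A.card = k := fun A hA => le_antisymm (hmax A hA) (hmix A hA)
        obtain ⟨u0, hu0⟩ := h1 A0 hA0
        obtain ⟨A1, hA1, hu0A1⟩ := hcom u0
        have hA1ne : A1 ≠ A0 := fun h => hu0A1 (h ▸ hu0)
        set K := A0 ∩ A1 with hK
        set E := A0 ∪ A1 with hE
        have hd10 : (A1 \ A0).card = 1 := by
          refine le_antisymm (h3 A1 hA1 A0 hA0) ?_
          rw [Nat.one_le_iff_ne_zero]
          intro h0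
          exact hA1ne (eq_of_subset_of_card_le
            (sdiff_eq_empty_iff_subset.mp (card_eq_zero.mp h0))
            (by rw [hallk A1 hA1, hallk A0 hA0]))
        have hd01 : (A0 \ A1).card = 1 := by
          refine le_antisymm (h3 A0 hA0 A1 hA1) ?_
          rw [Nat.one_le_iff_ne_zero]
          intro h0
          exact hA1ne.symm (eq_of_subset_of_card_le
            (sdiff_eq_empty_iff_subset.mp (card_eq_zero.mp h0))
            (by rw [hallk A1 hA1, hallk A0 hA0]))
        have hEcard : E.card = k + 1 := by
          have := card_sdiff_add_card A1 A0
          rw [hd10] at this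
          rw [hE, union_comm]
          omega
        have hKcard : K.card = k - 1 := by
          have h5 := card_sdiff_add_card_inter A0 A1
          rw [hd01] at h5
          rw [hK]
          omega
        have hET : E ⊆ T := union_subset (h2 A0 hA0).1 (h2 A1 hA1).1
        -- key claim: every member is inside E
        have hinside : ∀ A ∈ 𝒜, A ⊆ E := by
          by_contra hcon
          push_neg at hcon
          obtain ⟨A3, hA3, hA3nsub⟩ := hcon
          obtain ⟨x, hxA3, hxE⟩ := not_subset.mp hA3nsub
          have habs : ∀ A ∈ 𝒜, x ∈ A → A = insert x K := by
            intro A hA hxA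
            have hs0 : A ⊆ insert x A0 := by
              intro y hy
              by_cases hy0 : y ∈ A0
              · exact mem_insert_of_mem hy0
              · have : y ∈ A \ A0 := mem_sdiff.mpr ⟨hy, hy0⟩
                have hyx : y = x := card_le_one.mp (h3 A hA A0 hA0) y this x
                  (mem_sdiff.mpr ⟨hxA, fun h => hxE (mem_union_left _ h)⟩)
                rw [hyx]; exact mem_insert_self _ _
            have hs1 : A ⊆ insert x A1 := by
              intro y hy
              by_cases hy1 : y ∈ A1
              · exact mem_insert_of_mem hy1
              · have : y ∈ A \ A1 := mem_sdiff.mpr ⟨hy, hy1⟩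
                have hyx : y = x := card_le_one.mp (h3 A hA A1 hA1) y this x
                  (mem_sdiff.mpr ⟨hxA, fun h => hxE (mem_union_right _ h)⟩)
                rw [hyx]; exact mem_insert_self _ _
            have hsK : A ⊆ insert x K := by
              intro y hy
              rcases mem_insert.mp (hs0 hy) with rfl | hy0
              · exact mem_insert_self _ _
              · rcases mem_insert.mp (hs1 hy) with rfl | hy1
                · exact mem_insert_self _ _
                · exact mem_insert_of_mem (mem_inter.mpr ⟨hy0, hy1⟩)
            have hxK : x ∉ K := fun h => hxE (mem_union_left _ (mem_inter.mp h).1)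
            refine eq_of_subset_of_card_le hsK ?_
            rw [card_insert_of_notMem hxK, hKcard, hallk A hA]
            omega
          have hA3eq : A3 = insert x K := habs A3 hA3 hxA3
          have hKne : K.Nonempty := by
            rw [← card_pos, hKcard]; omega
          obtain ⟨u, huK⟩ := hKne
          obtain ⟨A4, hA4, huA4⟩ := hcom u
          have hxA4 : x ∈ A4 := by
            by_contra hxA4
            have h2le : 2 ≤ (A3 \ A4).card := by
              have hu3 : u ∈ A3 \ A4 := mem_sdiff.mpr
                ⟨hA3eq ▸ mem_insert_of_mem huK, huA4⟩
              have hx3 : x ∈ A3 \ A4 := mem_sdiff.mpr ⟨hxA3, hxA4⟩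
              have hne : u ≠ x := fun h =>
                hxE (h ▸ mem_union_left _ (mem_inter.mp huK).1)
              exact one_lt_card.mpr ⟨u, hu3, x, hx3, hne⟩
            have := h3 A3 hA3 A4 hA4
            omega
          have : A4 = insert x K := habs A4 hA4 hxA4
          exact huA4 (this ▸ mem_insert_of_mem huK)
        have hsub : 𝒜 ⊆ E.image fun u => E.erase u := by
          intro A hA
          obtain ⟨u, huE, hueq⟩ := sub_erase_rep (hinside A hA)
            (by rw [hallk A hA, hEcard])
          rw [hueq]
          exact mem_image_of_mem _ huE
        calc 𝒜.card ≤ _ := card_le_card hsub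
          _ ≤ E.card := card_image_le
          _ ≤ T.card := card_le_card hET


section Helpers

variable {V : Type*} [DecidableEq V] {G : SimpleGraph V}

/-- If a clique `C` and a stable set `S` share a vertex `v` and `C ∪ S = T`,
then `C` and `S` are determined by `T` and `v`. -/
lemma part_eq [DecidableRel G.Adj] {C S T : Finset V} (hC : G.IsClique (C : Set V))
    (hS : (S : Set V).Pairwise fun x y => ¬ G.Adj x y) (hU : C ∪ S = T) {v : V}
    (hvC : v ∈ C) (hvS : v ∈ S) :
    C = T.filter (fun u => G.Adj v u ∨ u = v) ∧
      S = T.filter (fun u => ¬ G.Adj v u) := by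
  have hCT : ∀ u ∈ C, u ∈ T := fun u hu => hU ▸ mem_union_left _ hu
  have hST : ∀ u ∈ S, u ∈ T := fun u hu => hU ▸ mem_union_right _ hu
  constructor
  · ext u
    simp only [mem_filter]
    constructor
    · intro hu
      refine ⟨hCT u hu, ?_⟩
      rcases eq_or_ne u v with rfl | hne
      · exact Or.inr rfl
      · exact Or.inl ((hC hvC hu hne.symm))
    · rintro ⟨huT, hadj | rfl⟩
      · rcases mem_union.mp (hU ▸ huT : u ∈ C ∪ S) with h | h
        · exact h
        · exact absurd hadj (hS hvS h (G.ne_of_adj hadj))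
      · exact hvC
  · ext u
    simp only [mem_filter]
    constructor
    · intro hu
      refine ⟨hST u hu, ?_⟩
      rcases eq_or_ne u v with rfl | hne
      · exact G.irrefl
      · exact hS hvS hu hne.symm
    · rintro ⟨huT, hnadj⟩
      rcases mem_union.mp (hU ▸ huT : u ∈ C ∪ S) with h | h
      · rcases eq_or_ne u v with rfl | hne
        · exact hvS
        · exact absurd (hC hvC h hne.symm) hnadj
      · exact h

/-- Pairs `(C, S)` (clique, stable) with `C ∪ S = T` and `C ∩ S ≠ ∅`, whose common
vertex lies in `W`, number at most `|W|`. -/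
lemma int_bound [DecidableRel G.Adj] {T W : Finset V} (P : Finset (Finset V × Finset V))
    (hP : ∀ p ∈ P, G.IsClique (p.1 : Set V) ∧
      ((p.2 : Set V).Pairwise fun x y => ¬ G.Adj x y) ∧ p.1 ∪ p.2 = T ∧
      (p.1 ∩ p.2).Nonempty)
    (hW : ∀ p ∈ P, p.1 ∩ p.2 ⊆ W) : P.card ≤ W.card := by
  rcases P.eq_empty_or_nonempty with rfl | ⟨p0, hp0⟩
  · simp
  have hV : Nonempty V := ⟨((hP p0 hp0).2.2.2).choose⟩
  apply card_le_card_of_injOn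
    (fun p => if h : (p.1 ∩ p.2).Nonempty then h.choose else Classical.arbitrary V)
  · intro p hp
    have h := (hP p hp).2.2.2
    simp only [dif_pos h]
    exact hW p hp h.choose_spec
  · intro p hp q hq heq
    have hpn := (hP p hp).2.2.2
    have hqn := (hP q hq).2.2.2
    simp only [dif_pos hpn, dif_pos hqn] at heq
    have hpv := hpn.choose_spec
    have hqv := hqn.choose_spec
    rw [heq] at hpv
    obtain ⟨hC1, hS1, hU1, -⟩ := hP p hp
    obtain ⟨hC2, hS2, hU2, -⟩ := hP q hq
    have e1 := part_eq hC1 hS1 hU1 (mem_inter.mp hpv).1 (mem_inter.mp hpv).2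
    have e2 := part_eq hC2 hS2 hU2 (mem_inter.mp hqv).1 (mem_inter.mp hqv).2
    exact Prod.ext (e1.1.trans e2.1.symm) (e1.2.trans e2.2.symm)

end Helpers

section Helpers2
variable {V : Type*} [DecidableEq V] {G : SimpleGraph V}

/-- Pairs `(C, S)` (clique, stable, both nonempty) with `C ∪ S = T`, `C ∩ S = ∅`
number at most `|T|`. -/
lemma disj_bound {T : Finset V} (P : Finset (Finset V × Finset V))
    (hP : ∀ p ∈ P, p.1.Nonempty ∧ p.2.Nonempty ∧ G.IsClique (p.1 : Set V) ∧
      ((p.2 : Set V).Pairwise fun x y => ¬ G.Adj x y) ∧ p.1 ∪ p.2 = T ∧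
      p.1 ∩ p.2 = ∅) :
    P.card ≤ T.card := by
  have hsnd : ∀ p ∈ P, p.2 = T \ p.1 := by
    intro p hp
    obtain ⟨-, -, -, -, hU, hI⟩ := hP p hp
    ext u
    simp only [mem_sdiff]
    constructor
    · intro hu
      refine ⟨hU ▸ mem_union_right _ hu, fun h1 => ?_⟩
      have : u ∈ p.1 ∩ p.2 := mem_inter.mpr ⟨h1, hu⟩
      rw [hI] at this
      exact absurd this (notMem_empty u)
    · rintro ⟨huT, hu1⟩
      rcases mem_union.mp (hU ▸ huT : u ∈ p.1 ∪ p.2) with h | h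
      · exact absurd h hu1
      · exact h
  have hinj : Set.InjOn Prod.fst (P : Set (Finset V × Finset V)) := by
    intro p hp q hq h
    exact Prod.ext h (by rw [hsnd p hp, hsnd q hq, h])
  have hcard : (P.image Prod.fst).card = P.card := card_image_of_injOn hinj
  rw [← hcard]
  apply key_abstract T.card T le_rfl
  · intro A hA
    obtain ⟨p, hp, rfl⟩ := mem_image.mp hA
    exact (hP p hp).1
  · intro A hA
    obtain ⟨p, hp, rfl⟩ := mem_image.mp hA
    obtain ⟨-, ⟨s, hs⟩, -, -, hU, hI⟩ := hP p hp
    constructor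
    · exact hU ▸ subset_union_left
    · intro hsub
      have hsT : s ∈ T := hU ▸ mem_union_right _ hs
      have : s ∈ p.1 ∩ p.2 := mem_inter.mpr ⟨hsub hsT, hs⟩
      rw [hI] at this
      exact absurd this (notMem_empty s)
  · intro A hA B hB
    obtain ⟨p, hp, rfl⟩ := mem_image.mp hA
    obtain ⟨q, hq, rfl⟩ := mem_image.mp hB
    obtain ⟨-, -, hCp, -, hUp, -⟩ := hP p hp
    obtain ⟨-, -, -, hSq, hUq, hIq⟩ := hP q hq
    rw [card_le_one]
    intro a ha b hb
    by_contra hne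
    have hmem : ∀ x ∈ p.1 \ q.1, x ∈ q.2 := by
      intro x hx
      have hxT : x ∈ T := hUp ▸ mem_union_left _ (mem_sdiff.mp hx).1
      rcases mem_union.mp (hUq ▸ hxT : x ∈ q.1 ∪ q.2) with h | h
      · exact absurd h (mem_sdiff.mp hx).2
      · exact h
    have hadj : G.Adj a b := hCp (mem_sdiff.mp ha).1 (mem_sdiff.mp hb).1 hne
    exact hSq (hmem a ha) (hmem b hb) hne hadj

end Helpers2


section Sums
variable {V : Type*} [Fintype V] [DecidableEq V]

lemma sum_two_card : ∑ T : Finset V, 2 * T.card = Fintype.card V * 2 ^ Fintype.card V := by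
  have h1 : ∑ T : Finset V, (Tᶜ : Finset V).card = ∑ T : Finset V, T.card :=
    Equiv.sum_comp (⟨compl, compl, compl_compl, compl_compl⟩ : Finset V ≃ Finset V)
      (fun T => T.card)
  have h2 : ∑ T : Finset V, (T.card + (Tᶜ : Finset V).card) =
      2 ^ Fintype.card V * Fintype.card V := by
    rw [Finset.sum_congr rfl (fun T _ => T.card_add_card_compl), Finset.sum_const,
      card_univ, Fintype.card_finset, smul_eq_mul]
  rw [Finset.sum_add_distrib, h1] at h2
  rw [← Finset.mul_sum, mul_comm (Fintype.card V) (2 ^ Fintype.card V)]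
  omega

lemma singletons_count :
    ((univ : Finset (Finset V)).filter fun T => T.Nonempty ∧ T.card ≤ 1).card
      = Fintype.card V := by
  have : ((univ : Finset (Finset V)).filter fun T => T.Nonempty ∧ T.card ≤ 1)
      = univ.image (fun v : V => ({v} : Finset V)) := by
    ext T
    simp only [mem_filter, mem_univ, true_and, mem_image]
    constructor
    · rintro ⟨hne, hle⟩
      obtain ⟨v, rfl⟩ := card_eq_one.mp (le_antisymm hle hne.card_pos)
      exact ⟨v, rfl⟩
    · rintro ⟨v, rfl⟩
      exact ⟨⟨v, mem_singleton_self v⟩, by simp⟩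
  rw [this, card_image_of_injective _ Finset.singleton_injective, card_univ]

lemma sum_B :
    ∑ T ∈ (univ : Finset (Finset V)).filter (fun T => T.Nonempty),
        (if T.card ≤ 1 then 1 else 2 * T.card)
      = Fintype.card V * 2 ^ Fintype.card V - Fintype.card V := by
  set 𝒯 := (univ : Finset (Finset V)).filter (fun T => T.Nonempty) with h𝒯
  have key : ∑ T ∈ 𝒯, ((if T.card ≤ 1 then 1 else 2 * T.card)
      + (if T.card ≤ 1 then 1 else 0)) = ∑ T ∈ 𝒯, 2 * T.card := by
    apply Finset.sum_congr rfl
    intro T hT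
    have hne : T.Nonempty := (mem_filter.mp hT).2
    by_cases h : T.card ≤ 1
    · have : T.card = 1 := le_antisymm h hne.card_pos
      simp [h, this]
    · simp [h]
  have hd : ∑ T ∈ 𝒯, (if T.card ≤ 1 then 1 else 0) = Fintype.card V := by
    rw [← Finset.sum_filter, Finset.sum_const, smul_eq_mul, mul_one]
    rw [← singletons_count (V := V)]
    congr 1
    rw [h𝒯, filter_filter]
  have htot : ∑ T ∈ 𝒯, 2 * T.card = Fintype.card V * 2 ^ Fintype.card V := by
    rw [← sum_two_card (V := V)]
    rw [h𝒯]
    rw [← Finset.sum_filter_add_sum_filter_not univ (fun T : Finset V => T.Nonempty)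
      (fun T => 2 * T.card)]
    have : ∑ T ∈ (univ : Finset (Finset V)).filter (fun T => ¬ T.Nonempty),
        2 * T.card = 0 := by
      apply Finset.sum_eq_zero
      intro T hT
      have : T = ∅ := not_nonempty_iff_eq_empty.mp (mem_filter.mp hT).2
      simp [this]
    omega
  rw [Finset.sum_add_distrib, hd] at key
  omega

end Sums

lemma main_lt {V : Type*} [Fintype V] (G : SimpleGraph V)
    (hT : G ≠ ⊤) (hB : G ≠ ⊥) :
    {C : Finset V | C.Nonempty ∧ G.IsClique (C : Set V)}.ncard *
      {S : Finset V | S.Nonempty ∧ (S : Set V).Pairwise fun x y => ¬ G.Adj x y}.ncard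
      < Fintype.card V * 2 ^ Fintype.card V - Fintype.card V := by
  classical
  rw [Set.ncard_eq_toFinset_card', Set.ncard_eq_toFinset_card', Set.toFinset_setOf,
    Set.toFinset_setOf]
  -- an edge and a non-edge
  have hedge : ∃ a b, G.Adj a b := by
    by_contra h
    push_neg at h
    exact hB (by ext a b; simp [h a b])
  have hnonedge : ∃ c d, c ≠ d ∧ ¬ G.Adj c d := by
    by_contra h
    push_neg at h
    refine hT ?_
    ext a b
    simp only [SimpleGraph.top_adj]
    exact ⟨G.ne_of_adj, h a b⟩
  obtain ⟨a, b, hab⟩ := hedge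
  obtain ⟨c, d, hcd_ne, hcd⟩ := hnonedge
  -- a mixed path x–y, y≁z
  have hmixed : ∃ x y z : V, x ≠ y ∧ y ≠ z ∧ x ≠ z ∧ G.Adj x y ∧ ¬ G.Adj y z := by
    by_cases h1 : G.Adj b c
    · refine ⟨b, c, d, G.ne_of_adj h1, hcd_ne, fun h => ?_, h1, hcd⟩
      rw [h] at h1
      exact hcd h1.symm
    · by_cases h2 : b = c
      · subst h2
        refine ⟨a, b, d, G.ne_of_adj hab, hcd_ne, fun h => ?_, hab, hcd⟩
        rw [h] at hab
        exact hcd hab.symm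
      · refine ⟨a, b, c, G.ne_of_adj hab, h2, fun h => ?_, hab, h1⟩
        rw [h] at hab
        exact h1 hab.symm
  obtain ⟨x, y, z, hxy, hyz, hxz, haxy, hnyz⟩ := hmixed
  -- a bad triple {v,u,w}
  have htriple : ∃ v u w : V, v ≠ u ∧ v ≠ w ∧ u ≠ w ∧
      ((G.Adj v u ∧ G.Adj v w ∧ ¬ G.Adj u w) ∨
        (¬ G.Adj v u ∧ ¬ G.Adj v w ∧ G.Adj u w)) := by
    by_cases h : G.Adj x z
    · exact ⟨x, y, z, hxy, hxz, hyz, Or.inl ⟨haxy, h, hnyz⟩⟩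
    · exact ⟨z, x, y, Ne.symm hxz, Ne.symm hyz, hxy,
        Or.inr ⟨fun hh => h hh.symm, fun hh => hnyz hh.symm, haxy⟩⟩
  obtain ⟨v, u, w, hvu, hvw, huw, hpat⟩ := htriple
  set T0 : Finset V := {v, u, w} with hT0
  have hT0card : T0.card = 3 := by
    rw [hT0, card_insert_of_notMem (by simp [hvu, hvw]),
      card_insert_of_notMem (by simp [huw]), card_singleton]
  -- setup
  set 𝒞f := (univ : Finset (Finset V)).filter
    (fun C : Finset V => C.Nonempty ∧ G.IsClique (C : Set V)) with h𝒞f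
  set 𝒮f := (univ : Finset (Finset V)).filter
    (fun S : Finset V => S.Nonempty ∧ (S : Set V).Pairwise fun x y => ¬ G.Adj x y) with h𝒮f
  set P := 𝒞f ×ˢ 𝒮f with hP
  set 𝒯 := (univ : Finset (Finset V)).filter (fun T => T.Nonempty) with h𝒯
  have hPmem : ∀ p ∈ P, p.1.Nonempty ∧ G.IsClique (p.1 : Set V) ∧ p.2.Nonempty ∧
      ((p.2 : Set V).Pairwise fun x y => ¬ G.Adj x y) := by
    intro p hp
    rw [hP, mem_product] at hp
    obtain ⟨h1, h2⟩ := hp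
    rw [h𝒞f, mem_filter] at h1
    rw [h𝒮f, mem_filter] at h2
    exact ⟨h1.2.1, h1.2.2, h2.2.1, h2.2.2⟩
  have hfiber : P.card = ∑ T ∈ 𝒯, (P.filter fun p => p.1 ∪ p.2 = T).card := by
    apply card_eq_sum_card_fiberwise
    intro p hp
    rw [Finset.mem_coe] at hp ⊢
    rw [h𝒯, mem_filter]
    exact ⟨mem_univ _, ((hPmem p hp).1).mono subset_union_left⟩
  -- generic fiber bound
  have hboundgen : ∀ T : Finset V,
      ((P.filter fun p => p.1 ∪ p.2 = T).filter
        fun p => (p.1 ∩ p.2).Nonempty).card ≤ T.card ∧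
      ((P.filter fun p => p.1 ∪ p.2 = T).filter
        fun p => ¬ (p.1 ∩ p.2).Nonempty).card ≤ T.card := by
    intro T
    constructor
    · apply int_bound (G := G)
      · intro p hp
        rw [mem_filter, mem_filter] at hp
        obtain ⟨⟨hpP, hpU⟩, hpI⟩ := hp
        exact ⟨(hPmem p hpP).2.1, (hPmem p hpP).2.2.2, hpU, hpI⟩
      · intro p hp
        rw [mem_filter, mem_filter] at hp
        obtain ⟨⟨hpP, hpU⟩, _⟩ := hp
        exact hpU ▸ (inter_subset_left.trans subset_union_left)
    · apply disj_bound (G := G)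
      intro p hp
      rw [mem_filter, mem_filter] at hp
      obtain ⟨⟨hpP, hpU⟩, hpI⟩ := hp
      exact ⟨(hPmem p hpP).1, (hPmem p hpP).2.2.1, (hPmem p hpP).2.1,
        (hPmem p hpP).2.2.2, hpU, not_nonempty_iff_eq_empty.mp hpI⟩
  have hbound : ∀ T ∈ 𝒯, (P.filter fun p => p.1 ∪ p.2 = T).card ≤
      (if T.card ≤ 1 then 1 else 2 * T.card) := by
    intro T hTmem
    have hTne : T.Nonempty := (mem_filter.mp hTmem).2
    by_cases hc : T.card ≤ 1
    · rw [if_pos hc]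
      have hc1 : T.card = 1 := le_antisymm hc hTne.card_pos
      apply card_le_one.mpr
      intro p hp q hq
      rw [mem_filter] at hp hq
      have key : ∀ r ∈ P, r.1 ∪ r.2 = T → r = (T, T) := by
        intro r hr hrU
        have h1 : r.1 = T := eq_of_subset_of_card_le (hrU ▸ subset_union_left)
          (by rw [hc1]; exact (hPmem r hr).1.card_pos)
        have h2 : r.2 = T := eq_of_subset_of_card_le (hrU ▸ subset_union_right)
          (by rw [hc1]; exact (hPmem r hr).2.2.1.card_pos)
        exact Prod.ext h1 h2
      rw [key p hp.1 hp.2, key q hq.1 hq.2]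
    · rw [if_neg hc]
      have hsplit := card_filter_add_card_filter_not
        (s := P.filter fun p => p.1 ∪ p.2 = T) (p := fun p => (p.1 ∩ p.2).Nonempty)
      have h1 := (hboundgen T).1
      have h2 := (hboundgen T).2
      omega
  -- strict bound at T0
  have hstrict : (P.filter fun p => p.1 ∪ p.2 = T0).card <
      (if T0.card ≤ 1 then 1 else 2 * T0.card) := by
    rw [if_neg (by omega)]
    have hint : ((P.filter fun p => p.1 ∪ p.2 = T0).filter
        fun p => (p.1 ∩ p.2).Nonempty).card ≤ (T0.erase v).card := by
      apply int_bound (G := G)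
      · intro p hp
        rw [mem_filter, mem_filter] at hp
        obtain ⟨⟨hpP, hpU⟩, hpI⟩ := hp
        exact ⟨(hPmem p hpP).2.1, (hPmem p hpP).2.2.2, hpU, hpI⟩
      · intro p hp
        rw [mem_filter, mem_filter] at hp
        obtain ⟨⟨hpP, hpU⟩, hpI⟩ := hp
        obtain ⟨-, hC, -, hS⟩ := hPmem p hpP
        intro t ht
        rw [mem_inter] at ht
        have htT : t ∈ T0 := hpU ▸ mem_union_left _ ht.1
        rw [mem_erase]
        refine ⟨fun htv => ?_, htT⟩
        subst htv
        have huT : u ∈ T0 := by rw [hT0]; simp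
        have hwT : w ∈ T0 := by rw [hT0]; simp
        rcases hpat with ⟨hu1, hw1, hnuw⟩ | ⟨hnu1, hnw1, huw1⟩
        · -- u, w must be in the clique part
          have hu2 : u ∈ p.1 := by
            rcases mem_union.mp (hpU ▸ huT : u ∈ p.1 ∪ p.2) with h | h
            · exact h
            · exact absurd hu1 (hS ht.2 h hvu)
          have hw2 : w ∈ p.1 := by
            rcases mem_union.mp (hpU ▸ hwT : w ∈ p.1 ∪ p.2) with h | h
            · exact h
            · exact absurd hw1 (hS ht.2 h hvw)
          exact hnuw (hC hu2 hw2 huw)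
        · -- u, w must be in the stable part
          have hu2 : u ∈ p.2 := by
            rcases mem_union.mp (hpU ▸ huT : u ∈ p.1 ∪ p.2) with h | h
            · exact absurd (hC ht.1 h hvu) hnu1
            · exact h
          have hw2 : w ∈ p.2 := by
            rcases mem_union.mp (hpU ▸ hwT : w ∈ p.1 ∪ p.2) with h | h
            · exact absurd (hC ht.1 h hvw) hnw1
            · exact h
          exact hS hu2 hw2 huw huw1
    have hdisj := (hboundgen T0).2
    have hsplit := card_filter_add_card_filter_not
      (s := P.filter fun p => p.1 ∪ p.2 = T0) (p := fun p => (p.1 ∩ p.2).Nonempty)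
    have herase : (T0.erase v).card = 2 := by
      rw [card_erase_of_mem (by rw [hT0]; simp), hT0card]
    omega
  have hT0mem : T0 ∈ 𝒯 := by
    rw [h𝒯, mem_filter]
    exact ⟨mem_univ _, ⟨v, by rw [hT0]; simp⟩⟩
  have hlt : P.card < ∑ T ∈ 𝒯, (if T.card ≤ 1 then 1 else 2 * T.card) := by
    rw [hfiber]
    exact Finset.sum_lt_sum hbound ⟨T0, hT0mem, hstrict⟩
  rw [← card_product]
  rw [sum_B] at hlt
  exact hlt


lemma count_all {V : Type*} [Fintype V] (p : Finset V → Prop)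
    (hp : ∀ C, p C ↔ C.Nonempty) :
    {C : Finset V | p C}.ncard = 2 ^ Fintype.card V - 1 := by
  classical
  have e : {C : Finset V | p C} =
      ↑((univ : Finset (Finset V)).filter fun C => C.Nonempty) := by
    ext C; simp [hp]
  rw [e, Set.ncard_coe_finset]
  have h2 := card_filter_add_card_filter_not (s := (univ : Finset (Finset V)))
    (p := fun C : Finset V => C.Nonempty)
  have h3 : (univ : Finset (Finset V)).filter (fun C => ¬ C.Nonempty) = {∅} := by
    ext C
    simp [not_nonempty_iff_eq_empty]
  have h4 : (univ : Finset (Finset V)).card = 2 ^ Fintype.card V := by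
    rw [card_univ, Fintype.card_finset]
  rw [h3, card_singleton] at h2
  omega

lemma count_singletons {V : Type*} [Fintype V] (p : Finset V → Prop)
    (hp : ∀ C, p C ↔ ∃ v, C = {v}) :
    {C : Finset V | p C}.ncard = Fintype.card V := by
  classical
  have e : {C : Finset V | p C} =
      ↑((univ : Finset V).image fun v : V => ({v} : Finset V)) := by
    ext C
    simp only [Set.mem_setOf_eq, coe_image, coe_univ, Set.image_univ, Set.mem_range, hp]
    exact ⟨fun ⟨v, h⟩ => ⟨v, h.symm⟩, fun ⟨v, h⟩ => ⟨v, h.symm⟩⟩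
  rw [e, Set.ncard_coe_finset,
    card_image_of_injective _ Finset.singleton_injective, card_univ]


/-- Equality case of the stable set/clique trade-off: for a graph on `n ≥ 1` vertices,
`|𝒞| * |𝒮| = n * (2 ^ n - 1)` holds iff `G` is complete or `G` has no edges. -/
theorem stable_clique_tradeoff_eq_iff {V : Type*} [Fintype V] (G : SimpleGraph V)
    (hn : 1 ≤ Fintype.card V) :
    {C : Finset V | C.Nonempty ∧ G.IsClique (C : Set V)}.ncard *
        {S : Finset V | S.Nonempty ∧ (S : Set V).Pairwise fun x y => ¬ G.Adj x y}.ncard =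
        Fintype.card V * (2 ^ Fintype.card V - 1) ↔
      G = ⊤ ∨ G = ⊥ := by
  constructor
  · intro h
    by_contra hcon
    push_neg at hcon
    have hlt := main_lt G hcon.1 hcon.2
    rw [h] at hlt
    have heq : Fintype.card V * (2 ^ Fintype.card V - 1)
        = Fintype.card V * 2 ^ Fintype.card V - Fintype.card V := by
      rw [Nat.mul_sub, mul_one]
    omega
  · intro h

    rcases h with rfl | rfl
    · rw [count_all (fun C : Finset V => C.Nonempty ∧ (⊤ : SimpleGraph V).IsClique (C : Set V))
        (fun C => by
          rw [and_iff_left_iff_imp]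
          intro _ a _ b _ hab
          simpa using hab)]
      rw [count_singletons
        (fun S : Finset V => S.Nonempty ∧ (S : Set V).Pairwise fun x y =>
          ¬ (⊤ : SimpleGraph V).Adj x y)
        (fun S => by
          constructor
          · rintro ⟨⟨v, hv⟩, hpw⟩
            refine ⟨v, Finset.eq_singleton_iff_unique_mem.mpr ⟨hv, fun u hu => ?_⟩⟩
            by_contra hne
            exact hpw (Finset.mem_coe.mpr hu) (Finset.mem_coe.mpr hv) hne (by simpa using hne)
          · rintro ⟨v, rfl⟩
            refine ⟨⟨v, mem_singleton_self v⟩, ?_⟩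
            rw [coe_singleton]
            exact Set.pairwise_singleton v _)]
      exact mul_comm _ _
    · rw [count_singletons
        (fun C : Finset V => C.Nonempty ∧ (⊥ : SimpleGraph V).IsClique (C : Set V))
        (fun C => by
          constructor
          · rintro ⟨⟨v, hv⟩, hcl⟩
            refine ⟨v, Finset.eq_singleton_iff_unique_mem.mpr ⟨hv, fun u hu => ?_⟩⟩
            by_contra hne
            have := hcl (Finset.mem_coe.mpr hu) (Finset.mem_coe.mpr hv) hne
            simpa using this
          · rintro ⟨v, rfl⟩
            refine ⟨⟨v, mem_singleton_self v⟩, ?_⟩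
            rw [coe_singleton]
            exact Set.pairwise_singleton v _)]
      rw [count_all
        (fun S : Finset V => S.Nonempty ∧ (S : Set V).Pairwise fun x y =>
          ¬ (⊥ : SimpleGraph V).Adj x y)
        (fun S => by
          rw [and_iff_left_iff_imp]
          intro _ a _ b _ hab hadj
          simpa using hadj)]
end

section
/- Let G be a finite simple graph on n vertices, let 𝒞' be the family of all (possibly empty) cliques of G and 𝒮' the family of all (possibly empty) stable sets of G. Then |𝒞'| · |𝒮'| ≤ (n + 1)·2^n. -/
open Finset

section StableClique

attribute [local instance] Classical.propDecidable

variable {V : Type*} [Fintype V] [DecidableEq V] (G : SimpleGraph V)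

private def IsStab (S : Finset V) : Prop := (S : Set V).Pairwise fun x y => ¬ G.Adj x y

private noncomputable def goodPairs : Finset (Finset V × Finset V) :=
  (univ.filter fun C : Finset V => G.IsClique (C : Set V)) ×ˢ
    (univ.filter fun S : Finset V => IsStab G S)

private noncomputable def fib (U : Finset V) : Finset (Finset V × Finset V) :=
  (goodPairs G).filter fun p => p.1 ∪ p.2 = U

private lemma mem_fib {U : Finset V} {p : Finset V × Finset V} :
    p ∈ fib G U ↔ G.IsClique (p.1 : Set V) ∧ IsStab G p.2 ∧ p.1 ∪ p.2 = U := by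
  simp [fib, goodPairs, Finset.mem_filter, Finset.mem_product, and_assoc]

private lemma cond_unique {U' : Finset V} {x : V} (hx : x ∉ U')
    {p q : Finset V × Finset V} (hp : p ∈ fib G U') (hq : q ∈ fib G U')
    (hpC : G.IsClique ((insert x p.1 : Finset V) : Set V))
    (hpS : IsStab G (insert x p.2))
    (hqC : G.IsClique ((insert x q.1 : Finset V) : Set V))
    (hqS : IsStab G (insert x q.2)) : p = q := by
  rw [mem_fib] at hp hq
  obtain ⟨hp1, hp2, hpU⟩ := hp
  obtain ⟨hq1, hq2, hqU⟩ := hq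
  have key : ∀ C₁ S₁ C₂ S₂ : Finset V, C₁ ∪ S₁ = U' → C₂ ∪ S₂ = U' →
      G.IsClique ((insert x C₁ : Finset V) : Set V) → IsStab G (insert x S₂) → C₁ ⊆ C₂ := by
    intro C₁ S₁ C₂ S₂ h1 h2 hC hS u hu
    by_contra hu2
    have huU : u ∈ U' := by rw [← h1]; exact mem_union_left _ hu
    have hux : u ≠ x := fun h => hx (h ▸ huU)
    have huS : u ∈ S₂ := by
      have h3 : u ∈ C₂ ∪ S₂ := by rw [h2]; exact huU
      rcases mem_union.1 h3 with h | h
      · exact absurd h hu2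
      · exact h
    have hadj : G.Adj u x := hC (by simp [hu]) (by simp) hux
    have hnadj : ¬ G.Adj u x := hS (by simp [huS]) (by simp) hux
    exact hnadj hadj
  have keyS : ∀ C₁ S₁ C₂ S₂ : Finset V, C₁ ∪ S₁ = U' → C₂ ∪ S₂ = U' →
      IsStab G (insert x S₁) → G.IsClique ((insert x C₂ : Finset V) : Set V) → S₁ ⊆ S₂ := by
    intro C₁ S₁ C₂ S₂ h1 h2 hS hC u hu
    by_contra hu2
    have huU : u ∈ U' := by rw [← h1]; exact mem_union_right _ hu
    have hux : u ≠ x := fun h => hx (h ▸ huU)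
    have huC : u ∈ C₂ := by
      have h3 : u ∈ C₂ ∪ S₂ := by rw [h2]; exact huU
      rcases mem_union.1 h3 with h | h
      · exact h
      · exact absurd h hu2
    have hadj : G.Adj u x := hC (by simp [huC]) (by simp) hux
    have hnadj : ¬ G.Adj u x := hS (by simp [hu]) (by simp) hux
    exact hnadj hadj
  have e1 : p.1 = q.1 :=
    subset_antisymm (key _ _ _ _ hpU hqU hpC hqS) (key _ _ _ _ hqU hpU hqC hpS)
  have e2 : p.2 = q.2 :=
    subset_antisymm (keyS _ _ _ _ hpU hqU hpS hqC) (keyS _ _ _ _ hqU hpU hqS hpC)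
  exact Prod.ext e1 e2

private lemma fib_card_le (U : Finset V) : (fib G U).card ≤ 2 * U.card + 1 := by
  induction U using Finset.strongInduction with
  | _ U ih =>
  rcases U.eq_empty_or_nonempty with rfl | ⟨x, hx⟩
  · have hsub : fib G ∅ ⊆ {(∅, ∅)} := by
      intro p hp
      rw [mem_fib] at hp
      have h := hp.2.2
      rw [Finset.union_eq_empty] at h
      rw [Finset.mem_singleton]
      exact Prod.ext h.1 h.2
    simpa using card_le_card hsub
  · have hxU' : x ∉ U.erase x := notMem_erase x U
    have ihU' : (fib G (U.erase x)).card ≤ 2 * (U.erase x).card + 1 :=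
      ih (U.erase x) (erase_ssubset hx)
    set A := (fib G U).filter (fun p => x ∈ p.1 ∧ x ∉ p.2) with hA
    set B := (fib G U).filter (fun p => x ∉ p.1 ∧ x ∈ p.2) with hB
    set D := (fib G U).filter (fun p => x ∈ p.1 ∧ x ∈ p.2) with hD
    set ia := A.image (fun p : Finset V × Finset V => (p.1.erase x, p.2)) with hia
    set ib := B.image (fun p : Finset V × Finset V => (p.1, p.2.erase x)) with hib
    set idd := D.image (fun p : Finset V × Finset V => (p.1.erase x, p.2.erase x)) with hid
    -- fiber splits into A, B, D
    have hsplit : fib G U ⊆ A ∪ B ∪ D := by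
      intro p hp
      have hxU : x ∈ p.1 ∪ p.2 := by rw [(mem_fib G).1 hp |>.2.2]; exact hx
      simp only [hA, hB, hD, mem_union, mem_filter]
      rcases mem_union.1 hxU with h | h <;> by_cases h2 : x ∈ p.2 <;> tauto
    -- cardinalities via injective images
    have cardA : A.card = ia.card := by
      rw [hia]
      refine (card_image_of_injOn ?_).symm
      intro p hp q hq h
      simp only [Prod.mk.injEq] at h
      have hxp := (mem_filter.1 hp).2.1
      have hxq := (mem_filter.1 hq).2.1
      have h1 : p.1 = q.1 := by rw [← insert_erase hxp, h.1, insert_erase hxq]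
      exact Prod.ext h1 h.2
    have cardB : B.card = ib.card := by
      rw [hib]
      refine (card_image_of_injOn ?_).symm
      intro p hp q hq h
      simp only [Prod.mk.injEq] at h
      have hxp := (mem_filter.1 hp).2.2
      have hxq := (mem_filter.1 hq).2.2
      have h2 : p.2 = q.2 := by rw [← insert_erase hxp, h.2, insert_erase hxq]
      exact Prod.ext h.1 h2
    have cardD : D.card = idd.card := by
      rw [hid]
      refine (card_image_of_injOn ?_).symm
      intro p hp q hq h
      simp only [Prod.mk.injEq] at h
      have hxp := (mem_filter.1 hp).2
      have hxq := (mem_filter.1 hq).2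
      have h1 : p.1 = q.1 := by rw [← insert_erase hxp.1, h.1, insert_erase hxq.1]
      have h2 : p.2 = q.2 := by rw [← insert_erase hxp.2, h.2, insert_erase hxq.2]
      exact Prod.ext h1 h2
    -- images live in the fiber over U.erase x
    have hmemA : ∀ p ∈ A, G.IsClique (p.1 : Set V) ∧ IsStab G p.2 ∧ p.1 ∪ p.2 = U
        ∧ x ∈ p.1 ∧ x ∉ p.2 := by
      intro p hp
      have h1 := (mem_fib G).1 (mem_of_mem_filter p hp)
      have h2 := (mem_filter.1 hp).2
      tauto
    have hmemB : ∀ p ∈ B, G.IsClique (p.1 : Set V) ∧ IsStab G p.2 ∧ p.1 ∪ p.2 = U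
        ∧ x ∉ p.1 ∧ x ∈ p.2 := by
      intro p hp
      have h1 := (mem_fib G).1 (mem_of_mem_filter p hp)
      have h2 := (mem_filter.1 hp).2
      tauto
    have hmemD : ∀ p ∈ D, G.IsClique (p.1 : Set V) ∧ IsStab G p.2 ∧ p.1 ∪ p.2 = U
        ∧ x ∈ p.1 ∧ x ∈ p.2 := by
      intro p hp
      have h1 := (mem_fib G).1 (mem_of_mem_filter p hp)
      have h2 := (mem_filter.1 hp).2
      tauto
    have hia_sub : ia ⊆ fib G (U.erase x) := by
      intro r hr
      obtain ⟨p, hp, rfl⟩ := mem_image.1 hr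
      obtain ⟨hc, hs, hu, hx1, hx2⟩ := hmemA p hp
      rw [mem_fib]
      refine ⟨hc.subset (by exact_mod_cast erase_subset x p.1), hs, ?_⟩
      rw [← hu, erase_union_distrib, erase_eq_of_notMem hx2]
    have hib_sub : ib ⊆ fib G (U.erase x) := by
      intro r hr
      obtain ⟨p, hp, rfl⟩ := mem_image.1 hr
      obtain ⟨hc, hs, hu, hx1, hx2⟩ := hmemB p hp
      rw [mem_fib]
      refine ⟨hc, fun a ha b hb hab => hs (by exact Finset.mem_coe.2 (mem_of_mem_erase (Finset.mem_coe.1 ha))) (by exact Finset.mem_coe.2 (mem_of_mem_erase (Finset.mem_coe.1 hb))) hab, ?_⟩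
      rw [← hu, erase_union_distrib, erase_eq_of_notMem hx1]
    have hidd_sub : idd ⊆ fib G (U.erase x) := by
      intro r hr
      obtain ⟨p, hp, rfl⟩ := mem_image.1 hr
      obtain ⟨hc, hs, hu, hx1, hx2⟩ := hmemD p hp
      rw [mem_fib]
      refine ⟨hc.subset (by exact_mod_cast erase_subset x p.1),
        fun a ha b hb hab => hs (by exact Finset.mem_coe.2 (mem_of_mem_erase (Finset.mem_coe.1 ha))) (by exact Finset.mem_coe.2 (mem_of_mem_erase (Finset.mem_coe.1 hb))) hab, ?_⟩
      rw [← hu, erase_union_distrib]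
    -- conditions satisfied on the images
    have hcondC_ia : ∀ r ∈ ia, G.IsClique ((insert x r.1 : Finset V) : Set V) := by
      intro r hr
      obtain ⟨p, hp, rfl⟩ := mem_image.1 hr
      obtain ⟨hc, hs, hu, hx1, hx2⟩ := hmemA p hp
      rw [insert_erase hx1]; exact hc
    have hcondS_ib : ∀ r ∈ ib, IsStab G (insert x r.2) := by
      intro r hr
      obtain ⟨p, hp, rfl⟩ := mem_image.1 hr
      obtain ⟨hc, hs, hu, hx1, hx2⟩ := hmemB p hp
      rw [insert_erase hx2]; exact hs
    have hcondC_idd : ∀ r ∈ idd, G.IsClique ((insert x r.1 : Finset V) : Set V) := by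
      intro r hr
      obtain ⟨p, hp, rfl⟩ := mem_image.1 hr
      obtain ⟨hc, hs, hu, hx1, hx2⟩ := hmemD p hp
      rw [insert_erase hx1]; exact hc
    have hcondS_idd : ∀ r ∈ idd, IsStab G (insert x r.2) := by
      intro r hr
      obtain ⟨p, hp, rfl⟩ := mem_image.1 hr
      obtain ⟨hc, hs, hu, hx1, hx2⟩ := hmemD p hp
      rw [insert_erase hx2]; exact hs
    have hcondS_ia : ∀ r ∈ ia, IsStab G r.2 ∧ x ∉ r.2 := by
      intro r hr
      obtain ⟨p, hp, rfl⟩ := mem_image.1 hr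
      obtain ⟨hc, hs, hu, hx1, hx2⟩ := hmemA p hp
      exact ⟨hs, hx2⟩
    have hcondC_ib : ∀ r ∈ ib, G.IsClique (r.1 : Set V) ∧ x ∉ r.1 := by
      intro r hr
      obtain ⟨p, hp, rfl⟩ := mem_image.1 hr
      obtain ⟨hc, hs, hu, hx1, hx2⟩ := hmemB p hp
      exact ⟨hc, hx1⟩
    -- the two intersections have at most one element
    have hint1 : (ia ∩ ib).card ≤ 1 := by
      refine card_le_one.2 fun p hp q hq => ?_
      have hpa := mem_of_mem_inter_left hp
      have hpb := mem_of_mem_inter_right hp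
      have hqa := mem_of_mem_inter_left hq
      have hqb := mem_of_mem_inter_right hq
      exact cond_unique G hxU' (hia_sub hpa) (hia_sub hqa)
        (hcondC_ia p hpa) (hcondS_ib p hpb) (hcondC_ia q hqa) (hcondS_ib q hqb)
    have hint2 : ((ia ∪ ib) ∩ idd).card ≤ 1 := by
      refine card_le_one.2 fun p hp q hq => ?_
      have hpd := mem_of_mem_inter_right hp
      have hqd := mem_of_mem_inter_right hq
      exact cond_unique G hxU' (hidd_sub hpd) (hidd_sub hqd)
        (hcondC_idd p hpd) (hcondS_idd p hpd) (hcondC_idd q hqd) (hcondS_idd q hqd)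
    -- put everything together
    have hUpos : 1 ≤ U.card := card_pos.2 ⟨x, hx⟩
    have hUcard : (U.erase x).card = U.card - 1 := card_erase_of_mem hx
    have e0 : (fib G U).card ≤ A.card + B.card + D.card :=
      (card_le_card hsplit).trans
        ((card_union_le _ _).trans (Nat.add_le_add_right (card_union_le _ _) _))
    have e1 : (ia ∪ ib).card + (ia ∩ ib).card = ia.card + ib.card :=
      card_union_add_card_inter _ _
    have e2 : ((ia ∪ ib) ∪ idd).card + ((ia ∪ ib) ∩ idd).card = (ia ∪ ib).card + idd.card :=
      card_union_add_card_inter _ _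
    have e3 : ((ia ∪ ib) ∪ idd).card ≤ (fib G (U.erase x)).card :=
      card_le_card (union_subset (union_subset hia_sub hib_sub) hidd_sub)
    omega

private lemma sum_aux (s : Finset V) :
    ∑ U ∈ s.powerset, (2 * U.card + 1) = (s.card + 1) * 2 ^ s.card := by
  induction s using Finset.induction with
  | empty => simp
  | insert _ _ ha ih =>
    rename_i a s
    rw [Finset.sum_powerset_insert ha]
    have h2 : ∑ U ∈ s.powerset, (2 * (insert a U).card + 1)
        = ∑ U ∈ s.powerset, ((2 * U.card + 1) + 2) := by
      refine Finset.sum_congr rfl fun t ht => ?_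
      have hat : a ∉ t := fun h => ha ((mem_powerset.1 ht) h)
      rw [card_insert_of_notMem hat]
      ring
    have h3 : ∑ U ∈ s.powerset, ((2 * U.card + 1) + 2)
        = (∑ U ∈ s.powerset, (2 * U.card + 1)) + ∑ _U ∈ s.powerset, 2 :=
      Finset.sum_add_distrib
    rw [h2, h3, ih, Finset.sum_const, card_powerset, smul_eq_mul,
      card_insert_of_notMem ha, pow_succ]
    ring

end StableClique

/-- For a finite simple graph `G` on `n` vertices, the number of (possibly empty) cliques
times the number of (possibly empty) stable sets is at most `(n + 1) * 2 ^ n`. -/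
theorem stable_clique_tradeoff' {V : Type*} [Fintype V] (G : SimpleGraph V) :
    {C : Finset V | G.IsClique (C : Set V)}.ncard *
      {S : Finset V | (S : Set V).Pairwise fun x y => ¬ G.Adj x y}.ncard ≤
      (Fintype.card V + 1) * 2 ^ Fintype.card V := by
  classical
  have h1 : {C : Finset V | G.IsClique (C : Set V)}
      = ↑(univ.filter fun C : Finset V => G.IsClique (C : Set V)) := by
    ext C; simp
  have h2 : {S : Finset V | (S : Set V).Pairwise fun x y => ¬ G.Adj x y}
      = ↑(univ.filter fun S : Finset V => IsStab G S) := by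
    ext S; rw [Finset.mem_coe, Finset.mem_filter]; simp [IsStab]
  rw [h1, h2, Set.ncard_coe_finset, Set.ncard_coe_finset, ← Finset.card_product]
  have hfib : (goodPairs G).card = ∑ U ∈ (univ : Finset V).powerset, (fib G U).card :=
    Finset.card_eq_sum_card_fiberwise
      (f := fun p : Finset V × Finset V => p.1 ∪ p.2)
      (fun p _ => mem_powerset.2 (subset_univ _))
  calc ((univ.filter fun C : Finset V => G.IsClique (C : Set V)) ×ˢ
        (univ.filter fun S : Finset V => IsStab G S)).card
      = ∑ U ∈ (univ : Finset V).powerset, (fib G U).card := hfib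
    _ ≤ ∑ U ∈ (univ : Finset V).powerset, (2 * U.card + 1) :=
        Finset.sum_le_sum fun U _ => fib_card_le G U
    _ = ((univ : Finset V).card + 1) * 2 ^ (univ : Finset V).card := sum_aux _
    _ = (Fintype.card V + 1) * 2 ^ Fintype.card V := by rw [card_univ]
end

section
/- Let G be a finite simple graph on n ≥ 1 vertices, let 𝒞' be the family of all (possibly empty) cliques of G and 𝒮' the family of all (possibly empty) stable sets of G. Then |𝒞'| · |𝒮'| = (n + 1)·2^n holds if and only if G is a complete graph or G has no edges (i.e., the complement of G is complete). -/
open Finset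

set_option linter.unusedSectionVars false

namespace SCAux

variable {V : Type*} [DecidableEq V]

/-- subsets of `s` of size ≤ 1 -/
def small (s : Finset V) : Finset (Finset V) := insert ∅ (s.image ({·}))

lemma mem_small {s : Finset V} {A : Finset V} :
    A ∈ small s ↔ A ⊆ s ∧ A.card ≤ 1 := by
  simp only [small, mem_insert, mem_image]
  constructor
  · rintro (rfl | ⟨a, ha, rfl⟩)
    · simp
    · simp [ha]
  · rintro ⟨hsub, hcard⟩
    interval_cases h : A.card
    · exact Or.inl (card_eq_zero.mp h)
    · obtain ⟨a, rfl⟩ := card_eq_one.mp h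
      exact Or.inr ⟨a, by simpa using hsub, rfl⟩

lemma card_small (s : Finset V) : (small s).card = s.card + 1 := by
  rw [small, card_insert_of_notMem, card_image_of_injective _ (fun a b h => by
    simpa using h)]
  simp only [mem_image]
  rintro ⟨a, _, h⟩
  exact (singleton_ne_empty a) h

/-- Pure combinatorial lemma: a family of subsets of `T` whose members pairwise
differ by at most one element (in each direction) has at most `T.card + 1` members. -/
lemma family_card_le {T : Finset V} {F : Finset (Finset V)}
    (hT : ∀ X ∈ F, X ⊆ T)
    (h : ∀ X ∈ F, ∀ Y ∈ F, (X \ Y).card ≤ 1) :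
    F.card ≤ T.card + 1 := by
  rcases F.eq_empty_or_nonempty with rfl | hne
  · simp
  obtain ⟨M, hM, hMmax⟩ := F.exists_max_image Finset.card hne
  -- every member not contained in M has a canonical form
  have key : ∀ X ∈ F, ¬ X ⊆ M →
      ∃ c ∈ M, ∃ x ∈ T \ M, M \ X = {c} ∧ X \ M = {x} := by
    intro X hX hXM
    have h1 : (X \ M).card ≤ 1 := h X hX M hM
    have h2 : (M \ X).card ≤ 1 := h M hM X hX
    have hXMne : (X \ M).Nonempty := by
      rw [sdiff_nonempty]; exact hXM
    obtain ⟨x, hx⟩ := card_eq_one.mp (le_antisymm h1 hXMne.card_pos)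
    have hMXne : (M \ X).Nonempty := by
      rw [sdiff_nonempty]
      intro hMX
      have : M.card < X.card := by
        have hxX : x ∈ X := by
          have := hx ▸ (mem_singleton_self x); exact (mem_sdiff.mp this).1
        have hxM : x ∉ M := by
          have := hx ▸ (mem_singleton_self x); exact (mem_sdiff.mp this).2
        calc M.card < (insert x M).card := by rw [card_insert_of_notMem hxM]; omega
        _ ≤ X.card := card_le_card (insert_subset hxX hMX)
      exact absurd (hMmax X hX) (by omega)
    obtain ⟨c, hc⟩ := card_eq_one.mp (le_antisymm h2 hMXne.card_pos)
    refine ⟨c, ?_, x, ?_, hc, hx⟩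
    · have := hc ▸ mem_singleton_self c; exact (mem_sdiff.mp this).1
    · have := hx ▸ mem_singleton_self x
      rw [mem_sdiff] at this ⊢
      exact ⟨hT X hX this.1, this.2⟩
  -- canonical form determines the set
  have form : ∀ X, X ⊆ T → ∀ c x, M \ X = {c} → X \ M = {x} →
      X = insert x (M.erase c) := by
    intro X hXT c x hc hx
    ext a
    simp only [mem_insert, mem_erase]
    constructor
    · intro haX
      by_cases haM : a ∈ M
      · refine Or.inr ⟨?_, haM⟩
        intro hacEq
        have hcnot : c ∉ X := by
          have : c ∈ M \ X := by rw [hc]; exact mem_singleton_self c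
          exact (mem_sdiff.mp this).2
        exact hcnot (hacEq ▸ haX)
      · left
        have : a ∈ X \ M := mem_sdiff.mpr ⟨haX, haM⟩
        rw [hx, mem_singleton] at this; exact this
    · rintro (rfl | ⟨hac, haM⟩)
      · have : a ∈ X \ M := hx ▸ mem_singleton_self a
        exact (mem_sdiff.mp this).1
      · by_contra haX
        have : a ∈ M \ X := mem_sdiff.mpr ⟨haM, haX⟩
        rw [hc, mem_singleton] at this; exact hac this
  -- cross constraint between two non-subsets
  have cross : ∀ X ∈ F, ∀ X' ∈ F, ∀ c x c' x',
      M \ X = {c} → X \ M = {x} → M \ X' = {c'} → X' \ M = {x'} →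
      c ≠ c' → x = x' := by
    intro X hX X' hX' c x c' x' hc hx hc' hx' hcc
    by_contra hxx
    have hcM : c ∈ M := by have := hc ▸ mem_singleton_self c; exact (mem_sdiff.mp this).1
    have hc'M : c' ∈ M := by have := hc' ▸ mem_singleton_self c'; exact (mem_sdiff.mp this).1
    have hxX : x ∈ X ∧ x ∉ M := by
      have := hx ▸ mem_singleton_self x; exact mem_sdiff.mp this
    have hx'X : x' ∈ X' ∧ x' ∉ M := by
      have := hx' ▸ mem_singleton_self x'; exact mem_sdiff.mp this
    have hsub : {x, c'} ⊆ X \ X' := by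
      intro a ha
      rcases mem_insert.mp ha with rfl | ha
      · refine mem_sdiff.mpr ⟨hxX.1, fun haX' => ?_⟩
        rcases mem_sdiff.mp (mem_sdiff.mpr ⟨haX', (hxX.2 : a ∉ M)⟩) with _
        have : a ∈ X' \ M := mem_sdiff.mpr ⟨haX', hxX.2⟩
        rw [hx', mem_singleton] at this; exact hxx this
      · rw [mem_singleton] at ha; subst ha
        refine mem_sdiff.mpr ⟨?_, ?_⟩
        · by_contra haX
          have : a ∈ M \ X := mem_sdiff.mpr ⟨hc'M, haX⟩
          rw [hc, mem_singleton] at this; exact hcc.symm this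
        · have : a ∈ M \ X' := hc' ▸ mem_singleton_self a
          exact (mem_sdiff.mp this).2
    have : ({x, c'} : Finset V).card ≤ 1 := le_trans (card_le_card hsub) (h X hX X' hX')
    rw [card_insert_of_notMem (by simp only [mem_singleton]; rintro rfl; exact hxX.2 hc'M),
      card_singleton] at this
    omega
  -- constraint between a subset of M and a non-subset
  have bcon : ∀ X ∈ F, ∀ X'' ∈ F, ∀ c x c'',
      M \ X = {c} → X \ M = {x} → X'' ⊆ M → M \ X'' = {c''} → c'' = c := by
    intro X hX X'' hX'' c x c'' hc hx hsubM hc''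
    by_contra hcc
    have hc''M : c'' ∈ M := by
      have := hc'' ▸ mem_singleton_self c''; exact (mem_sdiff.mp this).1
    have hxX : x ∈ X ∧ x ∉ M := by
      have := hx ▸ mem_singleton_self x; exact mem_sdiff.mp this
    have hsub : {x, c''} ⊆ X \ X'' := by
      intro a ha
      rcases mem_insert.mp ha with rfl | ha
      · exact mem_sdiff.mpr ⟨hxX.1, fun haX'' => hxX.2 (hsubM haX'')⟩
      · rw [mem_singleton] at ha; subst ha
        refine mem_sdiff.mpr ⟨?_, ?_⟩
        · by_contra haX
          have : a ∈ M \ X := mem_sdiff.mpr ⟨hc''M, haX⟩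
          rw [hc, mem_singleton] at this; exact hcc this
        · have : a ∈ M \ X'' := hc'' ▸ mem_singleton_self a
          exact (mem_sdiff.mp this).2
    have : ({x, c''} : Finset V).card ≤ 1 := le_trans (card_le_card hsub) (h X hX X'' hX'')
    rw [card_insert_of_notMem (by simp only [mem_singleton]; rintro rfl; exact hxX.2 hc''M),
      card_singleton] at this
    omega
  have subM_form : ∀ X, X ⊆ M → ∀ c'', M \ X = {c''} → X = M.erase c'' := by
    intro X hXM c'' hc''
    have h1 : M \ (M \ X) = M \ ({c''} : Finset V) := by rw [hc'']
    rwa [sdiff_sdiff_self_left, inter_eq_right.mpr hXM, sdiff_singleton_eq_erase] at h1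
  by_cases hall : ∀ X ∈ F, X ⊆ M
  -- all members inside M
  · have : F.card ≤ (small M).card := by
      apply card_le_card_of_injOn (fun X => M \ X)
      · intro X hX
        rw [mem_coe, mem_small]
        exact ⟨sdiff_subset, h M hM X hX⟩
      · intro X hX Y hY hXY
        simp only at hXY
        have : M \ (M \ X) = M \ (M \ Y) := by rw [hXY]
        rwa [sdiff_sdiff_self_left, sdiff_sdiff_self_left,
          inter_eq_right.mpr (hall X hX), inter_eq_right.mpr (hall Y hY)] at this
    calc F.card ≤ (small M).card := this
    _ = M.card + 1 := card_small M
    _ ≤ T.card + 1 := by have := card_le_card (hT M hM); omega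
  · push_neg at hall
    obtain ⟨X₀, hX₀, hX₀M⟩ := hall
    obtain ⟨c₀, hc₀M, x₀, hx₀, hc₀, hx₀'⟩ := key X₀ hX₀ hX₀M
    by_cases hsame : ∀ X ∈ F, ¬ X ⊆ M → M \ X = {c₀}
    -- all non-subsets of M share the missing element c₀
    · have hFsub : F ⊆ insert M (insert (M.erase c₀)
          ((T \ M).image fun x => insert x (M.erase c₀))) := by
        intro X hX
        simp only [mem_insert, mem_image]
        by_cases hXM : X ⊆ M
        · rcases eq_empty_or_nonempty (M \ X) with hMX | hMX
          · left
            exact Subset.antisymm hXM (by rwa [← sdiff_eq_empty_iff_subset])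
          · obtain ⟨c'', hc''⟩ := card_eq_one.mp
              (le_antisymm (h M hM X hX) hMX.card_pos)
            have hcc : c'' = c₀ := bcon X₀ hX₀ X hX c₀ x₀ c'' hc₀ hx₀' hXM hc''
            subst hcc
            exact Or.inr (Or.inl (subM_form X hXM c'' hc''))
        · right; right
          obtain ⟨c, hcM, x, hx, hc, hx'⟩ := key X hX hXM
          have hcc : c = c₀ := by
            have h2 := hsame X hX hXM
            rw [hc] at h2
            simpa using h2
          subst hcc
          exact ⟨x, hx, (form X (hT X hX) c x hc hx').symm⟩
      have hMcard : 1 ≤ M.card := card_pos.mpr ⟨c₀, hc₀M⟩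
      have hMT : M.card ≤ T.card := card_le_card (hT M hM)
      calc F.card ≤ (insert M (insert (M.erase c₀)
            ((T \ M).image fun x => insert x (M.erase c₀)))).card := card_le_card hFsub
      _ ≤ (insert (M.erase c₀) ((T \ M).image fun x => insert x (M.erase c₀))).card + 1 :=
          card_insert_le _ _
      _ ≤ (((T \ M).image fun x => insert x (M.erase c₀)).card + 1) + 1 := by
          have := card_insert_le (M.erase c₀)
            ((T \ M).image fun x => insert x (M.erase c₀))
          omega
      _ ≤ ((T \ M).card + 1) + 1 := by
          have := card_image_le (s := T \ M) (f := fun x => insert x (M.erase c₀))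
          omega
      _ ≤ T.card + 1 := by
          rw [card_sdiff_of_subset (hT M hM)]
          omega
    -- two different missing elements: all non-subsets share the same added element x₀
    · push_neg at hsame
      obtain ⟨X₁, hX₁, hX₁M, hX₁c⟩ := hsame
      obtain ⟨c₁, hc₁M, x₁, hx₁, hc₁, hx₁'⟩ := key X₁ hX₁ hX₁M
      have hc01 : c₀ ≠ c₁ := by
        rintro rfl
        exact hX₁c hc₁
      have hx01 : x₀ = x₁ := cross X₀ hX₀ X₁ hX₁ c₀ x₀ c₁ x₁ hc₀ hx₀' hc₁ hx₁' hc01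
      have hFsub : F ⊆ insert M (M.image fun c => insert x₀ (M.erase c)) := by
        intro X hX
        simp only [mem_insert, mem_image]
        by_cases hXM : X ⊆ M
        · rcases eq_empty_or_nonempty (M \ X) with hMX | hMX
          · left
            exact Subset.antisymm hXM (by rwa [← sdiff_eq_empty_iff_subset])
          · obtain ⟨c'', hc''⟩ := card_eq_one.mp
              (le_antisymm (h M hM X hX) hMX.card_pos)
            have e0 : c'' = c₀ := bcon X₀ hX₀ X hX c₀ x₀ c'' hc₀ hx₀' hXM hc''
            have e1 : c'' = c₁ := bcon X₁ hX₁ X hX c₁ x₁ c'' hc₁ hx₁' hXM hc''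
            exact absurd (e0 ▸ e1) hc01
        · right
          obtain ⟨c, hcM, x, hx, hc, hx'⟩ := key X hX hXM
          refine ⟨c, hcM, ?_⟩
          have hxx0 : x = x₀ := by
            by_cases hcc0 : c = c₀
            · subst hcc0
              have : x = x₁ := cross X hX X₁ hX₁ c x c₁ x₁ hc hx' hc₁ hx₁'
                (by rintro rfl; exact hc01 rfl)
              rw [this, hx01]
            · exact cross X hX X₀ hX₀ c x c₀ x₀ hc hx' hc₀ hx₀' hcc0
          rw [← hxx0]
          exact (form X (hT X hX) c x hc hx').symm
      calc F.card ≤ (insert M (M.image fun c => insert x₀ (M.erase c))).card :=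
          card_le_card hFsub
      _ ≤ (M.image fun c => insert x₀ (M.erase c)).card + 1 := card_insert_le _ _
      _ ≤ M.card + 1 := by have := card_image_le (s := M) (f := fun c => insert x₀ (M.erase c)); omega
      _ ≤ T.card + 1 := by have := card_le_card (hT M hM); omega

open SimpleGraph

variable [Fintype V]

open scoped Classical in
/-- the family of all (possibly empty) cliques of `G`, as a `Finset` -/
noncomputable def cfam (G : SimpleGraph V) : Finset (Finset V) :=
  Finset.univ.filter fun C => G.IsClique (C : Set V)

lemma mem_cfam {G : SimpleGraph V} {C : Finset V} :
    C ∈ cfam G ↔ G.IsClique (C : Set V) := by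
  simp [cfam]

lemma clique_and_stable {G : SimpleGraph V} {A : Finset V}
    (h1 : G.IsClique (A : Set V)) (h2 : Gᶜ.IsClique (A : Set V)) : A.card ≤ 1 := by
  rw [card_le_one]
  intro a ha b hb
  by_contra hab
  have hadj := h1 (by simpa using ha) (by simpa using hb) hab
  have hnadj := h2 (by simpa using ha) (by simpa using hb) hab
  exact hnadj.2 hadj

lemma card_filter_mem_le (G : SimpleGraph V) [DecidableRel G.Adj] (v : V) :
    ((cfam G).filter fun C => v ∈ C).card ≤ 2 ^ G.degree v := by
  have : ((cfam G).filter fun C => v ∈ C).card ≤ (G.neighborFinset v).powerset.card := by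
    apply card_le_card_of_injOn (fun C => C.erase v)
    · intro C hC
      rw [mem_coe, mem_filter] at hC
      simp only [mem_coe, mem_powerset]
      intro a ha
      rw [mem_erase] at ha
      rw [mem_neighborFinset]
      exact (mem_cfam.mp hC.1) (by simpa using hC.2) (by simpa using ha.2) (Ne.symm ha.1)
    · intro C hC D hD hCD
      simp only [coe_filter, Set.mem_setOf_eq] at hC hD
      simp only at hCD
      rw [← insert_erase hC.2, ← insert_erase hD.2, hCD]
  rwa [card_powerset, card_neighborFinset_eq_degree] at this

lemma clique_of_card_filter_eq {G : SimpleGraph V} [DecidableRel G.Adj] {v : V}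
    (h : ((cfam G).filter fun C => v ∈ C).card = 2 ^ G.degree v) :
    ∀ x y, G.Adj v x → G.Adj v y → x ≠ y → G.Adj x y := by
  have hsurj := Finset.surj_on_of_inj_on_of_card_le
    (s := (cfam G).filter fun C => v ∈ C) (t := (G.neighborFinset v).powerset)
    (fun C _ => C.erase v) ?_ ?_ ?_
  · obtain ⟨C, hC, hCe⟩ := hsurj (G.neighborFinset v) (mem_powerset_self _)
    rw [mem_filter] at hC
    intro x y hx hy hxy
    have hxC : x ∈ C := by
      have : x ∈ C.erase v := by rw [← hCe, mem_neighborFinset]; exact hx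
      exact (mem_erase.mp this).2
    have hyC : y ∈ C := by
      have : y ∈ C.erase v := by rw [← hCe, mem_neighborFinset]; exact hy
      exact (mem_erase.mp this).2
    exact (mem_cfam.mp hC.1) (by simpa using hxC) (by simpa using hyC) hxy
  · intro C hC
    rw [mem_filter] at hC
    rw [mem_powerset]
    intro a ha
    rw [mem_erase] at ha
    rw [mem_neighborFinset]
    exact (mem_cfam.mp hC.1) (by simpa using hC.2) (by simpa using ha.2) (Ne.symm ha.1)
  · intro C D hC hD hCD
    rw [mem_filter] at hC hD
    rw [← insert_erase hC.2, ← insert_erase hD.2, hCD]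
  · rw [card_powerset, card_neighborFinset_eq_degree]
    exact h.ge

lemma sum_powerset_card (s : Finset V) :
    ∑ T ∈ s.powerset, T.card = s.card * 2 ^ (s.card - 1) := by
  induction s using Finset.induction_on with
  | empty => simp
  | @insert a s ha ih =>
    rw [powerset_insert, sum_union, sum_image, card_insert_of_notMem ha]
    · have h2 : ∑ T ∈ s.powerset, (insert a T).card = ∑ T ∈ s.powerset, (T.card + 1) := by
        apply sum_congr rfl
        intro T hT
        rw [mem_powerset] at hT
        rw [card_insert_of_notMem (fun haT => ha (hT haT))]
      rw [h2, sum_add_distrib, ih, sum_const, card_powerset, smul_eq_mul, mul_one]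
      rcases Nat.eq_zero_or_pos s.card with h0 | h0
      · simp [h0]
      · obtain ⟨m, hm⟩ := Nat.exists_eq_succ_of_ne_zero (Nat.pos_iff_ne_zero.mp h0)
        rw [hm]
        simp only [Nat.succ_sub_one, Nat.add_sub_cancel]
        ring_nf
        rw [pow_succ]
    · intro T hT U hU hTU
      rw [mem_coe, mem_powerset] at hT hU
      have : ∀ W ⊆ s, (insert a W).erase a = W := fun W hW =>
        erase_insert (fun haW => ha (hW haW))
      rw [← this T hT, ← this U hU, hTU]
    · rw [Finset.disjoint_left]
      intro T hT hT2
      rw [mem_powerset] at hT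
      rw [mem_image] at hT2
      obtain ⟨U, hU, rfl⟩ := hT2
      exact ha (hT (mem_insert_self a U))

open scoped Classical in
lemma splitfam_card_le (G : SimpleGraph V) (T : Finset V) :
    (T.powerset.filter fun X : Finset V => G.IsClique (X : Set V) ∧
        Gᶜ.IsClique ((T \ X : Finset V) : Set V)).card ≤ T.card + 1 := by
  apply family_card_le (T := T)
  · intro X hX; rw [mem_filter, mem_powerset] at hX; exact hX.1
  · intro X hX Y hY
    rw [mem_filter, mem_powerset] at hX hY
    apply clique_and_stable (G := G)
    · exact hX.2.1.subset (by rw [coe_sdiff]; exact Set.diff_subset)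
    · apply hY.2.2.subset
      intro a ha
      simp only [coe_sdiff, Set.mem_diff] at ha ⊢
      exact ⟨hX.1 ha.1, ha.2⟩

open scoped Classical in
lemma filter_singleton_eq (G : SimpleGraph V) (hn : 1 ≤ Fintype.card V)
    (heq : (cfam G).card * (cfam Gᶜ).card
      = (Fintype.card V + 1) * 2 ^ Fintype.card V) :
    ∀ v : V, ((cfam G).filter fun C => v ∈ C).card = 2 ^ G.degree v ∧
      ((cfam Gᶜ).filter fun C => v ∈ C).card = 2 ^ Gᶜ.degree v := by
  set n := Fintype.card V with hndef
  set P := (cfam G) ×ˢ (cfam Gᶜ) with hPdef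
  -- every pair has small intersection
  have hinter : ∀ p ∈ P, p.1 ∩ p.2 ∈ small (univ : Finset V) := by
    intro p hp
    rw [mem_product] at hp
    rw [mem_small]
    refine ⟨subset_univ _, clique_and_stable (G := G) ?_ ?_⟩
    · exact (mem_cfam.mp hp.1).subset (by rw [coe_inter]; exact Set.inter_subset_left)
    · exact (mem_cfam.mp hp.2).subset (by rw [coe_inter]; exact Set.inter_subset_right)
  have hfib : P.card = ∑ I ∈ small (univ : Finset V),
      (P.filter fun p => p.1 ∩ p.2 = I).card :=
    card_eq_sum_card_fiberwise hinter
  have hsplit : P.card = (P.filter fun p => p.1 ∩ p.2 = ∅).card +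
      ∑ v : V, (P.filter fun p => p.1 ∩ p.2 = {v}).card := by
    rw [hfib, small, sum_insert, sum_image]
    · intro a _ b _ hab
      exact singleton_injective hab
    · simp only [mem_image]
      rintro ⟨a, _, h⟩
      exact (singleton_ne_empty a) h
  -- per-vertex bound
  have hsubv : ∀ v : V, (P.filter fun p => p.1 ∩ p.2 = {v}) ⊆
      ((cfam G).filter fun C => v ∈ C) ×ˢ ((cfam Gᶜ).filter fun C => v ∈ C) := by
    intro v p hp
    rw [mem_filter] at hp
    have hp1 := (mem_product.mp hp.1).1
    have hp2 := (mem_product.mp hp.1).2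
    have hv1 : v ∈ p.1 := by
      have : v ∈ p.1 ∩ p.2 := by rw [hp.2]; exact mem_singleton_self v
      exact (mem_inter.mp this).1
    have hv2 : v ∈ p.2 := by
      have : v ∈ p.1 ∩ p.2 := by rw [hp.2]; exact mem_singleton_self v
      exact (mem_inter.mp this).2
    rw [mem_product]
    exact ⟨mem_filter.mpr ⟨hp1, hv1⟩, mem_filter.mpr ⟨hp2, hv2⟩⟩
  have hdeg : ∀ v : V, G.degree v + Gᶜ.degree v = n - 1 := by
    intro v
    have h1 : Gᶜ.degree v = n - 1 - G.degree v := by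
      rw [hndef]; exact degree_compl G v
    have h2 : G.degree v < n := G.degree_lt_card_verts v
    omega
  have hABv : ∀ v : V, (2:ℕ) ^ G.degree v * 2 ^ Gᶜ.degree v = 2 ^ (n-1) := by
    intro v
    rw [← pow_add, hdeg v]
  have hfv_le_ab : ∀ v : V, (P.filter fun p => p.1 ∩ p.2 = {v}).card ≤
      ((cfam G).filter fun C => v ∈ C).card * ((cfam Gᶜ).filter fun C => v ∈ C).card := by
    intro v
    calc (P.filter fun p => p.1 ∩ p.2 = {v}).card
        ≤ (((cfam G).filter fun C => v ∈ C) ×ˢ ((cfam Gᶜ).filter fun C => v ∈ C)).card :=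
          card_le_card (hsubv v)
      _ = _ := card_product _ _
  have hfv : ∀ v : V, (P.filter fun p => p.1 ∩ p.2 = {v}).card ≤ 2 ^ (n-1) := by
    intro v
    calc (P.filter fun p => p.1 ∩ p.2 = {v}).card
        ≤ ((cfam G).filter fun C => v ∈ C).card * ((cfam Gᶜ).filter fun C => v ∈ C).card :=
          hfv_le_ab v
      _ ≤ 2 ^ G.degree v * 2 ^ Gᶜ.degree v :=
          Nat.mul_le_mul (card_filter_mem_le G v) (card_filter_mem_le Gᶜ v)
      _ = 2 ^ (n-1) := hABv v
  -- disjoint-pair bound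
  have hD : (P.filter fun p => p.1 ∩ p.2 = ∅).card ≤ n * 2 ^ (n-1) + 2 ^ n := by
    have hD1 : (P.filter fun p => p.1 ∩ p.2 = ∅).card =
        ∑ T ∈ (univ : Finset V).powerset,
          ((P.filter fun p => p.1 ∩ p.2 = ∅).filter fun p => p.1 ∪ p.2 = T).card :=
      card_eq_sum_card_fiberwise (fun p _ => mem_powerset.mpr (subset_univ _))
    have hD2 : ∀ T : Finset V, ((P.filter fun p => p.1 ∩ p.2 = ∅).filter
        fun p => p.1 ∪ p.2 = T).card ≤ T.card + 1 := by
      intro T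
      have hle : ((P.filter fun p => p.1 ∩ p.2 = ∅).filter fun p => p.1 ∪ p.2 = T).card ≤
          (T.powerset.filter fun X : Finset V => G.IsClique (X : Set V) ∧
            Gᶜ.IsClique ((T \ X : Finset V) : Set V)).card := by
        apply card_le_card_of_injOn (fun p => p.1)
        · intro p hp
          rw [mem_coe, mem_filter, mem_filter] at hp
          obtain ⟨⟨hpP, hpI⟩, hpU⟩ := hp
          rw [mem_product] at hpP
          have hT2 : T \ p.1 = p.2 := by
            ext a
            rw [mem_sdiff, ← hpU, mem_union]
            constructor
            · rintro ⟨ha1 | ha2, hna⟩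
              · exact absurd ha1 hna
              · exact ha2
            · intro ha2
              refine ⟨Or.inr ha2, fun ha1 => ?_⟩
              have : a ∈ p.1 ∩ p.2 := mem_inter.mpr ⟨ha1, ha2⟩
              rw [hpI] at this
              exact notMem_empty a this
          simp only [mem_coe, mem_filter, mem_powerset]
          refine ⟨by rw [← hpU]; exact subset_union_left, mem_cfam.mp hpP.1, ?_⟩
          rw [hT2]
          exact mem_cfam.mp hpP.2
        · intro p hp q hq hpq
          rw [mem_coe, mem_filter, mem_filter] at hp hq
          simp only at hpq
          have h2 : p.2 = q.2 := by
            have e1 : T \ p.1 = p.2 := by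
              ext a
              rw [mem_sdiff, ← hp.2, mem_union]
              constructor
              · rintro ⟨ha1 | ha2, hna⟩
                · exact absurd ha1 hna
                · exact ha2
              · intro ha2
                refine ⟨Or.inr ha2, fun ha1 => ?_⟩
                have : a ∈ p.1 ∩ p.2 := mem_inter.mpr ⟨ha1, ha2⟩
                rw [hp.1.2] at this
                exact notMem_empty a this
            have e2 : T \ q.1 = q.2 := by
              ext a
              rw [mem_sdiff, ← hq.2, mem_union]
              constructor
              · rintro ⟨ha1 | ha2, hna⟩
                · exact absurd ha1 hna
                · exact ha2
              · intro ha2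
                refine ⟨Or.inr ha2, fun ha1 => ?_⟩
                have : a ∈ q.1 ∩ q.2 := mem_inter.mpr ⟨ha1, ha2⟩
                rw [hq.1.2] at this
                exact notMem_empty a this
            rw [← e1, ← e2, hpq]
          exact Prod.ext hpq h2
      exact le_trans hle (splitfam_card_le G T)
    calc (P.filter fun p => p.1 ∩ p.2 = ∅).card
        = ∑ T ∈ (univ : Finset V).powerset,
          ((P.filter fun p => p.1 ∩ p.2 = ∅).filter fun p => p.1 ∪ p.2 = T).card := hD1
      _ ≤ ∑ T ∈ (univ : Finset V).powerset, (T.card + 1) := sum_le_sum (fun T _ => hD2 T)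
      _ = n * 2 ^ (n-1) + 2 ^ n := by
          rw [sum_add_distrib, sum_powerset_card, sum_const, card_powerset, smul_eq_mul,
            mul_one, card_univ]
  -- conclude each singleton fiber is maximal
  have hPcard : P.card = (n + 1) * 2 ^ n := by
    rw [hPdef, card_product]; exact heq
  have hn1 : n - 1 + 1 = n := Nat.succ_pred_eq_of_pos hn
  have h2n : (2:ℕ) ^ n = 2 * 2 ^ (n-1) := by
    conv_lhs => rw [← hn1]
    rw [pow_succ]
    ring
  have htot : (n + 1) * 2 ^ n = (n * 2 ^ (n-1) + 2 ^ n) + n * 2 ^ (n-1) := by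
    rw [h2n]; ring
  have hSsum : ∑ v : V, (P.filter fun p => p.1 ∩ p.2 = {v}).card ≥ n * 2 ^ (n-1) := by
    have h := hsplit
    rw [hPcard, htot] at h
    omega
  have hfveq : ∀ v : V, (P.filter fun p => p.1 ∩ p.2 = {v}).card = 2 ^ (n-1) := by
    by_contra hcon
    push_neg at hcon
    obtain ⟨w, hw⟩ := hcon
    have hwlt : (P.filter fun p => p.1 ∩ p.2 = {w}).card < 2 ^ (n-1) :=
      lt_of_le_of_ne (hfv w) hw
    have : ∑ v : V, (P.filter fun p => p.1 ∩ p.2 = {v}).card <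
        ∑ _v : V, 2 ^ (n-1) :=
      sum_lt_sum (fun v _ => hfv v) ⟨w, mem_univ w, hwlt⟩
    rw [sum_const, card_univ, smul_eq_mul] at this
    rw [← hndef] at this
    omega
  -- extract equality for each vertex
  intro v
  have hA := card_filter_mem_le G v
  have hB := card_filter_mem_le Gᶜ v
  have hab : ((cfam G).filter fun C => v ∈ C).card *
      ((cfam Gᶜ).filter fun C => v ∈ C).card = 2 ^ G.degree v * 2 ^ Gᶜ.degree v := by
    have h1 : 2 ^ G.degree v * 2 ^ Gᶜ.degree v ≤
        ((cfam G).filter fun C => v ∈ C).card * ((cfam Gᶜ).filter fun C => v ∈ C).card := by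
      rw [hABv v, ← hfveq v]
      exact hfv_le_ab v
    exact le_antisymm (Nat.mul_le_mul hA hB) h1
  have hposA : 0 < (2:ℕ) ^ G.degree v := Nat.pow_pos (by norm_num)
  have hposB : 0 < (2:ℕ) ^ Gᶜ.degree v := Nat.pow_pos (by norm_num)
  have hbB : ((cfam Gᶜ).filter fun C => v ∈ C).card = 2 ^ Gᶜ.degree v := by
    have h1 : 2 ^ G.degree v * ((cfam Gᶜ).filter fun C => v ∈ C).card ≤
        2 ^ G.degree v * 2 ^ Gᶜ.degree v := Nat.mul_le_mul_left _ hB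
    have h2 : 2 ^ G.degree v * 2 ^ Gᶜ.degree v ≤
        2 ^ G.degree v * ((cfam Gᶜ).filter fun C => v ∈ C).card := by
      rw [← hab]
      exact Nat.mul_le_mul_right _ hA
    exact Nat.eq_of_mul_eq_mul_left hposA (le_antisymm h1 h2)
  have haA : ((cfam G).filter fun C => v ∈ C).card = 2 ^ G.degree v := by
    rw [hbB] at hab
    exact Nat.eq_of_mul_eq_mul_right hposB hab
  exact ⟨haA, hbB⟩

open scoped Classical in
lemma eq_imp_top_or_bot (G : SimpleGraph V) (hn : 1 ≤ Fintype.card V)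
    (heq : (cfam G).card * (cfam Gᶜ).card
      = (Fintype.card V + 1) * 2 ^ Fintype.card V) :
    G = ⊤ ∨ G = ⊥ := by
  have hloc := filter_singleton_eq G hn heq
  have hG : ∀ v x y, G.Adj v x → G.Adj v y → x ≠ y → G.Adj x y :=
    fun v => clique_of_card_filter_eq (hloc v).1
  have hG' : ∀ v x y, Gᶜ.Adj v x → Gᶜ.Adj v y → x ≠ y → Gᶜ.Adj x y :=
    fun v => clique_of_card_filter_eq (hloc v).2
  by_cases hbot : G = ⊥
  · exact Or.inr hbot
  left
  obtain ⟨a, b, hab⟩ : ∃ a b, G.Adj a b := by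
    by_contra hno
    push_neg at hno
    apply hbot
    ext x y
    simp only [SimpleGraph.bot_adj, iff_false]
    exact hno x y
  set R : V → V → Prop := fun u w => u = w ∨ G.Adj u w with hR
  set R' : V → V → Prop := fun u w => u = w ∨ Gᶜ.Adj u w with hR'
  have hRsymm : ∀ u w, R u w → R w u := by
    rintro u w (rfl | h)
    · exact Or.inl rfl
    · exact Or.inr h.symm
  have hR'symm : ∀ u w, R' u w → R' w u := by
    rintro u w (rfl | h)
    · exact Or.inl rfl
    · exact Or.inr h.symm
  have hRtrans : ∀ u v w, R u v → R v w → R u w := by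
    rintro u v w (rfl | h1) h2
    · exact h2
    rcases h2 with rfl | h2
    · exact Or.inr h1
    by_cases huw : u = w
    · exact Or.inl huw
    · exact Or.inr (hG v u w h1.symm h2 huw)
  have hR'trans : ∀ u v w, R' u v → R' v w → R' u w := by
    rintro u v w (rfl | h1) h2
    · exact h2
    rcases h2 with rfl | h2
    · exact Or.inr h1
    by_cases huw : u = w
    · exact Or.inl huw
    · exact Or.inr (hG' v u w h1.symm h2 huw)
  have hcover : ∀ u w, ¬ R u w → R' u w := by
    intro u w h
    by_cases huw : u = w
    · exact Or.inl huw
    · exact Or.inr ((SimpleGraph.compl_adj G _ _).mpr ⟨huw, fun hadj => h (Or.inr hadj)⟩)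
  ext x y
  simp only [SimpleGraph.top_adj]
  constructor
  · exact fun h => h.ne
  intro hxy
  by_contra hnadj
  have hnRxy : ¬ R x y := by
    rintro (rfl | h)
    · exact hxy rfl
    · exact hnadj h
  have hnR'ab : ¬ R' a b := by
    rintro (rfl | h)
    · exact G.irrefl hab
    · exact ((SimpleGraph.compl_adj G _ _).mp h).2 hab
  by_cases h1 : R a x
  · by_cases h2 : R a y
    · exact hnRxy (hRtrans x a y (hRsymm a x h1) h2)
    · have h3 : ¬ R b y := fun h3 => h2 (hRtrans a b y (Or.inr hab) h3)
      exact hnR'ab (hR'trans a y b (hcover a y h2) (hR'symm b y (hcover b y h3)))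
  · have h3 : ¬ R b x := fun h3 => h1 (hRtrans a b x (Or.inr hab) h3)
    exact hnR'ab (hR'trans a x b (hcover a x h1) (hR'symm b x (hcover b x h3)))

lemma cfam_top_card : (cfam (⊤ : SimpleGraph V)).card = 2 ^ Fintype.card V := by
  have h : cfam (⊤ : SimpleGraph V) = univ := by
    ext C
    simp only [mem_cfam, mem_univ, iff_true]
    intro a _ b _ hab
    simpa using hab
  rw [h, card_univ, Fintype.card_finset]

lemma cfam_bot_card : (cfam (⊥ : SimpleGraph V)).card = Fintype.card V + 1 := by
  have h : cfam (⊥ : SimpleGraph V) = small univ := by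
    ext C
    rw [mem_cfam, mem_small]
    constructor
    · intro hcl
      refine ⟨subset_univ _, ?_⟩
      rw [card_le_one]
      intro a ha b hb
      by_contra hab
      simpa using hcl (by simpa using ha) (by simpa using hb) hab
    · rintro ⟨-, hcard⟩ a ha b hb hab
      rw [card_le_one] at hcard
      exact absurd (hcard _ (by simpa using ha) _ (by simpa using hb)) hab
  rw [h, card_small, card_univ]

end SCAux

/-- Equality case: for a graph on `n ≥ 1` vertices, `|𝒞'| * |𝒮'| = (n + 1) * 2 ^ n`
holds iff `G` is complete or `G` has no edges. -/
theorem stable_clique_tradeoff'_eq_iff {V : Type*} [Fintype V] (G : SimpleGraph V)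
    (hn : 1 ≤ Fintype.card V) :
    {C : Finset V | G.IsClique (C : Set V)}.ncard *
        {S : Finset V | (S : Set V).Pairwise fun x y => ¬ G.Adj x y}.ncard =
        (Fintype.card V + 1) * 2 ^ Fintype.card V ↔
      G = ⊤ ∨ G = ⊥ := by
  classical
  have hCset : {C : Finset V | G.IsClique (C : Set V)} = ↑(SCAux.cfam G) := by
    ext C
    simp [SCAux.mem_cfam]
  have hSset : {S : Finset V | (S : Set V).Pairwise fun x y => ¬ G.Adj x y}
      = ↑(SCAux.cfam Gᶜ) := by
    ext S
    simp only [Set.mem_setOf_eq, Finset.mem_coe, SCAux.mem_cfam]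
    constructor
    · intro h a ha b hb hab
      exact (SimpleGraph.compl_adj G _ _).mpr ⟨hab, h ha hb hab⟩
    · intro h a ha b hb hab
      exact ((SimpleGraph.compl_adj G _ _).mp (h ha hb hab)).2
  rw [hCset, hSset, Set.ncard_coe_finset, Set.ncard_coe_finset]
  constructor
  · exact SCAux.eq_imp_top_or_bot G hn
  · rintro (rfl | rfl)
    · rw [SCAux.cfam_top_card, compl_top, SCAux.cfam_bot_card, mul_comm]
    · rw [SCAux.cfam_bot_card, compl_bot, SCAux.cfam_top_card]
end

section
/- Let G be a finite simple graph on vertex set V and let W ⊆ V with |W| ≥ 2. Then the number of ordered pairs (C, S), where C is a non-empty clique of G, S is a non-empty stable set of G, and C ∪ S = W, is at most 2·|W|. -/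
open Finset

/-- A family of nonempty proper subsets of `W`, pairwise satisfying `|A \ B| ≤ 1`,
has at most `|W|` members. -/
private lemma family_card_le {V : Type*} [DecidableEq V] (W : Finset V) (F : Finset (Finset V))
    (hsub : ∀ A ∈ F, A ⊆ W) (hne : ∀ A ∈ F, A.Nonempty) (hproper : ∀ A ∈ F, A ≠ W)
    (hpair : ∀ A ∈ F, ∀ B ∈ F, (A \ B).card ≤ 1) : F.card ≤ W.card := by
  classical
  rcases le_or_gt F.card 1 with h1 | h2
  · rcases F.eq_empty_or_nonempty with rfl | ⟨A, hA⟩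
    · simp
    · obtain ⟨a, ha⟩ := hne A hA
      exact h1.trans (Finset.card_pos.mpr ⟨a, hsub A hA ha⟩)
  set E := W.filter (fun x => 2 ≤ (F.filter (fun A => x ∈ A)).card) with hEdef
  have hEW : E ⊆ W := Finset.filter_subset _ _
  -- for x ∈ E, there are two distinct members of F containing x
  have getBC : ∀ x ∈ E, ∃ B ∈ F, ∃ C ∈ F, B ≠ C ∧ x ∈ B ∧ x ∈ C := by
    intro x hx
    obtain ⟨hxW, hx2⟩ := Finset.mem_filter.mp hx
    obtain ⟨B, hB, C, hC, hBC⟩ := Finset.one_lt_card.mp hx2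
    exact ⟨B, (Finset.mem_filter.mp hB).1, C, (Finset.mem_filter.mp hC).1, hBC,
      (Finset.mem_filter.mp hB).2, (Finset.mem_filter.mp hC).2⟩
  -- if x ∉ E but x is in some member, it is in no other member
  have fact0 : ∀ x, x ∉ E → ∀ A ∈ F, x ∈ A → ∀ B ∈ F, B ≠ A → x ∉ B := by
    intro x hxE A hA hxA B hB hBA hxB
    apply hxE
    rw [hEdef, Finset.mem_filter]
    refine ⟨hsub A hA hxA, Finset.one_lt_card.mpr ⟨A, ?_, B, ?_, (Ne.symm hBA)⟩⟩
    · exact Finset.mem_filter.mpr ⟨hA, hxA⟩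
    · exact Finset.mem_filter.mpr ⟨hB, hxB⟩
  -- if x ∈ B \ A for members A B, then B \ A = {x}
  have fact1 : ∀ A ∈ F, ∀ B ∈ F, ∀ x, x ∈ B → x ∉ A → B \ A = {x} := by
    intro A hA B hB x hxB hxA
    have hxmem : x ∈ B \ A := Finset.mem_sdiff.mpr ⟨hxB, hxA⟩
    refine Finset.eq_singleton_iff_unique_mem.mpr ⟨hxmem, fun y hy => ?_⟩
    exact Finset.card_le_one.mp (hpair B hB A hA) y hy x hxmem
  -- |E \ A| ≤ 1 for every member A
  have claimEA : ∀ A ∈ F, (E \ A).card ≤ 1 := by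
    intro A hA
    by_contra h
    push_neg at h
    obtain ⟨x, hx, y, hy, hxy⟩ := Finset.one_lt_card.mp h
    obtain ⟨hxE, hxA⟩ := Finset.mem_sdiff.mp hx
    obtain ⟨hyE, hyA⟩ := Finset.mem_sdiff.mp hy
    obtain ⟨B, hB, C, hC, hBC, hxB, hxC⟩ := getBC x hxE
    obtain ⟨B', hB', _C', _hC', _hB'C', hyB', _⟩ := getBC y hyE
    have hBA : B \ A = {x} := fact1 A hA B hB x hxB hxA
    have hCA : C \ A = {x} := fact1 A hA C hC x hxC hxA
    have hB'A : B' \ A = {y} := fact1 A hA B' hB' y hyB' hyA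
    have sub1 : ∀ D ∈ F, ∀ D' ∈ F, ∀ u v : V, u ≠ v → D \ A = {u} → D' \ A = {v} →
        A ∩ D ⊆ D' := by
      intro D hD D' hD' u v huv hDu hD'v a ha
      by_contra haD'
      obtain ⟨haA, haD⟩ := Finset.mem_inter.mp ha
      have huDA : u ∈ D \ A := by rw [hDu]; exact Finset.mem_singleton_self u
      have huD : u ∈ D := (Finset.mem_sdiff.mp huDA).1
      have huA : u ∉ A := (Finset.mem_sdiff.mp huDA).2
      have huD' : u ∉ D' := by
        intro h
        have : u ∈ D' \ A := Finset.mem_sdiff.mpr ⟨h, huA⟩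
        rw [hD'v] at this
        exact huv (Finset.mem_singleton.mp this)
      have h1 : a ∈ D \ D' := Finset.mem_sdiff.mpr ⟨haD, haD'⟩
      have h2 : u ∈ D \ D' := Finset.mem_sdiff.mpr ⟨huD, huD'⟩
      have hau : a ≠ u := fun h => huA (h ▸ haA)
      exact absurd (hpair D hD D' hD')
        (by simpa using Finset.one_lt_card.mpr ⟨a, h1, u, h2, hau⟩)
    have e1 : A ∩ B ⊆ B' := sub1 B hB B' hB' x y hxy hBA hB'A
    have e2 : A ∩ B' ⊆ B := sub1 B' hB' B hB y x hxy.symm hB'A hBA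
    have e3 : A ∩ B' ⊆ C := sub1 B' hB' C hC y x hxy.symm hB'A hCA
    have e4 : A ∩ C ⊆ B' := sub1 C hC B' hB' x y hxy hCA hB'A
    have eBC : A ∩ B = A ∩ C := by
      apply Finset.Subset.antisymm
      · intro a ha
        have haA : a ∈ A := (Finset.mem_inter.mp ha).1
        exact Finset.mem_inter.mpr ⟨haA, e3 (Finset.mem_inter.mpr ⟨haA, e1 ha⟩)⟩
      · intro a ha
        have haA : a ∈ A := (Finset.mem_inter.mp ha).1
        exact Finset.mem_inter.mpr ⟨haA, e2 (Finset.mem_inter.mpr ⟨haA, e4 ha⟩)⟩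
    apply hBC
    ext b
    constructor
    · intro hb
      by_cases hbA : b ∈ A
      · exact (Finset.mem_inter.mp (eBC ▸ Finset.mem_inter.mpr ⟨hbA, hb⟩)).2
      · have : b ∈ B \ A := Finset.mem_sdiff.mpr ⟨hb, hbA⟩
        rw [hBA] at this
        rw [Finset.mem_singleton.mp this]
        exact hxC
    · intro hb
      by_cases hbA : b ∈ A
      · exact (Finset.mem_inter.mp (eBC.symm ▸ Finset.mem_inter.mpr ⟨hbA, hb⟩)).2
      · have : b ∈ C \ A := Finset.mem_sdiff.mpr ⟨hb, hbA⟩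
        rw [hCA] at this
        rw [Finset.mem_singleton.mp this]
        exact hxB
  -- |A \ E| ≤ 1 for every member A
  have claimAE : ∀ A ∈ F, (A \ E).card ≤ 1 := by
    intro A hA
    by_contra h
    push_neg at h
    obtain ⟨x, hx, y, hy, hxy⟩ := Finset.one_lt_card.mp h
    obtain ⟨hxA, hxE⟩ := Finset.mem_sdiff.mp hx
    obtain ⟨hyA, hyE⟩ := Finset.mem_sdiff.mp hy
    obtain ⟨B, hB, hBA⟩ := Finset.exists_mem_ne h2 A
    have hxB : x ∉ B := fact0 x hxE A hA hxA B hB hBA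
    have hyB : y ∉ B := fact0 y hyE A hA hyA B hB hBA
    exact absurd (hpair A hA B hB)
      (by
        simpa using Finset.one_lt_card.mpr
          ⟨x, Finset.mem_sdiff.mpr ⟨hxA, hxB⟩, y, Finset.mem_sdiff.mpr ⟨hyA, hyB⟩, hxy⟩)
  -- if E \ A is nonempty then A ⊆ E
  have claimNB : ∀ A ∈ F, (E \ A).Nonempty → A \ E = ∅ := by
    intro A hA ⟨x, hx⟩
    obtain ⟨hxE, hxA⟩ := Finset.mem_sdiff.mp hx
    by_contra hne'
    obtain ⟨a, ha⟩ := Finset.nonempty_iff_ne_empty.mpr hne'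
    obtain ⟨haA, haE⟩ := Finset.mem_sdiff.mp ha
    obtain ⟨B, hB, C, hC, hBC, hxB, hxC⟩ := getBC x hxE
    have hBA : B \ A = {x} := fact1 A hA B hB x hxB hxA
    have hCA : C \ A = {x} := fact1 A hA C hC x hxC hxA
    have hBneA : B ≠ A := fun h => hxA (h ▸ hxB)
    have hCneA : C ≠ A := fun h => hxA (h ▸ hxC)
    have haB : a ∉ B := fact0 a haE A hA haA B hB hBneA
    have haC : a ∉ C := fact0 a haE A hA haA C hC hCneA
    -- B ≠ C, so one contains an element outside the other
    have hcases : (∃ p, p ∈ B ∧ p ∉ C) ∨ (∃ p, p ∈ C ∧ p ∉ B) := by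
      by_contra hcon
      push_neg at hcon
      exact hBC (Finset.Subset.antisymm (fun p hp => hcon.1 p hp) (fun p hp => hcon.2 p hp))
    rcases hcases with ⟨p, hpB, hpC⟩ | ⟨p, hpC, hpB⟩
    · -- p ∈ B \ C ; p ≠ x since x ∈ C ; hence p ∈ A, so p, a ∈ A \ C forces a = p ∈ B
      have hpx : p ≠ x := fun h => hpC (h ▸ hxC)
      have hpA : p ∈ A := by
        by_contra hpA
        have : p ∈ B \ A := Finset.mem_sdiff.mpr ⟨hpB, hpA⟩
        rw [hBA] at this
        exact hpx (Finset.mem_singleton.mp this)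
      have hap : a = p :=
        Finset.card_le_one.mp (hpair A hA C hC) a (Finset.mem_sdiff.mpr ⟨haA, haC⟩) p
          (Finset.mem_sdiff.mpr ⟨hpA, hpC⟩)
      exact haB (hap ▸ hpB)
    · have hpx : p ≠ x := fun h => hpB (h ▸ hxB)
      have hpA : p ∈ A := by
        by_contra hpA
        have : p ∈ C \ A := Finset.mem_sdiff.mpr ⟨hpC, hpA⟩
        rw [hCA] at this
        exact hpx (Finset.mem_singleton.mp this)
      have hap : a = p :=
        Finset.card_le_one.mp (hpair A hA B hB) a (Finset.mem_sdiff.mpr ⟨haA, haB⟩) p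
          (Finset.mem_sdiff.mpr ⟨hpA, hpB⟩)
      exact haC (hap ▸ hpC)
  -- dichotomy
  by_cases hup : ∃ A ∈ F, ¬ A ⊆ E
  · -- every member contains E and equals E or E plus one point
    obtain ⟨A₀, hA₀, hA₀ne⟩ := hup
    obtain ⟨x₀, hx₀⟩ := Finset.not_subset.mp hA₀ne
    have hEsub : ∀ A ∈ F, E ⊆ A := by
      intro A hA
      by_contra hcon
      obtain ⟨y, hyE, hyA⟩ := Finset.not_subset.mp hcon
      -- E \ A nonempty, so A ⊆ E ; also A₀ \ E nonempty with A₀ ⊇ E? derive contradiction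
      have hAE : A₀ \ A ⊆ A₀ \ A := Finset.Subset.refl _
      -- A₀ \ E nonempty and E \ A nonempty: mixed types contradiction
      have hA0E : A₀ \ E = ∅ → False := by
        intro h
        exact hx₀.2 ((Finset.sdiff_eq_empty_iff_subset.mp h) hx₀.1)
      have hAEempty : A \ E = ∅ := claimNB A hA ⟨y, Finset.mem_sdiff.mpr ⟨hyE, hyA⟩⟩
      have hAsubE : A ⊆ E := Finset.sdiff_eq_empty_iff_subset.mp hAEempty
      -- x₀ ∈ A₀, x₀ ∉ E so x₀ ∉ A ; y ∈ E ⊆ ... y ∈ A₀? need E ⊆ A₀ : claimNB on A₀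
      have hEA0 : E \ A₀ = ∅ := by
        by_contra hc
        have := claimNB A₀ hA₀ (Finset.nonempty_iff_ne_empty.mpr hc)
        exact hA0E this
      have hyA0 : y ∈ A₀ := (Finset.sdiff_eq_empty_iff_subset.mp hEA0) hyE
      have hx₀A : x₀ ∉ A := fun h => hx₀.2 (hAsubE h)
      have h2' : 1 < (A₀ \ A).card :=
        Finset.one_lt_card.mpr ⟨x₀, Finset.mem_sdiff.mpr ⟨hx₀.1, hx₀A⟩, y,
          Finset.mem_sdiff.mpr ⟨hyA0, hyA⟩, fun h => hx₀.2 (h ▸ hyE)⟩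
      exact absurd (hpair A₀ hA₀ A hA) (by simpa using h2')
    have hFsub : F ⊆ insert E ((W \ E).image (fun x => insert x E)) := by
      intro A hA
      rcases Finset.eq_empty_or_nonempty (A \ E) with hempty | hne'
      · have : A = E := Finset.Subset.antisymm (Finset.sdiff_eq_empty_iff_subset.mp hempty)
          (hEsub A hA)
        rw [this]; exact Finset.mem_insert_self _ _
      · obtain ⟨x, hx⟩ := hne'
        have hAE1 : A \ E = {x} := by
          refine Finset.eq_singleton_iff_unique_mem.mpr ⟨hx, fun y hy => ?_⟩
          exact Finset.card_le_one.mp (claimAE A hA) y hy x hx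
        have hAeq : A = insert x E := by
          ext a
          constructor
          · intro ha
            by_cases haE : a ∈ E
            · exact Finset.mem_insert_of_mem haE
            · have : a ∈ A \ E := Finset.mem_sdiff.mpr ⟨ha, haE⟩
              rw [hAE1] at this
              rw [Finset.mem_singleton.mp this]
              exact Finset.mem_insert_self _ _
          · intro ha
            rcases Finset.mem_insert.mp ha with h | h
            · rw [h]; exact (Finset.mem_sdiff.mp (hAE1 ▸ Finset.mem_singleton_self x)).1
            · exact hEsub A hA h
        apply Finset.mem_insert_of_mem
        refine Finset.mem_image.mpr ⟨x, ?_, hAeq.symm⟩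
        refine Finset.mem_sdiff.mpr ⟨hsub A hA (Finset.mem_sdiff.mp (hAE1 ▸
          Finset.mem_singleton_self x)).1, (Finset.mem_sdiff.mp (hAE1 ▸
          Finset.mem_singleton_self x)).2⟩
    by_cases hEF : E ∈ F
    · have hEne : E.Nonempty := hne E hEF
      have hcard1 : F.card ≤ 1 + (W \ E).card := by
        calc F.card ≤ (insert E ((W \ E).image (fun x => insert x E))).card :=
              Finset.card_le_card hFsub
          _ ≤ ((W \ E).image (fun x => insert x E)).card + 1 := Finset.card_insert_le _ _
          _ ≤ (W \ E).card + 1 := by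
              exact Nat.add_le_add_right (Finset.card_image_le) 1
          _ = 1 + (W \ E).card := by omega
      have h3 : (W \ E).card = W.card - E.card := Finset.card_sdiff_of_subset hEW
      have h4 : 1 ≤ E.card := Finset.card_pos.mpr hEne
      have h5 : E.card ≤ W.card := Finset.card_le_card hEW
      omega
    · have : F ⊆ (W \ E).image (fun x => insert x E) := by
        intro A hA
        rcases Finset.mem_insert.mp (hFsub hA) with h | h
        · exact absurd (h ▸ hA) hEF
        · exact h
      calc F.card ≤ ((W \ E).image (fun x => insert x E)).card := Finset.card_le_card this
        _ ≤ (W \ E).card := Finset.card_image_le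
        _ ≤ W.card := Finset.card_le_card (Finset.sdiff_subset)
  · -- every member is contained in E, equal to E or E minus one point
    push_neg at hup
    have hFsub : F ⊆ insert E (E.image (fun y => E.erase y)) := by
      intro A hA
      rcases Finset.eq_empty_or_nonempty (E \ A) with hempty | hne'
      · have : A = E := Finset.Subset.antisymm (hup A hA)
          (Finset.sdiff_eq_empty_iff_subset.mp hempty)
        rw [this]; exact Finset.mem_insert_self _ _
      · obtain ⟨y, hy⟩ := hne'
        have hEA1 : E \ A = {y} := by
          refine Finset.eq_singleton_iff_unique_mem.mpr ⟨hy, fun z hz => ?_⟩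
          exact Finset.card_le_one.mp (claimEA A hA) z hz y hy
        have hAeq : A = E.erase y := by
          ext a
          constructor
          · intro ha
            refine Finset.mem_erase.mpr ⟨?_, hup A hA ha⟩
            intro h
            exact (Finset.mem_sdiff.mp (hEA1 ▸ Finset.mem_singleton_self y)).2 (h ▸ ha)
          · intro ha
            obtain ⟨hay, haE⟩ := Finset.mem_erase.mp ha
            by_contra haA
            have : a ∈ E \ A := Finset.mem_sdiff.mpr ⟨haE, haA⟩
            rw [hEA1] at this
            exact hay (Finset.mem_singleton.mp this)
        apply Finset.mem_insert_of_mem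
        exact Finset.mem_image.mpr ⟨y,
          (Finset.mem_sdiff.mp (hEA1 ▸ Finset.mem_singleton_self y)).1, hAeq.symm⟩
    by_cases hEF : E ∈ F
    · have hEprop : E ⊂ W := HasSubset.Subset.ssubset_of_ne hEW (hproper E hEF)
      have h5 : E.card < W.card := Finset.card_lt_card hEprop
      calc F.card ≤ (insert E (E.image (fun y => E.erase y))).card :=
            Finset.card_le_card hFsub
        _ ≤ (E.image (fun y => E.erase y)).card + 1 := Finset.card_insert_le _ _
        _ ≤ E.card + 1 := Nat.add_le_add_right Finset.card_image_le 1
        _ ≤ W.card := by omega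
    · have : F ⊆ E.image (fun y => E.erase y) := by
        intro A hA
        rcases Finset.mem_insert.mp (hFsub hA) with h | h
        · exact absurd (h ▸ hA) hEF
        · exact h
      calc F.card ≤ (E.image (fun y => E.erase y)).card := Finset.card_le_card this
        _ ≤ E.card := Finset.card_image_le
        _ ≤ W.card := Finset.card_le_card hEW

/-- For a subset `W` of the vertices with `|W| ≥ 2`, the number of pairs `(C, S)` with `C`
a non-empty clique, `S` a non-empty stable set and `C ∪ S = W` is at most `2 * |W|`. -/
theorem pairs_union_eq_card_le {V : Type*} [Fintype V] [DecidableEq V] (G : SimpleGraph V)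
    (W : Finset V) (hW : 2 ≤ W.card) :
    {p : Finset V × Finset V |
        p.1.Nonempty ∧ G.IsClique (p.1 : Set V) ∧
        p.2.Nonempty ∧ ((p.2 : Set V)).Pairwise (fun x y => ¬ G.Adj x y) ∧
        p.1 ∪ p.2 = W}.ncard ≤ 2 * W.card := by
  classical
  set PA : Set (Finset V × Finset V) := {p |
    (p.1.Nonempty ∧ G.IsClique (p.1 : Set V) ∧
      p.2.Nonempty ∧ ((p.2 : Set V)).Pairwise (fun x y => ¬ G.Adj x y) ∧
      p.1 ∪ p.2 = W) ∧ (p.1 ∩ p.2).Nonempty} with hPAdef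
  set PB : Set (Finset V × Finset V) := {p |
    (p.1.Nonempty ∧ G.IsClique (p.1 : Set V) ∧
      p.2.Nonempty ∧ ((p.2 : Set V)).Pairwise (fun x y => ¬ G.Adj x y) ∧
      p.1 ∪ p.2 = W) ∧ p.1 ∩ p.2 = ∅} with hPBdef
  -- a clique and a stable set meet in at most one vertex
  have hinter : ∀ C S : Finset V, G.IsClique (C : Set V) →
      ((S : Set V)).Pairwise (fun x y => ¬ G.Adj x y) → (C ∩ S).card ≤ 1 := by
    intro C S hclique hstable
    refine Finset.card_le_one.mpr fun a ha b hb => ?_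
    obtain ⟨ha1, ha2⟩ := Finset.mem_inter.mp ha
    obtain ⟨hb1, hb2⟩ := Finset.mem_inter.mp hb
    by_contra hab
    exact hstable (Finset.mem_coe.mpr ha2) (Finset.mem_coe.mpr hb2) hab
      (hclique (Finset.mem_coe.mpr ha1) (Finset.mem_coe.mpr hb1) hab)
  have hsubset : {p : Finset V × Finset V |
      p.1.Nonempty ∧ G.IsClique (p.1 : Set V) ∧
        p.2.Nonempty ∧ ((p.2 : Set V)).Pairwise (fun x y => ¬ G.Adj x y) ∧
        p.1 ∪ p.2 = W} ⊆ PA ∪ PB := by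
    intro p hp
    rcases Finset.eq_empty_or_nonempty (p.1 ∩ p.2) with he | hn
    · exact Or.inr ⟨hp, he⟩
    · exact Or.inl ⟨hp, hn⟩
  have h1 : PA.ncard ≤ W.card := by
    -- a pair in PA is determined by the unique vertex in C ∩ S
    have hchar : ∀ p : Finset V × Finset V, p ∈ PA → ∀ v, p.1 ∩ p.2 = {v} →
        p.1 = W.filter (fun w => w = v ∨ G.Adj v w) ∧
        p.2 = W.filter (fun w => w = v ∨ ¬ G.Adj v w) := by
      rintro p ⟨⟨hC, hclique, hS, hstable, hWeq⟩, -⟩ v hv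
      have hv1 : v ∈ p.1 := (Finset.mem_inter.mp (hv ▸ Finset.mem_singleton_self v)).1
      have hv2 : v ∈ p.2 := (Finset.mem_inter.mp (hv ▸ Finset.mem_singleton_self v)).2
      constructor
      · ext w
        simp only [Finset.mem_filter]
        constructor
        · intro hw
          have hwW : w ∈ W := by rw [← hWeq]; exact Finset.mem_union_left _ hw
          refine ⟨hwW, ?_⟩
          by_cases hwv : w = v
          · exact Or.inl hwv
          · exact Or.inr (hclique (Finset.mem_coe.mpr hv1) (Finset.mem_coe.mpr hw)
              (fun h => hwv h.symm))
        · rintro ⟨hwW, (rfl | hadj)⟩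
          · exact hv1
          · have hwu : w ∈ p.1 ∪ p.2 := by rw [hWeq]; exact hwW
            rcases Finset.mem_union.mp hwu with h | h
            · exact h
            · exact absurd hadj (hstable (Finset.mem_coe.mpr hv2) (Finset.mem_coe.mpr h)
                (G.ne_of_adj hadj))
      · ext w
        simp only [Finset.mem_filter]
        constructor
        · intro hw
          have hwW : w ∈ W := by rw [← hWeq]; exact Finset.mem_union_right _ hw
          refine ⟨hwW, ?_⟩
          by_cases hwv : w = v
          · exact Or.inl hwv
          · exact Or.inr (hstable (Finset.mem_coe.mpr hv2) (Finset.mem_coe.mpr hw)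
              (fun h => hwv h.symm))
        · rintro ⟨hwW, (rfl | hnadj)⟩
          · exact hv2
          · have hwu : w ∈ p.1 ∪ p.2 := by rw [hWeq]; exact hwW
            rcases Finset.mem_union.mp hwu with h | h
            · by_cases hwv : w = v
              · rw [hwv]; exact hv2
              · exact absurd (hclique (Finset.mem_coe.mpr hv1) (Finset.mem_coe.mpr h)
                  (fun hh => hwv hh.symm)) hnadj
            · exact h
    have hkey : ∀ p : Finset V × Finset V, p ∈ PA → ∃ v ∈ W, p.1 ∩ p.2 = {v} := by
      rintro p hp
      obtain ⟨⟨hC, hclique, hS, hstable, hWeq⟩, hne⟩ := hp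
      have hle : (p.1 ∩ p.2).card ≤ 1 := hinter p.1 p.2 hclique hstable
      have hone : (p.1 ∩ p.2).card = 1 := le_antisymm hle (Finset.card_pos.mpr hne)
      obtain ⟨v, hv⟩ := Finset.card_eq_one.mp hone
      refine ⟨v, ?_, hv⟩
      have : v ∈ p.1 ∩ p.2 := hv ▸ Finset.mem_singleton_self v
      rw [← hWeq]
      exact Finset.mem_union_left _ (Finset.mem_inter.mp this).1
    have hmem : ∀ p ∈ PA, (fun p : Finset V × Finset V => p.1 ∩ p.2) p ∈
        ((W.image fun v => ({v} : Finset V)) : Finset (Finset V)) := by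
      intro p hp
      obtain ⟨v, hvW, hv⟩ := hkey p hp
      exact Finset.mem_coe.mpr (Finset.mem_image.mpr ⟨v, hvW, hv.symm⟩)
    have hinj : Set.InjOn (fun p : Finset V × Finset V => p.1 ∩ p.2) PA := by
      intro p hp q hq h
      obtain ⟨v, hvW, hv⟩ := hkey p hp
      have h' : p.1 ∩ p.2 = q.1 ∩ q.2 := h
      have hv' : q.1 ∩ q.2 = {v} := by rw [← h']; exact hv
      obtain ⟨hp1, hp2⟩ := hchar p hp v hv
      obtain ⟨hq1, hq2⟩ := hchar q hq v hv'
      exact Prod.ext (hp1.trans hq1.symm) (hp2.trans hq2.symm)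
    calc PA.ncard ≤ (((W.image fun v => ({v} : Finset V)) : Finset (Finset V)) :
          Set (Finset V)).ncard :=
        Set.ncard_le_ncard_of_injOn _ hmem hinj (Set.toFinite _)
      _ = (W.image fun v => ({v} : Finset V)).card := Set.ncard_coe_finset _
      _ ≤ W.card := Finset.card_image_le
  have h2 : PB.ncard ≤ W.card := by
    have hcompl : ∀ p : Finset V × Finset V, p ∈ PB → p.2 = W \ p.1 := by
      rintro p ⟨⟨hC, hclique, hS, hstable, hWeq⟩, hpe⟩
      ext w
      simp only [Finset.mem_sdiff]
      constructor
      · intro hw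
        refine ⟨by rw [← hWeq]; exact Finset.mem_union_right _ hw, fun hw1 => ?_⟩
        have : w ∈ p.1 ∩ p.2 := Finset.mem_inter.mpr ⟨hw1, hw⟩
        rw [hpe] at this
        exact absurd this (Finset.notMem_empty w)
      · rintro ⟨hwW, hw1⟩
        have hwu : w ∈ p.1 ∪ p.2 := by rw [hWeq]; exact hwW
        rcases Finset.mem_union.mp hwu with h | h
        · exact absurd h hw1
        · exact h
    have hinj : Set.InjOn Prod.fst PB := by
      intro p hp q hq h
      have hps := hcompl p hp
      have hqs := hcompl q hq
      exact Prod.ext h (by rw [hps, hqs, h])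
    have himg : (Prod.fst '' PB).ncard = PB.ncard := Set.ncard_image_of_injOn hinj
    rw [← himg]
    have hfin : (Prod.fst '' PB).Finite := Set.toFinite _
    rw [Set.ncard_eq_toFinset_card _ hfin]
    apply family_card_le W
    · intro A hA
      obtain ⟨p, hp, rfl⟩ := hfin.mem_toFinset.mp hA
      rw [← hp.1.2.2.2.2]
      exact Finset.subset_union_left
    · intro A hA
      obtain ⟨p, hp, rfl⟩ := hfin.mem_toFinset.mp hA
      exact hp.1.1
    · intro A hA
      obtain ⟨p, hp, rfl⟩ := hfin.mem_toFinset.mp hA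
      intro hAW
      obtain ⟨s, hs⟩ := hp.1.2.2.1
      have hs' : s ∈ W \ p.1 := by rw [← hcompl p hp]; exact hs
      rw [hAW] at hs'
      exact (Finset.mem_sdiff.mp hs').2 (Finset.mem_sdiff.mp hs').1
    · intro A hA B hB
      obtain ⟨p, hp, rfl⟩ := hfin.mem_toFinset.mp hA
      obtain ⟨q, hq, rfl⟩ := hfin.mem_toFinset.mp hB
      have hsub : p.1 \ q.1 ⊆ p.1 ∩ q.2 := by
        intro a ha
        obtain ⟨ha1, ha2⟩ := Finset.mem_sdiff.mp ha
        refine Finset.mem_inter.mpr ⟨ha1, ?_⟩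
        have haW : a ∈ W := by rw [← hp.1.2.2.2.2]; exact Finset.mem_union_left _ ha1
        have : a ∈ q.1 ∪ q.2 := by rw [hq.1.2.2.2.2]; exact haW
        rcases Finset.mem_union.mp this with h | h
        · exact absurd h ha2
        · exact h
      calc (p.1 \ q.1).card ≤ (p.1 ∩ q.2).card := Finset.card_le_card hsub
        _ ≤ 1 := hinter p.1 q.2 hp.1.2.1 hq.1.2.2.2.1
  calc ({p : Finset V × Finset V |
      p.1.Nonempty ∧ G.IsClique (p.1 : Set V) ∧
        p.2.Nonempty ∧ ((p.2 : Set V)).Pairwise (fun x y => ¬ G.Adj x y) ∧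
        p.1 ∪ p.2 = W}).ncard ≤ (PA ∪ PB).ncard :=
      Set.ncard_le_ncard hsubset (Set.toFinite _)
    _ ≤ PA.ncard + PB.ncard := Set.ncard_union_le PA PB
    _ ≤ W.card + W.card := Nat.add_le_add h1 h2
    _ = 2 * W.card := by ring
end

section
/- Let G be a finite simple graph on vertex set V and let W ⊆ V be non-empty. Then the number of ordered pairs (C, S), where C is a non-empty clique of G, S is a non-empty stable set of G, C ∪ S = W, and C ∩ S ≠ ∅, is at most |W|. -/
lemma pair_determined {V : Type*} [Fintype V] [DecidableEq V] {G : SimpleGraph V}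
    {W C S : Finset V} {v : V}
    (hC : G.IsClique (C : Set V)) (hS : ((S : Set V)).Pairwise (fun x y => ¬ G.Adj x y))
    (hU : C ∪ S = W) (hv : v ∈ C ∩ S) :
    (∀ w, w ∈ C ↔ w ∈ W ∧ (w = v ∨ G.Adj v w)) ∧
    (∀ w, w ∈ S ↔ w ∈ W ∧ (w = v ∨ ¬ G.Adj v w)) := by
  simp only [Finset.mem_inter] at hv
  obtain ⟨hvC, hvS⟩ := hv
  constructor
  · intro w
    constructor
    · intro hwC
      refine ⟨by rw [← hU]; exact Finset.mem_union_left _ hwC, ?_⟩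
      by_cases h : w = v
      · exact Or.inl h
      · exact Or.inr (hC hvC hwC (fun e => h e.symm))
    · rintro ⟨hwW, (rfl | hadj)⟩
      · exact hvC
      · rw [← hU] at hwW
        rcases Finset.mem_union.1 hwW with h | h
        · exact h
        · exact absurd hadj (hS hvS h (G.ne_of_adj hadj))
  · intro w
    constructor
    · intro hwS
      refine ⟨by rw [← hU]; exact Finset.mem_union_right _ hwS, ?_⟩
      by_cases h : w = v
      · exact Or.inl h
      · exact Or.inr (hS hvS hwS (fun e => h e.symm))
    · rintro ⟨hwW, (rfl | hnadj)⟩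
      · exact hvS
      · by_cases hwv : w = v
        · exact hwv ▸ hvS
        · rw [← hU] at hwW
          rcases Finset.mem_union.1 hwW with h | h
          · exact absurd (hC hvC h (fun e => hwv e.symm)) hnadj
          · exact h

/-- For a non-empty subset `W` of the vertices, the number of pairs `(C, S)` with `C`
a non-empty clique, `S` a non-empty stable set, `C ∪ S = W` and `C ∩ S ≠ ∅`
is at most `|W|`. -/
theorem intersecting_pairs_union_eq_card_le {V : Type*} [Fintype V] [DecidableEq V] (G : SimpleGraph V)
    (W : Finset V) (hW : W.Nonempty) :
    {p : Finset V × Finset V |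
        p.1.Nonempty ∧ G.IsClique (p.1 : Set V) ∧
        p.2.Nonempty ∧ ((p.2 : Set V)).Pairwise (fun x y => ¬ G.Adj x y) ∧
        p.1 ∪ p.2 = W ∧ (p.1 ∩ p.2).Nonempty}.ncard ≤ W.card := by
  classical
  set T := {p : Finset V × Finset V |
        p.1.Nonempty ∧ G.IsClique (p.1 : Set V) ∧
        p.2.Nonempty ∧ ((p.2 : Set V)).Pairwise (fun x y => ¬ G.Adj x y) ∧
        p.1 ∪ p.2 = W ∧ (p.1 ∩ p.2).Nonempty} with hT
  have key : ∀ p ∈ T, ∃ v ∈ p.1 ∩ p.2, True := by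
    intro p hp
    exact ⟨hp.2.2.2.2.2.choose, hp.2.2.2.2.2.choose_spec, trivial⟩
  let f : Finset V × Finset V → V := fun p =>
    if h : (p.1 ∩ p.2).Nonempty then h.choose else hW.choose
  have hf : ∀ p ∈ T, f p ∈ p.1 ∩ p.2 := by
    intro p hp
    simp only [f, dif_pos hp.2.2.2.2.2]
    exact hp.2.2.2.2.2.choose_spec
  have hmaps : Set.MapsTo f T (W : Set V) := by
    intro p hp
    have := hf p hp
    rw [Finset.mem_inter] at this
    have := this.1
    rw [← hp.2.2.2.2.1]
    exact Finset.mem_union_left _ this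
  have hinj : Set.InjOn f T := by
    intro p hp q hq hfeq
    have hpT := hp
    have hqT := hq
    obtain ⟨-, hCp, -, hSp, hUp, -⟩ := hp
    obtain ⟨-, hCq, -, hSq, hUq, -⟩ := hq
    obtain ⟨hp1, hp2⟩ := pair_determined hCp hSp hUp (hf p hpT)
    obtain ⟨hq1, hq2⟩ := pair_determined hCq hSq hUq (hfeq ▸ hf q hqT)
    have e1 : p.1 = q.1 := Finset.ext fun w => by rw [hp1 w, hq1 w]
    have e2 : p.2 = q.2 := Finset.ext fun w => by rw [hp2 w, hq2 w]
    exact Prod.ext e1 e2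
  calc T.ncard ≤ (W : Set V).ncard :=
        Set.ncard_le_ncard_of_injOn f hmaps hinj (W.finite_toSet)
    _ = W.card := Set.ncard_coe_finset W
end

section
/- Let G be a finite simple graph on d ≥ 1 vertices, let 𝒞' be the family of all (possibly empty) cliques of G and 𝒮' the family of all (possibly empty) stable sets of G. Then (|𝒞'| + d − 1) · |𝒮'| ≤ d·2^{d+1}. -/
open Finset

section aux
variable {V : Type*} [DecidableEq V]

lemma sum_card_powerset (s : Finset V) :
    ∑ U ∈ s.powerset, U.card = s.card * 2 ^ (s.card - 1) := by
  have key : ∑ U ∈ s.powerset, (s \ U).card = ∑ U ∈ s.powerset, U.card := by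
    apply Finset.sum_bij' (fun U _ => s \ U) (fun U _ => s \ U)
    · intro U hU; exact mem_powerset.2 (sdiff_subset)
    · intro U hU; exact mem_powerset.2 (sdiff_subset)
    · intro U hU; exact Finset.sdiff_sdiff_eq_self (mem_powerset.1 hU)
    · intro U hU; exact Finset.sdiff_sdiff_eq_self (mem_powerset.1 hU)
    · intro U hU; rfl
  have two : 2 * ∑ U ∈ s.powerset, U.card = s.card * 2 ^ s.card := by
    rw [two_mul]
    nth_rewrite 1 [← key]
    rw [← Finset.sum_add_distrib]
    rw [Finset.sum_congr rfl (fun U hU => ?_), Finset.sum_const, card_powerset, smul_eq_mul,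
      mul_comm]
    rw [card_sdiff_of_subset (mem_powerset.1 hU)]
    have := card_le_card (mem_powerset.1 hU)
    omega
  rcases Nat.eq_zero_or_pos s.card with h | h
  · simp_all
  · have : 2 ^ s.card = 2 * 2 ^ (s.card - 1) := by
      rw [← pow_succ']
      congr 1
      omega
    rw [this, ← mul_assoc, mul_comm (s.card) 2, mul_assoc] at two
    exact Nat.eq_of_mul_eq_mul_left (by norm_num) two
end aux

section graph
variable {V : Type*} [DecidableEq V] (G : SimpleGraph V)

/-- a set that is both a clique and stable has at most one element -/
lemma cs_card_le_one {A : Finset V} (hc : G.IsClique (A : Set V))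
    (hs : (A : Set V).Pairwise fun x y => ¬ G.Adj x y) : A.card ≤ 1 := by
  rw [Finset.card_le_one]
  intro a ha b hb
  by_contra hne
  exact hs (Finset.mem_coe.2 ha) (Finset.mem_coe.2 hb) hne
    (hc (Finset.mem_coe.2 ha) (Finset.mem_coe.2 hb) hne)

open scoped Classical in
/-- the number of partitions of `U` into a clique and a stable set is at most `|U| + 1` -/
lemma splits_le [Nonempty V] (U : Finset V) :
    (U.powerset.filter fun C : Finset V => G.IsClique (C : Set V) ∧
      (((U \ C : Finset V)) : Set V).Pairwise fun x y => ¬ G.Adj x y).card ≤ U.card + 1 := by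
  classical
  set P := U.powerset.filter fun C : Finset V => G.IsClique (C : Set V) ∧
      (((U \ C : Finset V)) : Set V).Pairwise fun x y => ¬ G.Adj x y with hP
  rcases P.eq_empty_or_nonempty with h | hne
  · simp [h]
  obtain ⟨C0, hC0P, hmax⟩ := P.exists_max_image Finset.card hne
  -- basic facts about members of P
  have hmem : ∀ C ∈ P, C ⊆ U ∧ G.IsClique (C : Set V) ∧
      (((U \ C : Finset V)) : Set V).Pairwise fun x y => ¬ G.Adj x y := by
    intro C hC
    rw [hP, Finset.mem_filter, Finset.mem_powerset] at hC
    exact ⟨hC.1, hC.2.1, hC.2.2⟩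
  obtain ⟨hC0U, hC0c, hC0s⟩ := hmem C0 hC0P
  -- one-sided differences have at most one element
  have hdiff : ∀ C ∈ P, ∀ D ∈ P, (C \ D).card ≤ 1 := by
    intro C hC D hD
    obtain ⟨hCU, hCc, hCs⟩ := hmem C hC
    obtain ⟨hDU, hDc, hDs⟩ := hmem D hD
    apply cs_card_le_one G
    · exact hCc.subset (Finset.coe_subset.2 Finset.sdiff_subset)
    · refine hDs.mono ?_
      exact Finset.coe_subset.2 (Finset.sdiff_subset_sdiff hCU le_rfl)
  -- the injection
  set f : Finset V → V := fun C =>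
    if h : (C \ C0).Nonempty then h.choose
    else if h' : (C0 \ C).Nonempty then h'.choose
    else Classical.arbitrary V with hf
  have key : (P.erase C0).card ≤ U.card := by
    apply Finset.card_le_card_of_injOn f
    · intro C hC
      have hCP := Finset.mem_of_mem_erase hC
      have hCne := Finset.ne_of_mem_erase hC
      obtain ⟨hCU, hCc, hCs⟩ := hmem C hCP
      have hC0C : (C0 \ C).Nonempty := by
        rw [Finset.sdiff_nonempty]
        intro hsub
        have hss : C0 ⊂ C := hsub.ssubset_of_ne (Ne.symm hCne)
        exact absurd (hmax C hCP) (by simpa using Finset.card_lt_card hss)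
      rw [hf]
      dsimp only
      by_cases h : (C \ C0).Nonempty
      · rw [dif_pos h]
        exact hCU (Finset.sdiff_subset h.choose_spec)
      · rw [dif_neg h, dif_pos hC0C]
        exact hC0U (Finset.sdiff_subset hC0C.choose_spec)
    · -- injectivity
      have hfacts : ∀ C ∈ P.erase C0, ∃ y, C0 \ C = {y} ∧
          ((C \ C0 = ∅ ∧ f C = y ∧ C = C0.erase y) ∨
           (C \ C0 = {f C} ∧ f C ∉ C0 ∧ C = insert (f C) (C0.erase y))) := by
        intro C hC
        have hCP := Finset.mem_of_mem_erase hC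
        have hCne := Finset.ne_of_mem_erase hC
        obtain ⟨hCU, hCc, hCs⟩ := hmem C hCP
        have hC0C : (C0 \ C).Nonempty := by
          rw [Finset.sdiff_nonempty]
          intro hsub
          have hss : C0 ⊂ C := hsub.ssubset_of_ne (Ne.symm hCne)
          exact absurd (hmax C hCP) (by simpa using Finset.card_lt_card hss)
        have hy : C0 \ C = {hC0C.choose} := by
          apply Finset.eq_singleton_iff_unique_mem.2
          refine ⟨hC0C.choose_spec, fun z hz => ?_⟩
          have h1 := hdiff C0 hC0P C hCP
          rw [Finset.card_le_one] at h1
          exact h1 _ hz _ hC0C.choose_spec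
        set y := hC0C.choose with hydef
        have hyC0 : y ∈ C0 := (Finset.mem_sdiff.1 hC0C.choose_spec).1
        have hyC : y ∉ C := (Finset.mem_sdiff.1 hC0C.choose_spec).2
        refine ⟨y, hy, ?_⟩
        by_cases h : (C \ C0).Nonempty
        · right
          have hfC : f C = h.choose := by rw [hf]; exact dif_pos h
          have hx : C \ C0 = {f C} := by
            rw [hfC]
            apply Finset.eq_singleton_iff_unique_mem.2
            refine ⟨h.choose_spec, fun z hz => ?_⟩
            have h1 := hdiff C hCP C0 hC0P
            rw [Finset.card_le_one] at h1
            exact h1 _ hz _ h.choose_spec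
          have hxC : f C ∈ C \ C0 := by rw [hx]; exact Finset.mem_singleton_self _
          refine ⟨hx, (Finset.mem_sdiff.1 hxC).2, ?_⟩
          ext a
          simp only [Finset.mem_insert, Finset.mem_erase]
          constructor
          · intro ha
            by_cases haC0 : a ∈ C0
            · right
              refine ⟨?_, haC0⟩
              intro hay; rw [hay] at ha; exact hyC ha
            · left
              have : a ∈ C \ C0 := Finset.mem_sdiff.2 ⟨ha, haC0⟩
              rw [hx] at this; exact Finset.mem_singleton.1 this
          · rintro (rfl | ⟨hay, haC0⟩)
            · exact (Finset.mem_sdiff.1 hxC).1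
            · by_contra haC
              have : a ∈ C0 \ C := Finset.mem_sdiff.2 ⟨haC0, haC⟩
              rw [hy] at this
              exact hay (Finset.mem_singleton.1 this)
        · left
          have hsub : C ⊆ C0 := Finset.sdiff_eq_empty_iff_subset.1
            (Finset.not_nonempty_iff_eq_empty.1 h)
          have hfC : f C = y := by rw [hf]; dsimp only; rw [dif_neg h, dif_pos hC0C]
          refine ⟨Finset.not_nonempty_iff_eq_empty.1 h, hfC, ?_⟩
          ext a
          simp only [Finset.mem_erase]
          constructor
          · intro ha
            exact ⟨fun hay => hyC (hay ▸ ha), hsub ha⟩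
          · rintro ⟨hay, haC0⟩
            by_contra haC
            have : a ∈ C0 \ C := Finset.mem_sdiff.2 ⟨haC0, haC⟩
            rw [hy] at this
            exact hay (Finset.mem_singleton.1 this)
      intro C hC D hD hfCD
      obtain ⟨y, hyC, hcaseC⟩ := hfacts C hC
      obtain ⟨y', hyD, hcaseD⟩ := hfacts D hD
      have hyC0 : y ∈ C0 := (Finset.mem_sdiff.1 (hyC ▸ Finset.mem_singleton_self y)).1
      have hy'C0 : y' ∈ C0 := (Finset.mem_sdiff.1 (hyD ▸ Finset.mem_singleton_self y')).1
      rcases hcaseC with ⟨hCe, hfCy, hCeq⟩ | ⟨hCx, hfCnot, hCeq⟩ <;>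
        rcases hcaseD with ⟨hDe, hfDy, hDeq⟩ | ⟨hDx, hfDnot, hDeq⟩
      · rw [hCeq, hDeq, hfCy.symm, hfDy.symm, hfCD]
      · exact absurd (hfCD ▸ hfCy ▸ hyC0) hfDnot
      · exact absurd (hfCD.symm ▸ hfDy ▸ hy'C0) hfCnot
      · by_cases hyy : y = y'
        · rw [hCeq, hDeq, hfCD, hyy]
        · exfalso
          have hCP := Finset.mem_of_mem_erase hC
          have hDP := Finset.mem_of_mem_erase hD
          obtain ⟨hCU, hCc, hCs⟩ := hmem C hCP
          obtain ⟨hDU, hDc, hDs⟩ := hmem D hDP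
          set x := f C with hxdef
          have hxC : x ∈ C := (Finset.mem_sdiff.1 (hCx ▸ Finset.mem_singleton_self x)).1
          have hxD : x ∈ D := by
            have : f D ∈ D := (Finset.mem_sdiff.1 (hDx ▸ Finset.mem_singleton_self (f D))).1
            rwa [← hfCD] at this
          have hyD' : y ∈ D := by
            rw [hDeq]
            exact Finset.mem_insert.2 (Or.inr (Finset.mem_erase.2 ⟨hyy, hyC0⟩))
          -- x is adjacent to all of C0
          have hadj : ∀ z ∈ C0, G.Adj x z := by
            intro z hz
            by_cases hzy : z = y
            · subst hzy
              exact hDc (Finset.mem_coe.2 hxD) (Finset.mem_coe.2 hyD')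
                (fun hxy => hfCnot (hxy ▸ hyC0))
            · have hzC : z ∈ C := by
                by_contra hzC
                have : z ∈ C0 \ C := Finset.mem_sdiff.2 ⟨hz, hzC⟩
                rw [hyC] at this
                exact hzy (Finset.mem_singleton.1 this)
              exact hCc (Finset.mem_coe.2 hxC) (Finset.mem_coe.2 hzC)
                (fun hxz => hfCnot (hxz ▸ hz))
          -- then insert x C0 is a bigger element of P
          have hKP : insert x C0 ∈ P := by
            rw [hP, Finset.mem_filter, Finset.mem_powerset]
            refine ⟨Finset.insert_subset (hCU hxC) hC0U, ?_, ?_⟩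
            · rw [Finset.coe_insert]
              apply SimpleGraph.IsClique.insert hC0c
              intro z hz hzx
              exact hadj z (Finset.mem_coe.1 hz)
            · refine hC0s.mono ?_
              refine Finset.coe_subset.2 (Finset.sdiff_subset_sdiff le_rfl ?_)
              exact Finset.subset_insert x C0
          have := hmax _ hKP
          rw [Finset.card_insert_of_notMem hfCnot] at this
          omega
  have := Finset.card_erase_of_mem hC0P
  omega

open scoped Classical in
/-- recovery of a clique/stable pair from a common vertex and the rest of the union -/
lemma pair_recover {C S : Finset V} (hC : G.IsClique (C : Set V))
    (hS : (S : Set V).Pairwise fun x y => ¬ G.Adj x y) {v : V} (hv : v ∈ C ∩ S) :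
    C = insert v (((C ∪ S).erase v).filter (G.Adj v)) ∧
    S = insert v (((C ∪ S).erase v).filter fun u => ¬ G.Adj v u) := by
  have hvC : v ∈ C := (Finset.mem_inter.1 hv).1
  have hvS : v ∈ S := (Finset.mem_inter.1 hv).2
  constructor
  · ext a
    simp only [Finset.mem_insert, Finset.mem_filter, Finset.mem_erase, Finset.mem_union]
    constructor
    · intro ha
      by_cases hav : a = v
      · exact Or.inl hav
      · exact Or.inr ⟨⟨hav, Or.inl ha⟩, hC (Finset.mem_coe.2 hvC) (Finset.mem_coe.2 ha)
          (fun h => hav h.symm)⟩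
    · rintro (rfl | ⟨⟨hav, haCS⟩, hadj⟩)
      · exact hvC
      · rcases haCS with h | h
        · exact h
        · exact absurd hadj (hS (Finset.mem_coe.2 hvS) (Finset.mem_coe.2 h)
            (fun hv' => hav hv'.symm))
  · ext a
    simp only [Finset.mem_insert, Finset.mem_filter, Finset.mem_erase, Finset.mem_union]
    constructor
    · intro ha
      by_cases hav : a = v
      · exact Or.inl hav
      · exact Or.inr ⟨⟨hav, Or.inr ha⟩, hS (Finset.mem_coe.2 hvS) (Finset.mem_coe.2 ha)
          (fun h => hav h.symm)⟩
    · rintro (rfl | ⟨⟨hav, haCS⟩, hnadj⟩)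
      · exact hvS
      · rcases haCS with h | h
        · exact absurd (hC (Finset.mem_coe.2 hvC) (Finset.mem_coe.2 h)
            (fun hv' => hav hv'.symm)) hnadj
        · exact h

open scoped Classical in
lemma inter_pairs_le [Fintype V] [Nonempty V] :
    (((Finset.univ.filter fun C : Finset V => G.IsClique (C : Set V)) ×ˢ
      (Finset.univ.filter fun S : Finset V =>
        (S : Set V).Pairwise fun x y => ¬ G.Adj x y)).filter
      fun p => (p.1 ∩ p.2).Nonempty).card ≤
      Fintype.card V * 2 ^ (Fintype.card V - 1) := by
  classical
  set g : Finset V × Finset V → Σ _ : V, Finset V := fun p =>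
    if h : (p.1 ∩ p.2).Nonempty then ⟨h.choose, (p.1 ∪ p.2).erase h.choose⟩
    else ⟨Classical.arbitrary V, ∅⟩ with hg
  have hT : (Finset.univ.sigma fun v : V => (Finset.univ.erase v).powerset).card =
      Fintype.card V * 2 ^ (Fintype.card V - 1) := by
    rw [Finset.card_sigma]
    rw [Finset.sum_congr rfl (fun v _ => ?_), Finset.sum_const, Finset.card_univ, smul_eq_mul]
    rw [Finset.card_powerset, Finset.card_erase_of_mem (Finset.mem_univ v), Finset.card_univ]
  rw [← hT]
  apply Finset.card_le_card_of_injOn g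
  · intro p hp
    have hpn : (p.1 ∩ p.2).Nonempty := (Finset.mem_filter.1 hp).2
    rw [hg]
    dsimp only
    rw [dif_pos hpn]
    rw [Finset.mem_coe, Finset.mem_sigma]
    refine ⟨Finset.mem_univ _, Finset.mem_powerset.2 ?_⟩
    exact Finset.erase_subset_erase _ (Finset.subset_univ _)
  · intro p hp q hq hpq
    have hpn : (p.1 ∩ p.2).Nonempty := (Finset.mem_filter.1 hp).2
    have hqn : (q.1 ∩ q.2).Nonempty := (Finset.mem_filter.1 hq).2
    have hpm := (Finset.mem_filter.1 hp).1
    have hqm := (Finset.mem_filter.1 hq).1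
    rw [Finset.mem_product, Finset.mem_filter, Finset.mem_filter] at hpm hqm
    rw [hg] at hpq
    dsimp only at hpq
    rw [dif_pos hpn, dif_pos hqn] at hpq
    obtain ⟨hv, hW⟩ := Sigma.ext_iff.1 hpq
    have hv' : Exists.choose hpn = Exists.choose hqn := hv
    have hW' : (p.1 ∪ p.2).erase hpn.choose = (q.1 ∪ q.2).erase hqn.choose := by
      exact_mod_cast heq_iff_eq.1 hW
    obtain ⟨hp1, hp2⟩ := pair_recover G hpm.1.2 hpm.2.2 hpn.choose_spec
    obtain ⟨hq1, hq2⟩ := pair_recover G hqm.1.2 hqm.2.2 hqn.choose_spec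
    have e1 : p.1 = q.1 := by rw [hp1, hq1, hW', hv']
    have e2 : p.2 = q.2 := by rw [hp2, hq2, hW', hv']
    exact Prod.ext e1 e2

open scoped Classical in
lemma disj_pairs_le [Fintype V] [Nonempty V] :
    (((Finset.univ.filter fun C : Finset V => G.IsClique (C : Set V)) ×ˢ
      (Finset.univ.filter fun S : Finset V =>
        (S : Set V).Pairwise fun x y => ¬ G.Adj x y)).filter
      fun p => ¬ (p.1 ∩ p.2).Nonempty).card ≤
      2 ^ Fintype.card V + Fintype.card V * 2 ^ (Fintype.card V - 1) := by
  classical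
  have step : (((Finset.univ.filter fun C : Finset V => G.IsClique (C : Set V)) ×ˢ
      (Finset.univ.filter fun S : Finset V =>
        (S : Set V).Pairwise fun x y => ¬ G.Adj x y)).filter
      fun p => ¬ (p.1 ∩ p.2).Nonempty).card ≤
      ((Finset.univ : Finset V).powerset.sigma fun U =>
        U.powerset.filter fun C : Finset V => G.IsClique (C : Set V) ∧
          (((U \ C : Finset V)) : Set V).Pairwise fun x y => ¬ G.Adj x y).card := by
    apply Finset.card_le_card_of_injOn (fun p => ⟨p.1 ∪ p.2, p.1⟩)
    · intro p hp
      have hpd : ¬ (p.1 ∩ p.2).Nonempty := (Finset.mem_filter.1 hp).2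
      have hdisj : Disjoint p.1 p.2 := by
        rw [Finset.disjoint_iff_inter_eq_empty]
        exact Finset.not_nonempty_iff_eq_empty.1 hpd
      have hpm := (Finset.mem_filter.1 hp).1
      rw [Finset.mem_product, Finset.mem_filter, Finset.mem_filter] at hpm
      rw [Finset.mem_coe, Finset.mem_sigma]
      refine ⟨Finset.mem_powerset.2 (Finset.subset_univ _), ?_⟩
      rw [Finset.mem_filter, Finset.mem_powerset]
      refine ⟨Finset.subset_union_left, hpm.1.2, ?_⟩
      have : (p.1 ∪ p.2) \ p.1 = p.2 := by
        rw [Finset.union_sdiff_left, Finset.sdiff_eq_self_iff_disjoint]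
        exact hdisj.symm
      rw [this]
      exact hpm.2.2
    · intro p hp q hq hpq
      obtain ⟨hU, hC⟩ := Sigma.ext_iff.1 hpq
      have hC' : p.1 = q.1 := by exact_mod_cast heq_iff_eq.1 hC
      have hrec : ∀ r : Finset V × Finset V,
          r ∈ (((Finset.univ.filter fun C : Finset V => G.IsClique (C : Set V)) ×ˢ
            (Finset.univ.filter fun S : Finset V =>
              (S : Set V).Pairwise fun x y => ¬ G.Adj x y)).filter
            fun p => ¬ (p.1 ∩ p.2).Nonempty) → r.2 = (r.1 ∪ r.2) \ r.1 := by
        intro r hr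
        have hrd : ¬ (r.1 ∩ r.2).Nonempty := (Finset.mem_filter.1 hr).2
        have hdisj : Disjoint r.1 r.2 := by
          rw [Finset.disjoint_iff_inter_eq_empty]
          exact Finset.not_nonempty_iff_eq_empty.1 hrd
        rw [Finset.union_sdiff_left, eq_comm, Finset.sdiff_eq_self_iff_disjoint]
        exact hdisj.symm
      have hU' : p.1 ∪ p.2 = q.1 ∪ q.2 := hU
      have e2 : p.2 = q.2 := by
        rw [hrec p hp, hrec q hq, hU', hC']
      exact Prod.ext hC' e2
  refine step.trans ?_
  rw [Finset.card_sigma]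
  calc ∑ U ∈ (Finset.univ : Finset V).powerset,
        (U.powerset.filter fun C : Finset V => G.IsClique (C : Set V) ∧
          (((U \ C : Finset V)) : Set V).Pairwise fun x y => ¬ G.Adj x y).card
      ≤ ∑ U ∈ (Finset.univ : Finset V).powerset, (U.card + 1) := by
        apply Finset.sum_le_sum
        intro U _
        exact splits_le G U
    _ = Fintype.card V * 2 ^ (Fintype.card V - 1) + 2 ^ Fintype.card V := by
        rw [Finset.sum_add_distrib, Finset.sum_const, Finset.card_powerset, Finset.card_univ,
          smul_eq_mul, mul_one, sum_card_powerset, Finset.card_univ]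
    _ = 2 ^ Fintype.card V + Fintype.card V * 2 ^ (Fintype.card V - 1) := by ring

end graph

/-- For a graph `G` on `d ≥ 1` vertices, with `𝒞'` the family of possibly empty cliques and
`𝒮'` the family of possibly empty stable sets, `(|𝒞'| + d - 1) * |𝒮'| ≤ d * 2 ^ (d + 1)`. -/
theorem clique_stable_bound {V : Type*} [Fintype V] (G : SimpleGraph V)
    (hd : 1 ≤ Fintype.card V) :
    ({C : Finset V | G.IsClique (C : Set V)}.ncard + Fintype.card V - 1) *
      {S : Finset V | (S : Set V).Pairwise fun x y => ¬ G.Adj x y}.ncard ≤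
      Fintype.card V * 2 ^ (Fintype.card V + 1) := by
  classical
  have hne : Nonempty V := Fintype.card_pos_iff.1 hd
  set 𝒞 := Finset.univ.filter fun C : Finset V => G.IsClique (C : Set V) with h𝒞
  set 𝒮 := Finset.univ.filter fun S : Finset V =>
    (S : Set V).Pairwise fun x y => ¬ G.Adj x y with h𝒮
  have hc : {C : Finset V | G.IsClique (C : Set V)}.ncard = 𝒞.card := by
    rw [← Set.ncard_coe_finset]
    congr 1
    ext C
    simp [h𝒞]
  have hs : {S : Finset V | (S : Set V).Pairwise fun x y => ¬ G.Adj x y}.ncard = 𝒮.card := by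
    rw [← Set.ncard_coe_finset]
    congr 1
    ext S
    simp [h𝒮]
  rw [hc, hs]
  obtain ⟨m, hm⟩ : ∃ m, Fintype.card V = m + 1 := ⟨Fintype.card V - 1, by omega⟩
  -- product bound
  have hprod : 𝒞.card * 𝒮.card ≤ (m + 2) * 2 ^ (m + 1) := by
    rw [← Finset.card_product]
    rw [← Finset.card_filter_add_card_filter_not
      (p := fun p : Finset V × Finset V => (p.1 ∩ p.2).Nonempty) (s := 𝒞 ×ˢ 𝒮)]
    have h1 := inter_pairs_le G
    have h2 := disj_pairs_le G
    rw [hm] at h1 h2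
    simp only [Nat.add_sub_cancel] at h1 h2
    have : (m + 1) * 2 ^ m + (2 ^ (m + 1) + (m + 1) * 2 ^ m) = (m + 2) * 2 ^ (m + 1) := by
      have : (2 : ℕ) ^ (m + 1) = 2 ^ m * 2 := pow_succ 2 m
      rw [this]
      ring
    rw [← this]
    exact Nat.add_le_add h1 h2
  have hsbound : 𝒮.card ≤ 2 ^ (m + 1) := by
    calc 𝒮.card ≤ (Finset.univ : Finset (Finset V)).card := Finset.card_le_card
          (Finset.subset_univ _)
      _ = 2 ^ (m + 1) := by rw [Finset.card_univ, Fintype.card_finset, hm]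
  rw [hm]
  have harith : 𝒞.card + (m + 1) - 1 = 𝒞.card + m := by omega
  rw [harith, add_mul]
  calc 𝒞.card * 𝒮.card + m * 𝒮.card ≤ (m + 2) * 2 ^ (m + 1) + m * 2 ^ (m + 1) :=
        Nat.add_le_add hprod (Nat.mul_le_mul_left m hsbound)
    _ = (m + 1) * 2 ^ (m + 1 + 1) := by
        have : (2 : ℕ) ^ (m + 1 + 1) = 2 ^ (m + 1) * 2 := pow_succ 2 (m + 1)
        rw [this]
        ring
end

section
/- Let P be a finite partially ordered set with d elements, let A be the family of all (possibly empty) antichains of P and C be the family of all (possibly empty) chains of P. Then |A| · |C| ≤ (d + 1)·2^d. -/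
open Finset
open scoped symmDiff

section Aux

variable {P : Type*} [PartialOrder P] [DecidableEq P]

/-- Elements lying in both a chain and an antichain are unique. -/
private lemma eq_of_mem_chain_antichain {C A : Finset P}
    (hC : IsChain (· ≤ ·) (C : Set P)) (hA : IsAntichain (· ≤ ·) (A : Set P))
    {x y : P} (hxC : x ∈ C) (hxA : x ∈ A) (hyC : y ∈ C) (hyA : y ∈ A) : x = y := by
  by_contra hne
  rcases hC (Finset.mem_coe.2 hxC) (Finset.mem_coe.2 hyC) hne with h | h
  · exact hA (Finset.mem_coe.2 hxA) (Finset.mem_coe.2 hyA) hne h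
  · exact hA (Finset.mem_coe.2 hyA) (Finset.mem_coe.2 hxA) (Ne.symm hne) h

open scoped Classical in
/-- Chains `C₀ ⊆ S` whose complement in `S` is an antichain. -/
noncomputable def goodT (S : Finset P) : Finset (Finset P) :=
  S.powerset.filter (fun C₀ => IsChain (· ≤ ·) (C₀ : Set P) ∧
    IsAntichain (· ≤ ·) ((S \ C₀ : Finset P) : Set P))

lemma mem_goodT {S C₀ : Finset P} :
    C₀ ∈ goodT S ↔ C₀ ⊆ S ∧ IsChain (· ≤ ·) (C₀ : Set P) ∧
      IsAntichain (· ≤ ·) ((S \ C₀ : Finset P) : Set P) := by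
  classical
  simp [goodT, Finset.mem_filter, Finset.mem_powerset, and_assoc]

/-- A good chain of maximal cardinality (junk value `∅` if none exists). -/
noncomputable def Cstar (S : Finset P) : Finset P :=
  if h : (goodT S).Nonempty then ((goodT S).exists_max_image Finset.card h).choose else ∅

lemma Cstar_mem {S : Finset P} (h : (goodT S).Nonempty) : Cstar S ∈ goodT S := by
  rw [Cstar, dif_pos h]
  exact ((goodT S).exists_max_image Finset.card h).choose_spec.1

lemma Cstar_max {S : Finset P} (h : (goodT S).Nonempty) {C : Finset P} (hC : C ∈ goodT S) :
    C.card ≤ (Cstar S).card := by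
  rw [Cstar, dif_pos h]
  exact ((goodT S).exists_max_image Finset.card h).choose_spec.2 C hC

lemma Cstar_subset {S : Finset P} : Cstar S ⊆ S := by
  by_cases h : (goodT S).Nonempty
  · exact (mem_goodT.1 (Cstar_mem h)).1
  · rw [Cstar, dif_neg h]; exact Finset.empty_subset _

/-- The second component of the injection, in the disjoint case. -/
noncomputable def phiInv (S C : Finset P) : Option P :=
  if C = Cstar S then none
  else if hb : (C \ Cstar S).Nonempty then some hb.choose
  else if ha : (Cstar S \ C).Nonempty then some ha.choose
  else none

/-- The second component of the injection. -/
noncomputable def psiInv (A C : Finset P) : Option P :=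
  if h : (A ∩ C).Nonempty then some h.choose else phiInv (A ∆ C) C

lemma phiInv_mem {S C : Finset P} {v : P} (h : phiInv S C = some v) :
    v ∈ C ∨ v ∈ Cstar S := by
  rw [phiInv] at h
  split_ifs at h with h1 h2 h3
  · exact Or.inl ((Finset.mem_sdiff.1 ((Option.some_inj.1 h) ▸ h2.choose_spec)).1)
  · exact Or.inr ((Finset.mem_sdiff.1 ((Option.some_inj.1 h) ▸ h3.choose_spec)).1)

/-- Any two good chains differ by at most one element in each direction. -/
private lemma sdiff_subsingleton {S C C' : Finset P} (h : C ∈ goodT S) (h' : C' ∈ goodT S)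
    {x y : P} (hx : x ∈ C \ C') (hy : y ∈ C \ C') : x = y := by
  obtain ⟨hsub, hch, -⟩ := mem_goodT.1 h
  obtain ⟨-, -, hac⟩ := mem_goodT.1 h'
  rcases Finset.mem_sdiff.1 hx with ⟨hx1, hx2⟩
  rcases Finset.mem_sdiff.1 hy with ⟨hy1, hy2⟩
  exact eq_of_mem_chain_antichain hch hac hx1 (Finset.mem_sdiff.2 ⟨hsub hx1, hx2⟩)
    hy1 (Finset.mem_sdiff.2 ⟨hsub hy1, hy2⟩)

/-- Key injectivity in the disjoint (partition) case. -/
lemma phiInv_inj {P : Type*} [PartialOrder P] [DecidableEq P] {S C₁ C₂ : Finset P}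
    (h₁ : C₁ ∈ goodT S) (h₂ : C₂ ∈ goodT S)
    (hφ : phiInv S C₁ = phiInv S C₂) : C₁ = C₂ := by
  have hne : (goodT S).Nonempty := ⟨C₁, h₁⟩
  have hstar := Cstar_mem hne
  obtain ⟨hssub, hsch, hsac⟩ := mem_goodT.1 hstar
  obtain ⟨hsub₁, hch₁, hac₁⟩ := mem_goodT.1 h₁
  obtain ⟨hsub₂, hch₂, hac₂⟩ := mem_goodT.1 h₂
  have sdiffempty : ∀ C : Finset P, ¬(C \ Cstar S).Nonempty → ¬(Cstar S \ C).Nonempty →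
      C = Cstar S := by
    intro C hb ha
    exact Finset.Subset.antisymm
      (Finset.sdiff_eq_empty_iff_subset.1 (Finset.not_nonempty_iff_eq_empty.1 hb))
      (Finset.sdiff_eq_empty_iff_subset.1 (Finset.not_nonempty_iff_eq_empty.1 ha))
  rw [phiInv, phiInv] at hφ
  by_cases e₁ : C₁ = Cstar S <;> by_cases e₂ : C₂ = Cstar S
  · exact e₁.trans e₂.symm
  · exfalso
    rw [if_pos e₁, if_neg e₂] at hφ
    by_cases hb₂ : (C₂ \ Cstar S).Nonempty
    · rw [dif_pos hb₂] at hφ; exact nomatch hφ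
    · have ha₂ : (Cstar S \ C₂).Nonempty := by
        by_contra ha₂; exact e₂ (sdiffempty C₂ hb₂ ha₂)
      rw [dif_neg hb₂, dif_pos ha₂] at hφ; exact nomatch hφ
  · exfalso
    rw [if_neg e₁, if_pos e₂] at hφ
    by_cases hb₁ : (C₁ \ Cstar S).Nonempty
    · rw [dif_pos hb₁] at hφ; exact nomatch hφ
    · have ha₁ : (Cstar S \ C₁).Nonempty := by
        by_contra ha₁; exact e₁ (sdiffempty C₁ hb₁ ha₁)
      rw [dif_neg hb₁, dif_pos ha₁] at hφ; exact nomatch hφ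
  · rw [if_neg e₁, if_neg e₂] at hφ
    by_cases hb₁ : (C₁ \ Cstar S).Nonempty <;> by_cases hb₂ : (C₂ \ Cstar S).Nonempty
    · -- both have an element outside Cstar: the "b" case
      rw [dif_pos hb₁, dif_pos hb₂] at hφ
      have hbv := Option.some_inj.1 hφ
      have hbC₁ : hb₁.choose ∈ C₁ \ Cstar S := hb₁.choose_spec
      have hbC₂ : hb₁.choose ∈ C₂ \ Cstar S := by rw [hbv]; exact hb₂.choose_spec
      set b := hb₁.choose with hbdef
      rcases Finset.mem_sdiff.1 hbC₁ with ⟨hb1, hbs⟩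
      rcases Finset.mem_sdiff.1 hbC₂ with ⟨hb2, -⟩
      have hX : ∀ C : Finset P, C ∈ goodT S → b ∈ C → (Cstar S \ C).Nonempty := by
        intro C hC hbC
        by_contra hemp
        have hsub : Cstar S ⊆ C :=
          Finset.sdiff_eq_empty_iff_subset.1 (Finset.not_nonempty_iff_eq_empty.1
            (by simpa using hemp))
        have : (Cstar S).card < C.card :=
          Finset.card_lt_card ⟨hsub, fun hCs => hbs (hCs hbC)⟩
        exact absurd (Cstar_max hne hC) (not_le.2 this)
      obtain ⟨a₁, ha₁⟩ := hX C₁ h₁ hb1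
      obtain ⟨a₂, ha₂⟩ := hX C₂ h₂ hb2
      rcases Finset.mem_sdiff.1 ha₁ with ⟨ha₁s, ha₁c⟩
      rcases Finset.mem_sdiff.1 ha₂ with ⟨ha₂s, ha₂c⟩
      by_cases haa : a₁ = a₂
      · -- C₁ = C₂ = (Cstar \ {a₁}) ∪ {b}
        have half : ∀ C C' : Finset P, C ∈ goodT S → C' ∈ goodT S →
            b ∈ C → b ∈ C' → a₁ ∈ Cstar S \ C → a₁ ∈ Cstar S \ C' →
            ∀ x, x ∈ C → x ∈ C' := by
          intro C C' hC hC' hbC hbC' haC haC' x hx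
          rcases eq_or_ne x b with rfl | hxb
          · exact hbC'
          · have hxs : x ∈ Cstar S := by
              by_contra hxs
              exact hxb (sdiff_subsingleton hC hstar (Finset.mem_sdiff.2 ⟨hx, hxs⟩)
                (Finset.mem_sdiff.2 ⟨hbC, hbs⟩))
            by_contra hxC'
            have : x = a₁ := sdiff_subsingleton hstar hC'
              (Finset.mem_sdiff.2 ⟨hxs, hxC'⟩) haC'
            exact (Finset.mem_sdiff.1 haC).2 (this ▸ hx)
        have ha₂' : a₁ ∈ Cstar S \ C₂ := by rw [haa]; exact ha₂
        exact Finset.ext fun x =>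
          ⟨half C₁ C₂ h₁ h₂ hb1 hb2 ha₁ ha₂' x, half C₂ C₁ h₂ h₁ hb2 hb1 ha₂' ha₁ x⟩
      · -- contradiction: insert b (Cstar S) is a strictly bigger good chain
        exfalso
        have ha₁C₂ : a₁ ∈ C₂ := by
          by_contra h
          exact haa (sdiff_subsingleton hstar h₂ (Finset.mem_sdiff.2 ⟨ha₁s, h⟩) ha₂)
        have hcomp : ∀ c ∈ Cstar S, c ≤ b ∨ b ≤ c := by
          intro c hc
          by_cases hcC₁ : c ∈ C₁
          · exact hch₁ (Finset.mem_coe.2 hcC₁) (Finset.mem_coe.2 hb1)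
              (fun h => hbs (h ▸ hc))
          · have : c = a₁ := sdiff_subsingleton hstar h₁ (Finset.mem_sdiff.2 ⟨hc, hcC₁⟩) ha₁
            subst this
            exact hch₂ (Finset.mem_coe.2 ha₁C₂) (Finset.mem_coe.2 hb2)
              (fun h => hbs (h ▸ ha₁s))
        have hchain : IsChain (· ≤ ·) ((insert b (Cstar S) : Finset P) : Set P) := by
          rw [Finset.coe_insert]
          exact hsch.insert (fun y hy _ => (hcomp y (Finset.mem_coe.1 hy)).symm)
        have hmem : insert b (Cstar S) ∈ goodT S := by
          rw [mem_goodT]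
          refine ⟨Finset.insert_subset (hsub₁ hb1) Cstar_subset, hchain, ?_⟩
          refine hsac.subset ?_
          rw [Finset.coe_subset]
          exact Finset.sdiff_subset_sdiff (Finset.Subset.refl _) (Finset.subset_insert _ _)
        have := Cstar_max hne hmem
        rw [Finset.card_insert_of_notMem hbs] at this
        omega
    · -- b-case vs a-case
      exfalso
      have ha₂ : (Cstar S \ C₂).Nonempty := by
        by_contra ha₂; exact e₂ (sdiffempty C₂ hb₂ ha₂)
      rw [dif_pos hb₁, dif_neg hb₂, dif_pos ha₂] at hφ
      have hbv := Option.some_inj.1 hφ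
      exact (Finset.mem_sdiff.1 hb₁.choose_spec).2
        (by rw [hbv]; exact (Finset.mem_sdiff.1 ha₂.choose_spec).1)
    · exfalso
      have ha₁ : (Cstar S \ C₁).Nonempty := by
        by_contra ha₁; exact e₁ (sdiffempty C₁ hb₁ ha₁)
      rw [dif_neg hb₁, dif_pos ha₁, dif_pos hb₂] at hφ
      have hbv := Option.some_inj.1 hφ
      exact (Finset.mem_sdiff.1 hb₂.choose_spec).2
        (by rw [← hbv]; exact (Finset.mem_sdiff.1 ha₁.choose_spec).1)
    · -- both a-case
      have ha₁ : (Cstar S \ C₁).Nonempty := by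
        by_contra ha₁; exact e₁ (sdiffempty C₁ hb₁ ha₁)
      have ha₂ : (Cstar S \ C₂).Nonempty := by
        by_contra ha₂'; exact e₂ (sdiffempty C₂ hb₂ ha₂')
      rw [dif_neg hb₁, dif_pos ha₁, dif_neg hb₂, dif_pos ha₂] at hφ
      have hbv := Option.some_inj.1 hφ
      have haC₁ : ha₁.choose ∈ Cstar S \ C₁ := ha₁.choose_spec
      have haC₂ : ha₁.choose ∈ Cstar S \ C₂ := by rw [hbv]; exact ha₂.choose_spec
      set a := ha₁.choose with hadef
      have hsubC₁ : C₁ ⊆ Cstar S :=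
        Finset.sdiff_eq_empty_iff_subset.1 (Finset.not_nonempty_iff_eq_empty.1 hb₁)
      have hsubC₂ : C₂ ⊆ Cstar S :=
        Finset.sdiff_eq_empty_iff_subset.1 (Finset.not_nonempty_iff_eq_empty.1 hb₂)
      have half : ∀ C : Finset P, C ∈ goodT S → C ⊆ Cstar S → a ∈ Cstar S \ C →
          C = (Cstar S).erase a := by
        intro C hC hsub haC
        apply Finset.ext
        intro x
        rw [Finset.mem_erase]
        constructor
        · intro hx
          exact ⟨fun h => (Finset.mem_sdiff.1 haC).2 (h ▸ hx), hsub hx⟩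
        · rintro ⟨hxa, hxs⟩
          by_contra hxC
          exact hxa (sdiff_subsingleton hstar hC (Finset.mem_sdiff.2 ⟨hxs, hxC⟩) haC)
      rw [half C₁ h₁ hsubC₁ haC₁, half C₂ h₂ hsubC₂ haC₂]

/-- In the case where the antichain and chain share a (unique) common element `z`,
the chain is determined by the symmetric difference and `z`. -/
lemma zcase_subset {P : Type*} [PartialOrder P] [DecidableEq P] {A₁ C₁ A₂ C₂ : Finset P}
    (hA₁ : IsAntichain (· ≤ ·) (A₁ : Set P)) (hC₁ : IsChain (· ≤ ·) (C₁ : Set P))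
    (hA₂ : IsAntichain (· ≤ ·) (A₂ : Set P))
    (hS : A₁ ∆ C₁ = A₂ ∆ C₂) {z : P} (hz₁ : z ∈ A₁ ∩ C₁) (hz₂ : z ∈ A₂ ∩ C₂) :
    C₁ ⊆ C₂ := by
  obtain ⟨hzA₁, hzC₁⟩ := Finset.mem_inter.1 hz₁
  obtain ⟨hzA₂, hzC₂⟩ := Finset.mem_inter.1 hz₂
  intro x hx
  rcases eq_or_ne x z with rfl | hne
  · exact hzC₂
  · have hxA₁ : x ∉ A₁ := fun h => hne (eq_of_mem_chain_antichain hC₁ hA₁ hx h hzC₁ hzA₁)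
    have hxS : x ∈ A₂ ∆ C₂ := hS ▸ Finset.mem_symmDiff.2 (Or.inr ⟨hx, hxA₁⟩)
    have hcomp : x ≤ z ∨ z ≤ x := hC₁ (Finset.mem_coe.2 hx) (Finset.mem_coe.2 hzC₁) hne
    rcases Finset.mem_symmDiff.1 hxS with ⟨hxA₂, hxC₂⟩ | ⟨hxC₂, -⟩
    · exfalso
      rcases hcomp with h | h
      · exact hA₂ (Finset.mem_coe.2 hxA₂) (Finset.mem_coe.2 hzA₂) hne h
      · exact hA₂ (Finset.mem_coe.2 hzA₂) (Finset.mem_coe.2 hxA₂) (Ne.symm hne) h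
    · exact hxC₂

/-- If an antichain and a chain are disjoint, the chain is a good chain of the
symmetric difference. -/
lemma mem_goodT_of_disjoint {P : Type*} [PartialOrder P] [DecidableEq P] {A C : Finset P}
    (hA : IsAntichain (· ≤ ·) (A : Set P)) (hC : IsChain (· ≤ ·) (C : Set P))
    (h : ¬(A ∩ C).Nonempty) : C ∈ goodT (A ∆ C) ∧ (A ∆ C) \ C = A := by
  have hd : ∀ x, x ∈ A → x ∉ C := by
    intro x hx hx'
    exact h ⟨x, Finset.mem_inter.2 ⟨hx, hx'⟩⟩
  have hsub : C ⊆ A ∆ C := by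
    intro x hx
    exact Finset.mem_symmDiff.2 (Or.inr ⟨hx, fun h' => hd x h' hx⟩)
  have hAeq : (A ∆ C) \ C = A := by
    apply Finset.ext
    intro x
    rw [Finset.mem_sdiff, Finset.mem_symmDiff]
    constructor
    · rintro ⟨⟨hxA, -⟩ | ⟨hxC, -⟩, hxC'⟩
      · exact hxA
      · exact absurd hxC hxC'
    · intro hx
      exact ⟨Or.inl ⟨hx, hd x hx⟩, hd x hx⟩
  exact ⟨mem_goodT.2 ⟨hsub, hC, by rw [hAeq]; exact hA⟩, hAeq⟩

/-- Injectivity of the pair `(A ∆ C, psiInv A C)`. -/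
lemma psi_key {P : Type*} [PartialOrder P] [DecidableEq P] {A₁ C₁ A₂ C₂ : Finset P}
    (hA₁ : IsAntichain (· ≤ ·) (A₁ : Set P)) (hC₁ : IsChain (· ≤ ·) (C₁ : Set P))
    (hA₂ : IsAntichain (· ≤ ·) (A₂ : Set P)) (hC₂ : IsChain (· ≤ ·) (C₂ : Set P))
    (hS : A₁ ∆ C₁ = A₂ ∆ C₂) (hψ : psiInv A₁ C₁ = psiInv A₂ C₂) :
    A₁ = A₂ ∧ C₁ = C₂ := by
  suffices hC : C₁ = C₂ by
    refine ⟨?_, hC⟩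
    rw [hC] at hS
    exact symmDiff_left_injective _ hS
  rw [psiInv, psiInv] at hψ
  by_cases h₁ : (A₁ ∩ C₁).Nonempty <;> by_cases h₂ : (A₂ ∩ C₂).Nonempty
  · -- both share a common element
    rw [dif_pos h₁, dif_pos h₂] at hψ
    have hbv := Option.some_inj.1 hψ
    have hz₁ : h₁.choose ∈ A₁ ∩ C₁ := h₁.choose_spec
    have hz₂ : h₁.choose ∈ A₂ ∩ C₂ := by rw [hbv]; exact h₂.choose_spec
    exact Finset.Subset.antisymm (zcase_subset hA₁ hC₁ hA₂ hS hz₁ hz₂)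
      (zcase_subset hA₂ hC₂ hA₁ hS.symm hz₂ hz₁)
  · exfalso
    rw [dif_pos h₁, dif_neg h₂] at hψ
    obtain ⟨hT₂, -⟩ := mem_goodT_of_disjoint hA₂ hC₂ h₂
    have hz : h₁.choose ∈ A₂ ∆ C₂ := by
      rcases phiInv_mem hψ.symm with h | h
      · exact (mem_goodT.1 hT₂).1 h
      · exact Cstar_subset h
    rw [← hS] at hz
    obtain ⟨hzA, hzC⟩ := Finset.mem_inter.1 h₁.choose_spec
    rcases Finset.mem_symmDiff.1 hz with ⟨-, h⟩ | ⟨-, h⟩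
    · exact h hzC
    · exact h hzA
  · exfalso
    rw [dif_neg h₁, dif_pos h₂] at hψ
    obtain ⟨hT₁, -⟩ := mem_goodT_of_disjoint hA₁ hC₁ h₁
    have hz : h₂.choose ∈ A₁ ∆ C₁ := by
      rcases phiInv_mem hψ with h | h
      · exact (mem_goodT.1 hT₁).1 h
      · exact Cstar_subset h
    rw [hS] at hz
    obtain ⟨hzA, hzC⟩ := Finset.mem_inter.1 h₂.choose_spec
    rcases Finset.mem_symmDiff.1 hz with ⟨-, h⟩ | ⟨-, h⟩
    · exact h hzC
    · exact h hzA
  · rw [dif_neg h₁, dif_neg h₂] at hψ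
    obtain ⟨hT₁, -⟩ := mem_goodT_of_disjoint hA₁ hC₁ h₁
    obtain ⟨hT₂, -⟩ := mem_goodT_of_disjoint hA₂ hC₂ h₂
    rw [hS] at hT₁ hψ
    exact phiInv_inj hT₁ hT₂ hψ

end Aux

/-- For a finite poset `P` with `d` elements, the number of (possibly empty) antichains times
the number of (possibly empty) chains is at most `(d + 1) * 2 ^ d`. -/
theorem antichain_chain_tradeoff {P : Type*} [PartialOrder P] [Fintype P] :
    {A : Finset P | IsAntichain (· ≤ ·) (A : Set P)}.ncard *
      {C : Finset P | IsChain (· ≤ ·) (C : Set P)}.ncard ≤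
      (Fintype.card P + 1) * 2 ^ Fintype.card P := by
  classical
  have hcard : ∀ p : Finset P → Prop, {A : Finset P | p A}.ncard =
      (Finset.univ.filter p).card := by
    intro p
    rw [← Set.ncard_coe_finset]
    congr 1
    ext A
    simp
  rw [hcard, hcard, ← Finset.card_product]
  have hle : ((Finset.univ.filter fun A : Finset P => IsAntichain (· ≤ ·) (A : Set P)) ×ˢ
      (Finset.univ.filter fun C : Finset P => IsChain (· ≤ ·) (C : Set P))).card ≤
      (Finset.univ : Finset (Finset P × Option P)).card := by
    apply Finset.card_le_card_of_injOn (fun p => (p.1 ∆ p.2, psiInv p.1 p.2))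
      (fun _ _ => Finset.mem_univ _)
    intro p hp q hq h
    obtain ⟨hp1, hp2⟩ := Finset.mem_product.1 hp
    obtain ⟨hq1, hq2⟩ := Finset.mem_product.1 hq
    have hA₁ := (Finset.mem_filter.1 hp1).2
    have hC₁ := (Finset.mem_filter.1 hp2).2
    have hA₂ := (Finset.mem_filter.1 hq1).2
    have hC₂ := (Finset.mem_filter.1 hq2).2
    have hS := congrArg Prod.fst h
    have hψ := congrArg Prod.snd h
    simp only at hS hψ
    obtain ⟨hA, hC⟩ := psi_key hA₁ hC₁ hA₂ hC₂ hS hψ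
    exact Prod.ext hA hC
  refine hle.trans ?_
  rw [Finset.card_univ, Fintype.card_prod, Fintype.card_finset, Fintype.card_option, mul_comm]
end

section
/- Fix integers 0 < l < d. The number of vectors x ∈ {0,1}^d satisfying the min up/down constraint with parameter l equals 2·s, where s is the number of (possibly empty) stable sets of the graph G on vertex set {1, …, d−1} in which distinct vertices i and j are adjacent whenever |i − j| ≤ l − 1. -/
/-- `i` is a (0-based) switch index of `x ∈ {0,1}^d`: `x i ≠ x (i+1)`.
(It corresponds to the 1-based switch index `i + 1`; differences of indices are preserved.) -/
def IsSwitchIndex {d : ℕ} (x : Fin d → Bool) (i : ℕ) : Prop :=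
  ∃ h : i + 1 < d, x ⟨i, Nat.lt_of_succ_lt h⟩ ≠ x ⟨i + 1, h⟩

/-- `x` satisfies the min up/down constraint with parameter `l`:
any two switch indices `i < j` satisfy `j - i ≥ l`. -/
def SatisfiesMinUpDown {d : ℕ} (l : ℕ) (x : Fin d → Bool) : Prop :=
  ∀ i j : ℕ, IsSwitchIndex x i → IsSwitchIndex x j → i < j → l ≤ j - i

/-- The vector whose first bit is `b` and whose 1-based switch set is `S`. -/
def mkVec (d : ℕ) (b : Bool) (S : Finset ℕ) : Fin d → Bool :=
  fun k => xor b (decide (Odd ((S.filter (· ≤ (k : ℕ))).card)))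

lemma filter_card_succ (S : Finset ℕ) (k : ℕ) :
    (S.filter (· ≤ k + 1)).card
      = (S.filter (· ≤ k)).card + (if k + 1 ∈ S then 1 else 0) := by
  have h1 : S.filter (· ≤ k + 1) = S.filter (· ≤ k) ∪ S.filter (· = k + 1) := by
    rw [← Finset.filter_or]
    apply Finset.filter_congr
    intro x _
    omega
  have hdisj : Disjoint (S.filter (· ≤ k)) (S.filter (· = k + 1)) := by
    rw [Finset.disjoint_left]
    intro a ha hb
    simp only [Finset.mem_filter] at ha hb
    omega
  rw [h1, Finset.card_union_of_disjoint hdisj, Finset.filter_eq']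
  by_cases hm : k + 1 ∈ S <;> simp [hm]

lemma mkVec_succ (d : ℕ) (b : Bool) (S : Finset ℕ) (k : ℕ) (h : k + 1 < d) :
    mkVec d b S ⟨k + 1, h⟩
      = xor (mkVec d b S ⟨k, Nat.lt_of_succ_lt h⟩) (decide (k + 1 ∈ S)) := by
  simp only [mkVec]
  rw [Bool.xor_assoc]
  congr 1
  rw [filter_card_succ]
  by_cases hm : k + 1 ∈ S <;>
    by_cases ho : Odd ((S.filter (· ≤ k)).card) <;>
      simp [hm, ho, Nat.odd_add_one]

lemma isSwitch_mkVec (d : ℕ) (b : Bool) (S : Finset ℕ) (i : ℕ) :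
    IsSwitchIndex (mkVec d b S) i ↔ i + 1 < d ∧ i + 1 ∈ S := by
  constructor
  · rintro ⟨h, hne⟩
    refine ⟨h, ?_⟩
    rw [mkVec_succ d b S i h] at hne
    by_contra hm
    simp [hm] at hne
  · rintro ⟨h, hm⟩
    refine ⟨h, ?_⟩
    rw [mkVec_succ d b S i h]
    simp [hm]

lemma mkVec_zero (d : ℕ) (hd : 0 < d) (b : Bool) (S : Finset ℕ)
    (hS : ∀ s ∈ S, 1 ≤ s) : mkVec d b S ⟨0, hd⟩ = b := by
  have : S.filter (· ≤ (0 : ℕ)) = ∅ := by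
    rw [Finset.filter_eq_empty_iff]
    intro s hs
    have := hS s hs
    omega
  have h2 : S.filter (fun x => x = 0) = ∅ := by
    rw [Finset.filter_eq_empty_iff]
    intro s hs
    have := hS s hs
    omega
  simp [mkVec, this, h2]

/-- The number of vectors in `{0,1}^d` satisfying the min up/down constraint with parameter
`l` (`0 < l < d`) equals twice the number of (possibly empty) stable sets of the graph on
vertex set `{1, …, d-1}` where distinct `i`, `j` are adjacent whenever `|i - j| ≤ l - 1`. -/
theorem minUpDown_card_eq_two_mul_stable_sets (d l : ℕ) (hl : 0 < l) (hld : l < d) :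
    {x : Fin d → Bool | SatisfiesMinUpDown l x}.ncard =
      2 * {S : Finset ℕ | S ⊆ Finset.Icc 1 (d - 1) ∧
            (S : Set ℕ).Pairwise fun a b => ¬ (((a : ℤ) - (b : ℤ)).natAbs ≤ l - 1)}.ncard := by
  classical
  have hd : 0 < d := lt_trans hl hld
  set T : Set (Finset ℕ) := {S : Finset ℕ | S ⊆ Finset.Icc 1 (d - 1) ∧
            (S : Set ℕ).Pairwise fun a b => ¬ (((a : ℤ) - (b : ℤ)).natAbs ≤ l - 1)} with hT
  -- the 1-based switch set of a vector
  set Sx : (Fin d → Bool) → Finset ℕ :=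
    fun x => (Finset.Icc 1 (d - 1)).filter (fun s => IsSwitchIndex x (s - 1)) with hSx
  have hSx_mem : ∀ x s, s ∈ Sx x ↔ (1 ≤ s ∧ s ≤ d - 1) ∧ IsSwitchIndex x (s - 1) := by
    intro x s
    simp [hSx, Finset.mem_filter, Finset.mem_Icc]
  -- reconstruction
  have hrec : ∀ x : Fin d → Bool, ∀ k, ∀ hk : k < d,
      x ⟨k, hk⟩ = mkVec d (x ⟨0, hd⟩) (Sx x) ⟨k, hk⟩ := by
    intro x k
    induction k with
    | zero =>
      intro hk
      rw [mkVec_zero d hd _ _ (fun s hs => ((hSx_mem x s).1 hs).1.1)]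
    | succ k ih =>
      intro hk
      rw [mkVec_succ d _ _ k hk, ← ih (Nat.lt_of_succ_lt hk)]
      have hmem : k + 1 ∈ Sx x ↔ IsSwitchIndex x k := by
        rw [hSx_mem]
        constructor
        · rintro ⟨-, h⟩; simpa using h
        · intro h; exact ⟨⟨by omega, by omega⟩, by simpa using h⟩
      by_cases hs : IsSwitchIndex x k
      · obtain ⟨h', hne⟩ := hs
        have : k + 1 ∈ Sx x := hmem.2 ⟨h', hne⟩
        simp only [this, decide_eq_true_eq, decide_true, Bool.xor_true]
        revert hne
        cases x ⟨k, Nat.lt_of_succ_lt hk⟩ <;> cases x ⟨k + 1, hk⟩ <;> simp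
      · have hnm : k + 1 ∉ Sx x := fun h => hs (hmem.1 h)
        have heq : x ⟨k, Nat.lt_of_succ_lt hk⟩ = x ⟨k + 1, hk⟩ := by
          by_contra hne
          exact hs ⟨hk, hne⟩
        simp [hnm, heq]
  -- the image description
  have himg : {x : Fin d → Bool | SatisfiesMinUpDown l x}
      = (fun p : Bool × Finset ℕ => mkVec d p.1 p.2) '' ((Set.univ : Set Bool) ×ˢ T) := by
    ext x
    constructor
    · intro hx
      refine ⟨(x ⟨0, hd⟩, Sx x), ⟨trivial, ?_, ?_⟩, ?_⟩
      · intro s hs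
        rw [Finset.mem_Icc]
        exact ((hSx_mem x s).1 hs).1
      · intro a ha b hb hab hle
        rw [Finset.mem_coe, hSx_mem] at ha hb
        obtain ⟨⟨ha1, -⟩, hsa⟩ := ha
        obtain ⟨⟨hb1, -⟩, hsb⟩ := hb
        rcases lt_or_gt_of_ne hab with h | h
        · have := hx (a - 1) (b - 1) hsa hsb (by omega)
          omega
        · have := hx (b - 1) (a - 1) hsb hsa (by omega)
          omega
      · funext k
        obtain ⟨k, hk⟩ := k
        exact (hrec x k hk).symm
    · rintro ⟨⟨b, S⟩, ⟨-, hsub, hpair⟩, rfl⟩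
      intro i j hi hj hij
      rw [isSwitch_mkVec] at hi hj
      have hi1 : i + 1 ∈ S := hi.2
      have hj1 : j + 1 ∈ S := hj.2
      have := hpair (Finset.mem_coe.2 hi1) (Finset.mem_coe.2 hj1) (by omega)
      omega
  rw [himg]
  -- injectivity
  have hinj : Set.InjOn (fun p : Bool × Finset ℕ => mkVec d p.1 p.2)
      ((Set.univ : Set Bool) ×ˢ T) := by
    rintro ⟨b, S⟩ ⟨-, hS, -⟩ ⟨b', S'⟩ ⟨-, hS', -⟩ heq
    simp only at heq
    have hball : ∀ s ∈ S, 1 ≤ s := fun s hs => (Finset.mem_Icc.1 (hS hs)).1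
    have hball' : ∀ s ∈ S', 1 ≤ s := fun s hs => (Finset.mem_Icc.1 (hS' hs)).1
    have hb : b = b' := by
      rw [← mkVec_zero d hd b S hball, ← mkVec_zero d hd b' S' hball', heq]
    have hSS : S = S' := by
      ext s
      by_cases hicc : s ∈ Finset.Icc 1 (d - 1)
      · rw [Finset.mem_Icc] at hicc
        have h1 : s - 1 + 1 = s := by omega
        constructor
        · intro hs
          have : IsSwitchIndex (mkVec d b S) (s - 1) :=
            (isSwitch_mkVec d b S (s - 1)).2 ⟨by omega, by rwa [h1]⟩
          rw [heq] at this
          have := (isSwitch_mkVec d b' S' (s - 1)).1 this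
          rw [h1] at this
          exact this.2
        · intro hs
          have : IsSwitchIndex (mkVec d b' S') (s - 1) :=
            (isSwitch_mkVec d b' S' (s - 1)).2 ⟨by omega, by rwa [h1]⟩
          rw [← heq] at this
          have := (isSwitch_mkVec d b S (s - 1)).1 this
          rw [h1] at this
          exact this.2
      · constructor
        · intro hs; exact absurd (hS hs) hicc
        · intro hs; exact absurd (hS' hs) hicc
    rw [hb, hSS]
  rw [Set.ncard_image_of_injOn hinj]
  -- cardinality of the product
  rw [← Nat.card_coe_set_eq, ← Nat.card_coe_set_eq,
    Nat.card_congr (Equiv.Set.prod _ _), Nat.card_prod,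
    Nat.card_congr (Equiv.Set.univ Bool)]
  simp [Nat.card_eq_fintype_card]
end
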